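/- arXiv:1512.04513 — 7 statements merged into one kernel-verified Lean document; each statement's English description precedes it below -/
import Mathlib

section
/- Let n ≥ 1 and let B = {b_1 < b_2 < ... < b_{n+1}} be an (n+1)-element subset of {1, 2, ..., 2n+1}. Then the (n+1)×(n+1) integer matrix whose entry in row i (for 0 ≤ i ≤ n) and column k (for 1 ≤ k ≤ n+1) is C(2n+1-i, 2n+2-b_k) - C(i, 2n+2-b_k) has nonzero determinant if and only if b_k ≤ 2k-1 for every k with 1 ≤ k ≤ n+1 (in particular b_1 = 1). -/
open Finset Matrix

namespace DehnSommervilleAux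

lemma lemF (M : ℕ) : ∀ (s c : ℕ), c < M →
    ∑ u ∈ Finset.range (M + 1),
      ((-1 : ℚ) ^ u * (M.choose u) * ((u + s).choose c)) = 0 := by
  induction M with
  | zero => exact fun s c hc => absurd hc (Nat.not_lt_zero c)
  | succ M ih =>
    intro s c hc
    cases c with
    | zero =>
      have h := Int.alternating_sum_range_choose (n := M + 1)
      rw [if_neg (Nat.succ_ne_zero M)] at h
      have h2 : ((∑ i ∈ range (M + 2), (-1 : ℤ) ^ i * ((M+1).choose i) : ℤ) : ℚ) = 0 := by
        rw [h]; norm_num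
      push_cast at h2
      simpa using h2
    | succ c =>
      have hA : ∀ t : ℕ,
          (∑ u ∈ range (M + 1), ((-1 : ℚ) ^ u * (M.choose u) * ((u + t).choose (c+1))))
          = (∑ u ∈ range (M + 1), ((-1 : ℚ) ^ u * (M.choose u) * ((u + t).choose (c+1)))) :=
        fun _ => rfl
      -- S = A - B
      set A := ∑ u ∈ range (M + 1), ((-1 : ℚ) ^ u * (M.choose u) * ((u + s).choose (c+1))) with hAdef
      set B := ∑ u ∈ range (M + 1), ((-1 : ℚ) ^ u * (M.choose u) * ((u + (s+1)).choose (c+1))) with hBdef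
      set A0 := ∑ u ∈ range (M + 1), ((-1 : ℚ) ^ u * (M.choose u) * ((u + s).choose c)) with hA0def
      have hS : ∑ u ∈ Finset.range (M + 2),
          ((-1 : ℚ) ^ u * ((M+1).choose u) * ((u + s).choose (c+1))) = A - B := by
        rw [Finset.sum_range_succ' _ (M+1)]
        rw [hAdef]
        rw [Finset.sum_range_succ' (fun u => ((-1 : ℚ) ^ u * (M.choose u) * ((u + s).choose (c+1)))) M]
        have e1 : ∀ u ∈ range (M+1),
            ((-1 : ℚ) ^ (u+1) * ((M+1).choose (u+1)) * (((u+1) + s).choose (c+1)))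
            = -(((-1 : ℚ) ^ u * (M.choose u) * ((u + (s+1)).choose (c+1))))
              - (((-1 : ℚ) ^ u * (M.choose (u+1)) * ((u + (s+1)).choose (c+1)))) := by
          intro u _
          have : (M+1).choose (u+1) = M.choose u + M.choose (u+1) := Nat.choose_succ_succ M u
          rw [this]
          have : (u+1) + s = u + (s+1) := by omega
          rw [this]
          push_cast
          ring
        rw [Finset.sum_congr rfl e1]
        have e2 : ∀ u ∈ range M,
            ((-1 : ℚ) ^ (u+1) * (M.choose (u+1)) * (((u+1) + s).choose (c+1)))
            = -(((-1 : ℚ) ^ u * (M.choose (u+1)) * ((u + (s+1)).choose (c+1)))) := by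
          intro u _
          have : (u+1) + s = u + (s+1) := by omega
          rw [this]; push_cast; ring
        rw [Finset.sum_congr rfl e2]
        have e3 : ∑ u ∈ range (M+1), (((-1 : ℚ) ^ u * (M.choose (u+1)) * ((u + (s+1)).choose (c+1))))
            = ∑ u ∈ range M, (((-1 : ℚ) ^ u * (M.choose (u+1)) * ((u + (s+1)).choose (c+1)))) := by
          rw [Finset.sum_range_succ, Nat.choose_succ_self]
          norm_num
        rw [Finset.sum_sub_distrib]
        simp only [Finset.sum_neg_distrib]
        rw [← e3, ← hBdef]
        norm_num
        ring
      have hB2 : B = A + A0 := by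
        rw [hBdef, hAdef, hA0def, ← Finset.sum_add_distrib]
        refine Finset.sum_congr rfl fun u _ => ?_
        have : u + (s+1) = (u + s) + 1 := by omega
        rw [this, Nat.choose_succ_succ (u+s) c]
        push_cast; ring
      have hA00 : A0 = 0 := ih s c (by omega)
      rw [hS, hB2, hA00]; ring

lemma lemW (n s c : ℕ) (hs : s ≤ n) (hc : c + 2*s < 2*n + 1) :
    ∑ i ∈ Finset.range (n+1),
      (if i < s then (0:ℚ) else (-1:ℚ)^i * ((2*n+1-2*s).choose (i - s)))
        * (((2*n+1-i).choose c : ℚ) - ((i).choose c : ℚ)) = 0 := by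
  set M := 2*n+1-2*s with hM
  set G : ℕ → ℚ := fun j => if j < s then 0 else (-1:ℚ)^j * (M.choose (j-s)) * (j.choose c) with hG
  have step1 : ∑ i ∈ Finset.range (n+1),
      (if i < s then (0:ℚ) else (-1:ℚ)^i * (M.choose (i - s))) * ((i).choose c : ℚ)
      = ∑ i ∈ Finset.range (n+1), G i := by
    refine Finset.sum_congr rfl fun i _ => ?_
    by_cases h : i < s <;> simp [hG, h] <;> ring
  have key : ∀ i ∈ Finset.range (n+1),
      (if i < s then (0:ℚ) else (-1:ℚ)^i * (M.choose (i - s))) * ((2*n+1-i).choose c : ℚ)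
      = -G (2*n+1-i) := by
    intro i hi
    rw [Finset.mem_range] at hi
    by_cases h : i < s
    · have h2 : ¬ (2*n+1-i < s) := by omega
      have h3 : M < 2*n+1-i-s := by omega
      rw [if_pos h, hG]
      simp only [if_neg h2]
      rw [Nat.choose_eq_zero_of_lt h3]
      norm_num
    · have h2 : ¬ (2*n+1-i < s) := by omega
      have hle : i - s ≤ M := by omega
      have h4 : 2*n+1-i-s = M - (i-s) := by omega
      rw [if_neg h, hG]
      simp only [if_neg h2]
      rw [h4, Nat.choose_symm hle]
      have hsign : (-1:ℚ)^(2*n+1-i) = -(-1:ℚ)^i := by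
        rcases Nat.even_or_odd i with he | ho
        · have : Odd (2*n+1-i) := by
            rcases he with ⟨t, ht⟩
            refine ⟨n - t, by omega⟩
          simp [this.neg_one_pow, he.neg_one_pow]
        · have : Even (2*n+1-i) := by
            rcases ho with ⟨t, ht⟩
            refine ⟨n - t, by omega⟩
          simp [this.neg_one_pow, ho.neg_one_pow]
      rw [hsign]
      ring
  have step2 : ∑ i ∈ Finset.range (n+1),
      (if i < s then (0:ℚ) else (-1:ℚ)^i * (M.choose (i - s))) * ((2*n+1-i).choose c : ℚ)
      = -∑ j ∈ Finset.Ico (n+1) (2*n+2), G j := by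
    rw [Finset.sum_congr rfl key]
    rw [Finset.sum_neg_distrib]
    congr 1
    rw [Finset.sum_Ico_eq_sum_range]
    have h2 : 2*n+2-(n+1) = n+1 := by omega
    rw [h2]
    rw [← Finset.sum_range_reflect (fun j => G (n+1+j)) (n+1)]
    refine Finset.sum_congr rfl fun i hi => ?_
    rw [Finset.mem_range] at hi
    congr 1
    omega
  have split : ∑ i ∈ Finset.range (n+1),
      (if i < s then (0:ℚ) else (-1:ℚ)^i * (M.choose (i - s)))
        * (((2*n+1-i).choose c : ℚ) - ((i).choose c : ℚ))
      = -∑ j ∈ Finset.range (2*n+2), G j := by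
    have := Finset.sum_range_add_sum_Ico G (show n+1 ≤ 2*n+2 by omega)
    rw [← this]
    simp only [mul_sub]
    rw [Finset.sum_sub_distrib, step1, step2]
    ring
  rw [split]
  -- now show ∑_{range(2n+2)} G = 0
  have drop : ∑ j ∈ Finset.range (2*n+2), G j = ∑ j ∈ Finset.Ico s (2*n+2), G j := by
    rw [← Finset.sum_range_add_sum_Ico G (show s ≤ 2*n+2 by omega)]
    have : ∑ j ∈ Finset.range s, G j = 0 := by
      refine Finset.sum_eq_zero fun j hj => ?_
      rw [Finset.mem_range] at hj
      simp [hG, hj]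
    rw [this, zero_add]
  have shift : ∑ j ∈ Finset.Ico s (2*n+2), G j
      = (-1:ℚ)^s * ∑ u ∈ Finset.range (2*n+2-s), ((-1:ℚ)^u * (M.choose u) * ((u+s).choose c)) := by
    rw [Finset.sum_Ico_eq_sum_range, Finset.mul_sum]
    refine Finset.sum_congr rfl fun u _ => ?_
    have h1 : ¬ (s + u < s) := by omega
    have h2 : s + u - s = u := by omega
    simp only [hG, if_neg h1, h2]
    have h3 : s + u = u + s := by omega
    rw [h3, pow_add]
    ring
  have trim : ∑ u ∈ Finset.range (2*n+2-s), ((-1:ℚ)^u * (M.choose u) * ((u+s).choose c))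
      = ∑ u ∈ Finset.range (M+1), ((-1:ℚ)^u * (M.choose u) * ((u+s).choose c)) := by
    symm
    refine Finset.sum_subset ?_ ?_
    · intro x hx; rw [Finset.mem_range] at *; omega
    · intro x _ hx
      rw [Finset.mem_range] at hx
      have : M < x := by omega
      rw [Nat.choose_eq_zero_of_lt this]
      norm_num
  rw [drop, shift, trim, lemF M s c (by omega)]
  ring

lemma lemA (n : ℕ) (c : Fin (n+1) → ℕ) (hanti : StrictAnti c)
    (k : Fin (n+1)) (hk : c k + 2*(k:ℕ) < 2*n + 1) :
    (Matrix.det (fun i j : Fin (n+1) =>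
      (((2*n+1-(i:ℕ)).choose (c j) : ℚ) - (((i:ℕ)).choose (c j) : ℚ)))) = 0 := by
  classical
  set Mq : Matrix (Fin (n+1)) (Fin (n+1)) ℚ := fun i j =>
      (((2*n+1-(i:ℕ)).choose (c j) : ℚ) - (((i:ℕ)).choose (c j) : ℚ)) with hMq
  set w : ℕ → (Fin (n+1) → ℚ) := fun s i =>
      if (i:ℕ) < s then 0 else (-1:ℚ)^(i:ℕ) * ((2*n+1-2*s).choose ((i:ℕ)-s)) with hw
  have horth : ∀ s : ℕ, s ≤ (k:ℕ) → ∀ j : Fin (n+1), (k:ℕ) ≤ (j:ℕ) →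
      (Matrix.vecMul (w s) Mq) j = 0 := by
    intro s hsk j hj
    have hcj : c j ≤ c k := by
      have hkj : k ≤ j := Fin.le_def.mpr hj
      exact hanti.antitone hkj
    have hs : s ≤ n := le_trans hsk (Nat.lt_succ_iff.mp k.isLt)
    have hcs : c j + 2*s < 2*n + 1 := by omega
    have hW := lemW n s (c j) hs hcs
    rw [Matrix.vecMul, dotProduct]
    rw [← Fin.sum_univ_eq_sum_range (fun i =>
      (if i < s then (0:ℚ) else (-1:ℚ)^i * ((2*n+1-2*s).choose (i - s)))
        * (((2*n+1-i).choose (c j) : ℚ) - ((i).choose (c j) : ℚ))) (n+1)] at hW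
    rw [← hW]
  set u : Fin ((k:ℕ)+1) → (Fin (k:ℕ) → ℚ) := fun s j =>
      Matrix.vecMul (w (s:ℕ)) Mq (Fin.castLE (by omega) j) with hu
  have hdep : ¬ LinearIndependent ℚ u := by
    intro h
    have h1 := h.fintype_card_le_finrank
    rw [Module.finrank_pi] at h1
    simp [Fintype.card_fin] at h1
  obtain ⟨g, hg, s1, hs1⟩ := Fintype.not_linearIndependent_iff.mp hdep
  set x : Fin (n+1) → ℚ := fun i => ∑ s : Fin ((k:ℕ)+1), g s * w (s:ℕ) i with hx
  have hxM : Matrix.vecMul x Mq = 0 := by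
    funext j
    have hswap : Matrix.vecMul x Mq j
        = ∑ s : Fin ((k:ℕ)+1), g s * (Matrix.vecMul (w (s:ℕ)) Mq j) := by
      rw [Matrix.vecMul, dotProduct]
      simp only [hx, Finset.sum_mul]
      rw [Finset.sum_comm]
      refine Finset.sum_congr rfl fun s _ => ?_
      rw [Matrix.vecMul, dotProduct, Finset.mul_sum]
      refine Finset.sum_congr rfl fun i _ => ?_
      ring
    by_cases hj : (k:ℕ) ≤ (j:ℕ)
    · rw [hswap]
      refine Finset.sum_eq_zero fun s _ => ?_
      rw [horth (s:ℕ) (Nat.lt_succ_iff.mp s.isLt) j hj, mul_zero]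
    · have hj' : (j:ℕ) < (k:ℕ) := by omega
      have hcast : Fin.castLE (show (k:ℕ) ≤ n+1 by omega) ⟨(j:ℕ), hj'⟩ = j := Fin.ext rfl
      have h0 := congrFun hg (⟨(j:ℕ), hj'⟩ : Fin (k:ℕ))
      rw [Finset.sum_apply] at h0
      simp only [Pi.smul_apply, smul_eq_mul, hu, Pi.zero_apply] at h0
      rw [hcast] at h0
      rw [hswap]
      exact h0
  set T := Finset.univ.filter (fun s : Fin ((k:ℕ)+1) => g s ≠ 0) with hT
  have hTne : T.Nonempty := ⟨s1, by simp [hT, hs1]⟩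
  set m := T.min' hTne with hm
  have hgm : g m ≠ 0 := (Finset.mem_filter.mp (T.min'_mem hTne)).2
  have hmin : ∀ s, g s ≠ 0 → m ≤ s := fun s hsne => T.min'_le s (by simp [hT, hsne])
  have hmn : (m:ℕ) ≤ n := by
    have h1 := m.isLt
    have h2 := k.isLt
    omega
  set i0 : Fin (n+1) := ⟨(m:ℕ), by omega⟩ with hi0
  have hxi0 : x i0 = g m * ((-1:ℚ)^(m:ℕ)) := by
    have hxv : x i0 = ∑ s : Fin ((k:ℕ)+1), g s * w (s:ℕ) i0 := rfl
    rw [hxv, Finset.sum_eq_single m]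
    · have hnlt : ¬ ((i0:ℕ) < (m:ℕ)) := by simp [hi0]
      simp [hw, hi0]
    · intro s _ hsm
      rcases lt_or_gt_of_ne hsm with hlt | hgt
      · have hz : g s = 0 := by
          by_contra h
          exact absurd (hmin s h) (not_le.mpr hlt)
        rw [hz, zero_mul]
      · have hlt2 : (i0:ℕ) < (s:ℕ) := by
          have : (m:ℕ) < (s:ℕ) := hgt
          simpa [hi0] using this
        simp [hw, hlt2]
    · intro h; exact absurd (Finset.mem_univ m) h
  have hx0 : x ≠ 0 := by
    intro h
    rw [h] at hxi0
    have : g m * ((-1:ℚ)^(m:ℕ)) = 0 := by simpa using hxi0.symm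
    rcases mul_eq_zero.mp this with h1 | h2
    · exact hgm h1
    · exact absurd h2 (by positivity)
  exact Matrix.exists_vecMul_eq_zero_iff.mp ⟨x, hx0, hxM⟩

def vq (n : ℕ) (e : ℕ) (i : Fin (n+1)) : ℚ :=
  ((2*n+1-(i:ℕ)).choose e : ℚ) - (((i:ℕ)).choose e : ℚ)

lemma lemB (n : ℕ) : ∀ (c : Fin (n+1) → ℕ), StrictAnti c → (∀ j, 1 ≤ c j) →
    (∀ j : Fin (n+1), 2*n+1 ≤ c j + 2*(j:ℕ)) → c 0 ≤ 2*n+1 →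
    0 < Matrix.det (fun i j : Fin (n+1) =>
      (((2*n+1-(i:ℕ)).choose (c j) : ℚ) - (((i:ℕ)).choose (c j) : ℚ))) := by
  induction n with
  | zero =>
    intro c _ h1 _ h2
    have hc0 : c 0 = 1 := le_antisymm (by simpa using h2) (h1 0)
    refine lt_of_lt_of_eq ?_ (Matrix.det_fin_one _).symm
    show (0:ℚ) < ((2*0+1-((0:Fin 1):ℕ)).choose (c 0) : ℚ) - (((0:Fin 1):ℕ).choose (c 0) : ℚ)
    norm_num [hc0]
  | succ n ih =>
    intro c hanti h1 hgood hle
    classical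
    have h0 : c 0 = 2*n+3 := by
      have hg := hgood 0
      simp only [Fin.val_zero, mul_zero, add_zero] at hg
      omega
    set Mq : Matrix (Fin (n+1+1)) (Fin (n+1+1)) ℚ := fun i j =>
      (((2*(n+1)+1-(i:ℕ)).choose (c j) : ℚ) - (((i:ℕ)).choose (c j) : ℚ)) with hMq
    show 0 < Mq.det
    have hcol : ∀ i : Fin (n+1+1), Mq i 0 = if i = 0 then 1 else 0 := by
      intro i
      by_cases hi : i = 0
      · subst hi
        rw [if_pos rfl]
        show ((2*(n+1)+1-((0:Fin (n+2)):ℕ)).choose (c 0) : ℚ)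
          - (((0:Fin (n+2)):ℕ).choose (c 0) : ℚ) = 1
        rw [h0]
        have e1 : 2*(n+1)+1-((0:Fin (n+2)):ℕ) = 2*n+3 := by simp only [Fin.val_zero, Nat.sub_zero]; omega
        rw [e1, Nat.choose_self]
        have e2 : ((0:Fin (n+2)):ℕ).choose (2*n+3) = 0 :=
          Nat.choose_eq_zero_of_lt (by simp)
        rw [e2]
        norm_num
      · rw [if_neg hi]
        show ((2*(n+1)+1-((i:Fin (n+2)):ℕ)).choose (c 0) : ℚ)
          - (((i:Fin (n+2)):ℕ).choose (c 0) : ℚ) = 0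
        have hi1 : 1 ≤ (i:ℕ) := by
          rcases Nat.eq_zero_or_pos (i:ℕ) with h | h
          · exact absurd (Fin.ext h : i = 0) hi
          · exact h
        have hi2 : (i:ℕ) ≤ n+1 := Nat.lt_succ_iff.mp i.isLt
        rw [h0]
        rw [Nat.choose_eq_zero_of_lt (by omega : 2*(n+1)+1-(i:ℕ) < 2*n+3)]
        rw [Nat.choose_eq_zero_of_lt (by omega : (i:ℕ) < 2*n+3)]
        norm_num
    rw [Matrix.det_succ_column_zero]
    rw [Finset.sum_eq_single 0]
    rotate_left
    · intro i _ hi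
      rw [hcol i, if_neg hi]
      ring
    · intro h; exact absurd (Finset.mem_univ 0) h
    rw [hcol 0, if_pos rfl]
    simp only [Fin.val_zero, pow_zero, one_mul, mul_one, Fin.succAbove_zero]
    -- now: 0 < det (Mq.submatrix Fin.succ Fin.succ)
    set d : Fin (n+1) → ℕ := fun j => c j.succ with hd
    have hdanti : StrictAnti d := fun a b hab => hanti (Fin.succ_lt_succ_iff.mpr hab)
    have hd1 : ∀ j, 1 ≤ d j := fun j => h1 _
    have hdgood : ∀ j : Fin (n+1), 2*n+1 ≤ d j + 2*(j:ℕ) := by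
      intro j
      have hg := hgood j.succ
      simp only [Fin.val_succ] at hg
      have : d j = c j.succ := rfl
      omega
    have hdtop : d 0 ≤ 2*n+2 := by
      have h01 : (0 : Fin (n+1+1)) < (0:Fin (n+1)).succ := Fin.succ_pos 0
      have h02 := hanti h01
      have : d 0 = c (0:Fin (n+1)).succ := rfl
      omega
    have hsplit : ∀ (i j : Fin (n+1)), (Mq.submatrix Fin.succ Fin.succ) i j
        = vq n (d j) i + vq n (d j - 1) i := by
      intro i j
      show ((2*(n+1)+1-((i:ℕ)+1)).choose (c j.succ) : ℚ)
        - ((((i:ℕ)+1)).choose (c j.succ) : ℚ) = _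
      obtain ⟨e, he⟩ : ∃ e, c j.succ = e + 1 := ⟨c j.succ - 1, by have := h1 j.succ; omega⟩
      have h2 : 2*(n+1)+1-((i:ℕ)+1) = (2*n+1-(i:ℕ)) + 1 := by
        have := i.isLt; omega
      have h3 : d j = e + 1 := he
      rw [he, h2, Nat.choose_succ_succ (2*n+1-(i:ℕ)) e, Nat.choose_succ_succ ((i:ℕ)) e]
      simp only [vq, h3, Nat.add_sub_cancel]
      push_cast
      ring
    set g : Fin (n+1) → Bool → (Fin (n+1) → ℚ) :=
      fun j b => vq n (cond b (d j) (d j - 1)) with hgdef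
    have hdet2 : (Mq.submatrix Fin.succ Fin.succ).det
        = ∑ r : Fin (n+1) → Bool,
            Matrix.det (fun i j : Fin (n+1) => vq n (cond (r j) (d j) (d j - 1)) i) := by
      rw [← Matrix.det_transpose]
      have htr : (Mq.submatrix Fin.succ Fin.succ)ᵀ = fun j => ∑ b : Bool, g j b := by
        funext j i
        rw [Finset.sum_apply]
        rw [Fintype.sum_bool]
        show (Mq.submatrix Fin.succ Fin.succ) i j = g j true i + g j false i
        rw [hsplit i j]
        rfl
      rw [htr]
      have hms := (Matrix.detRowAlternating (R := ℚ) (n := Fin (n+1))).toMultilinearMap.map_sum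
        (g := g)
      simp only [AlternatingMap.coe_multilinearMap] at hms
      have hdef1 : Matrix.det (fun j => ∑ b : Bool, g j b : Matrix (Fin (n+1)) (Fin (n+1)) ℚ)
          = Matrix.detRowAlternating (fun j => ∑ b : Bool, g j b) := rfl
      rw [hdef1, hms]
      refine Finset.sum_congr rfl fun r _ => ?_
      have hdef2 : Matrix.detRowAlternating (fun j => g j (r j))
          = Matrix.det (fun j => g j (r j) : Matrix (Fin (n+1)) (Fin (n+1)) ℚ) := rfl
      rw [hdef2]; refine (Matrix.det_transpose (R := ℚ) _).symm.trans ?_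
      congr 1
    have hnonneg : ∀ e : Fin (n+1) → ℕ, (∀ a b : Fin (n+1), a < b → e b ≤ e a) →
        0 ≤ Matrix.det (fun i j : Fin (n+1) => vq n (e j) i) := by
      intro e hmono
      by_cases hz : ∃ j, e j = 0
      · obtain ⟨j, hj⟩ := hz
        refine le_of_eq (Matrix.det_eq_zero_of_column_eq_zero j (fun i => ?_)).symm
        simp [vq, hj]
      by_cases hbig : ∃ j, 2*n+2 ≤ e j
      · obtain ⟨j, hj⟩ := hbig
        refine le_of_eq (Matrix.det_eq_zero_of_column_eq_zero j (fun i => ?_)).symm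
        have hi2 : (i:ℕ) ≤ n := Nat.lt_succ_iff.mp i.isLt
        have e1 : (2*n+1-(i:ℕ)) < e j := by omega
        have e2 : (i:ℕ) < e j := by omega
        simp [vq, Nat.choose_eq_zero_of_lt e1, Nat.choose_eq_zero_of_lt e2]
      by_cases heq : ∃ a b : Fin (n+1), a < b ∧ e a = e b
      · obtain ⟨a, b, hab, habe⟩ := heq
        exact le_of_eq (Matrix.det_zero_of_column_eq (ne_of_lt hab)
          (fun i => by rw [show vq n (e a) i = vq n (e b) i from by rw [habe]])).symm
      have hsanti : StrictAnti e := by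
        intro a b hab
        rcases lt_or_eq_of_le (hmono a b hab) with h | h
        · exact h
        · exact absurd ⟨a, b, hab, h.symm⟩ heq
      by_cases hbad : ∃ j : Fin (n+1), e j + 2*(j:ℕ) < 2*n+1
      · obtain ⟨j, hj⟩ := hbad
        have hz2 := lemA n e hsanti j hj
        have h2 : Matrix.det (fun i j : Fin (n+1) => vq n (e j) i) = 0 := by
          simpa only [vq] using hz2
        exact le_of_eq h2.symm
      · push_neg at hbad hz hbig
        have h1e : ∀ j, 1 ≤ e j := fun j => Nat.pos_of_ne_zero (hz j)
        have htope : e 0 ≤ 2*n+1 := by have := hbig 0; omega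
        have hp := ih e hsanti h1e hbad htope
        have h2 : 0 < Matrix.det (fun i j : Fin (n+1) => vq n (e j) i) := by
          simpa only [vq] using hp
        exact le_of_lt h2
    set rstar : Fin (n+1) → Bool := fun j => decide (d j + 2*(j:ℕ) = 2*n+1) with hrstar
    have hestar : ∀ j : Fin (n+1), (cond (rstar j) (d j) (d j - 1))
        = if d j + 2*(j:ℕ) = 2*n+1 then d j else d j - 1 := by
      intro j
      by_cases h : d j + 2*(j:ℕ) = 2*n+1 <;> simp [hrstar, h]
    have hklow : ∀ j : Fin (n+1), 2*n+1 ≤ (cond (rstar j) (d j) (d j - 1)) + 2*(j:ℕ) := by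
      intro j
      rw [hestar j]
      by_cases h : d j + 2*(j:ℕ) = 2*n+1
      · rw [if_pos h]; omega
      · rw [if_neg h]
        have := hdgood j
        have := hd1 j
        omega
    have h1e : ∀ j, 1 ≤ (cond (rstar j) (d j) (d j - 1)) := by
      intro j
      have := hklow j
      have := j.isLt
      omega
    have htope : (cond (rstar 0) (d 0) (d 0 - 1)) ≤ 2*n+1 := by
      rw [hestar 0]
      by_cases h : d 0 + 2*((0:Fin (n+1)):ℕ) = 2*n+1
      · rw [if_pos h]
        simp only [Fin.val_zero, mul_zero, add_zero] at h
        omega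
      · rw [if_neg h]
        omega
    have hstrict : StrictAnti (fun j => cond (rstar j) (d j) (d j - 1)) := by
      rw [Fin.strictAnti_iff_succ_lt]
      intro i
      have hlt : d i.succ < d i.castSucc := hdanti (Fin.castSucc_lt_succ : i.castSucc < i.succ)
      have hg1 := hdgood i.castSucc
      have hg2 := hdgood i.succ
      have hd1a := hd1 i.castSucc
      have hd1b := hd1 i.succ
      have hv12 : (i.succ : ℕ) = (i.castSucc : ℕ) + 1 := rfl
      show (cond (rstar i.succ) (d i.succ) (d i.succ - 1))
        < (cond (rstar i.castSucc) (d i.castSucc) (d i.castSucc - 1))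
      rw [hestar i.succ, hestar i.castSucc]
      split_ifs <;> omega
    have hposterm : 0 < Matrix.det (fun i j : Fin (n+1) =>
        vq n (cond (rstar j) (d j) (d j - 1)) i) := by
      have hp := ih (fun j => cond (rstar j) (d j) (d j - 1)) hstrict h1e hklow htope
      simpa only [vq] using hp
    rw [hdet2]
    refine Finset.sum_pos' (fun r _ => ?_) ⟨rstar, Finset.mem_univ _, hposterm⟩
    refine hnonneg (fun j => cond (r j) (d j) (d j - 1)) ?_
    intro a b hab
    have hlt : d b < d a := hdanti hab
    have h1a := hd1 a
    have h1b := hd1 b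
    show (cond (r b) (d b) (d b - 1)) ≤ (cond (r a) (d a) (d a - 1))
    cases hra : r a <;> cases hrb : r b <;>
      simp only [hra, hrb, Bool.cond_true, Bool.cond_false] <;> omega

end DehnSommervilleAux

open DehnSommervilleAux in

/-- **Lemma (Dehn–Sommerville bases, even case).**
Let `n ≥ 1` and let `B = {b_1 < ⋯ < b_{n+1}} ⊆ {1,…,2n+1}` (here `b` is the strictly
increasing enumeration, 0-indexed, so `b k` is `b_{k+1}`).  The `(n+1)×(n+1)` matrix with
entry `C(2n+1-i, 2n+2-b_k) - C(i, 2n+2-b_k)` in row `i` and column `k` has nonzero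
determinant iff `b_k ≤ 2k-1` for all `1 ≤ k ≤ n+1` (0-indexed: `b k ≤ 2k+1`). -/
theorem dehnSommerville_even_basis_iff (n : ℕ) (hn : 1 ≤ n)
    (b : Fin (n + 1) → ℕ) (hmono : StrictMono b)
    (hlb : ∀ k, 1 ≤ b k) (hub : ∀ k, b k ≤ 2 * n + 1) :
    (Matrix.det (fun i k : Fin (n + 1) =>
        ((Nat.choose (2 * n + 1 - (i : ℕ)) (2 * n + 2 - b k) : ℤ)
          - (Nat.choose (i : ℕ) (2 * n + 2 - b k) : ℤ))) ≠ 0)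
      ↔ ∀ k : Fin (n + 1), b k ≤ 2 * (k : ℕ) + 1 := by
  classical
  set c : Fin (n+1) → ℕ := fun k => 2*n+2 - b k with hc
  have hanti : StrictAnti c := by
    intro j k hjk
    have h1 := hmono hjk
    have h2 := hub j
    have h3 := hub k
    have h4 := hlb j
    simp only [hc]
    omega
  set Mz : Matrix (Fin (n+1)) (Fin (n+1)) ℤ := fun i k =>
    ((Nat.choose (2 * n + 1 - (i : ℕ)) (2 * n + 2 - b k) : ℤ)
      - (Nat.choose (i : ℕ) (2 * n + 2 - b k) : ℤ)) with hMz
  have hcast : ((Mz.det : ℤ) : ℚ) = Matrix.det (fun i k : Fin (n+1) =>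
      (((2*n+1-(i:ℕ)).choose (c k) : ℚ) - (((i:ℕ)).choose (c k) : ℚ))) := by
    rw [show ((Mz.det : ℤ) : ℚ) = (Int.castRingHom ℚ) Mz.det from rfl]
    rw [RingHom.map_det]
    congr 1
    funext i k
    show (Int.castRingHom ℚ) (Mz i k) = _
    simp only [hMz, RingHom.mapMatrix_apply, Matrix.map_apply, hc, Int.coe_castRingHom]
    push_cast
    ring
  have hne : Mz.det ≠ 0 ↔ Matrix.det (fun i k : Fin (n+1) =>
      (((2*n+1-(i:ℕ)).choose (c k) : ℚ) - (((i:ℕ)).choose (c k) : ℚ))) ≠ 0 := by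
    rw [← hcast]
    exact not_congr (Int.cast_eq_zero (α := ℚ)).symm
  constructor
  · intro hdet k
    by_contra hbk
    push_neg at hbk
    have hkb : c k + 2*(k:ℕ) < 2*n+1 := by
      have h2 := hub k
      have h3 := hlb k
      simp only [hc]
      omega
    exact (hne.mp hdet) (lemA n c hanti k hkb)
  · intro hgood
    rw [hne]
    have h1 : ∀ j, 1 ≤ c j := fun j => by have := hub j; simp only [hc]; omega
    have h2 : ∀ j : Fin (n+1), 2*n+1 ≤ c j + 2*(j:ℕ) := fun j => by
      have := hgood j
      have := hub j
      simp only [hc]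
      omega
    have h3 : c 0 ≤ 2*n+1 := by have := hlb 0; simp only [hc]; omega
    exact ne_of_gt (lemB n c hanti h1 h2 h3)
end

section
/- Let n ≥ 1 and let B be an (n+1)-element subset of {1, 2, ..., 2n+1}. Then the (n+1)×(n+1) integer matrix formed by the columns of M_{2n} labeled by B (entry in row i, 0 ≤ i ≤ n, and column labeled b ∈ B equal to C(2n+1-i, 2n+2-b) - C(i, 2n+2-b)) has nonzero determinant if and only if there exists a Dyck word of length 2n+2 whose upstep set is exactly B. -/
open Polynomial

namespace DSAux

/-- The `k`-th column polynomial at level `m`: `X^(2k+1) (1+X)^(m-k)`. -/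
noncomputable def vcol (m k : ℕ) : ℚ[X] := X ^ (2*k+1) * (1+X)^(m-k)

lemma coeff_vcol_lt (m k e : ℕ) (h : e < 2*k+1) : (vcol m k).coeff e = 0 := by
  rw [vcol, Polynomial.coeff_X_pow_mul']
  simp [Nat.not_le_of_lt h]

lemma coeff_vcol_add (m k d : ℕ) :
    (vcol m k).coeff (d + (2*k+1)) = ((m-k).choose d : ℚ) := by
  rw [vcol, Polynomial.coeff_X_pow_mul, coeff_one_add_X_pow]

lemma coeff_vcol_ge (m k e : ℕ) (h : 2*k+1 ≤ e) :
    (vcol m k).coeff e = ((m-k).choose (e - (2*k+1)) : ℚ) := by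
  have he : e = (e - (2*k+1)) + (2*k+1) := (Nat.sub_add_cancel h).symm
  rw [he, coeff_vcol_add, Nat.add_sub_cancel]

lemma coeff_vcol_gt_deg (m k e : ℕ) (hk : k ≤ m) (h : m + k + 1 < e) :
    (vcol m k).coeff e = 0 := by
  rcases lt_or_ge e (2*k+1) with h' | h'
  · exact coeff_vcol_lt m k e h'
  · rw [coeff_vcol_ge m k e h']
    have : m - k < e - (2*k+1) := by omega
    simp [Nat.choose_eq_zero_of_lt this]

/-- A matrix with an `I × Jᶜ` zero block, `|J| < |I|`, has zero determinant. -/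
lemma det_eq_zero_of_block {r : ℕ} (M : Matrix (Fin r) (Fin r) ℚ)
    (I J : Finset (Fin r)) (hc : J.card < I.card)
    (h : ∀ i ∈ I, ∀ k, k ∉ J → M i k = 0) : M.det = 0 := by
  classical
  by_contra hdet
  have hunit : IsUnit M := by
    rw [Matrix.isUnit_iff_isUnit_det]
    exact isUnit_iff_ne_zero.mpr hdet
  have hli : LinearIndependent ℚ (fun i => M i) :=
    Matrix.linearIndependent_rows_iff_isUnit.mpr hunit
  have hliI : LinearIndependent ℚ (fun i : I => M i) :=
    hli.comp Subtype.val Subtype.val_injective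
  set s : Finset (Fin r → ℚ) := J.image (fun j => Pi.single j (1:ℚ)) with hs
  set W : Submodule ℚ (Fin r → ℚ) := Submodule.span ℚ (s : Set (Fin r → ℚ)) with hW
  have hmem : ∀ i ∈ I, M i ∈ W := by
    intro i hi
    have hrow : M i = ∑ j ∈ J, (M i j) • (Pi.single j (1:ℚ) : Fin r → ℚ) := by
      funext k
      rw [Finset.sum_apply]
      by_cases hk : k ∈ J
      · rw [Finset.sum_eq_single k]
        · simp
        · intro b _ hb; simp [Pi.single_apply, hb]
        · intro hh; exact absurd hk hh
      · rw [h i hi k hk]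
        symm; apply Finset.sum_eq_zero
        intro b hb
        have hbk : b ≠ k := fun hh => by subst hh; exact absurd hb hk
        simp [Pi.single_apply, hbk]
    rw [hrow]
    exact Submodule.sum_mem _ fun j hj => Submodule.smul_mem _ _
      (Submodule.subset_span (Finset.mem_coe.mpr (Finset.mem_image_of_mem _ hj)))
  have hFD : FiniteDimensional ℚ W :=
    FiniteDimensional.span_of_finite ℚ (s.finite_toSet)
  have hliW : LinearIndependent ℚ (fun i : I => (⟨M i, hmem i i.2⟩ : W)) := by
    apply LinearIndependent.of_comp W.subtype
    exact hliI
  have h1 : Fintype.card I ≤ Module.finrank ℚ W :=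
    LinearIndependent.fintype_card_le_finrank hliW
  have h2 : Module.finrank ℚ W ≤ s.card := finrank_span_finset_le_card s
  have h3 : s.card ≤ J.card := Finset.card_image_le
  have h4 : Fintype.card I = I.card := Fintype.card_coe I
  omega

/-- The square matrix with rows = coefficient extraction at positions `e i`,
columns = the polynomials `vcol m k`. -/
noncomputable def Mfam (r : ℕ) (m : ℕ) (e : Fin (r+1) → ℕ) :
    Matrix (Fin (r+1)) (Fin (r+1)) ℚ :=
  fun i k => (vcol m (k : ℕ)).coeff (e i)

lemma det_eq_zero_low {r m : ℕ} (e : Fin (r+1) → ℕ) (hmono : Monotone e)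
    (k₀ : Fin (r+1)) (hk : e k₀ ≤ 2 * (k₀ : ℕ)) : (Mfam r m e).det = 0 := by
  classical
  apply det_eq_zero_of_block _ (Finset.univ.filter (· ≤ k₀)) (Finset.univ.filter (· < k₀))
  · have hins : Finset.univ.filter (· ≤ k₀) = insert k₀ (Finset.univ.filter (· < k₀)) := by
      ext x
      simp [le_iff_lt_or_eq, or_comm]
    rw [hins, Finset.card_insert_of_notMem (by simp)]
    omega
  · intro i hi k hk'
    simp only [Finset.mem_filter, Finset.mem_univ, true_and, not_lt] at hi hk'
    apply coeff_vcol_lt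
    have h1 : e i ≤ e k₀ := hmono hi
    have h2 : (k₀:ℕ) ≤ (k:ℕ) := hk'
    omega


lemma det_eq_zero_high {r m : ℕ} (e : Fin (r+1) → ℕ) (hmono : Monotone e) (hrm : r ≤ m)
    (k₀ : Fin (r+1)) (hk : m + (k₀ : ℕ) + 2 ≤ e k₀) : (Mfam r m e).det = 0 := by
  classical
  apply det_eq_zero_of_block _ (Finset.univ.filter (k₀ ≤ ·)) (Finset.univ.filter (k₀ < ·))
  · have hins : Finset.univ.filter (k₀ ≤ ·) = insert k₀ (Finset.univ.filter (k₀ < ·)) := by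
      ext x
      simp [le_iff_lt_or_eq, or_comm, eq_comm]
    rw [hins, Finset.card_insert_of_notMem (by simp)]
    omega
  · intro i hi k hk'
    simp only [Finset.mem_filter, Finset.mem_univ, true_and, not_lt] at hi hk'
    apply coeff_vcol_gt_deg
    · exact le_trans (le_trans (Nat.le_of_lt_succ k.isLt) hrm) (le_refl m) |>.trans (le_refl m)
    · have h1 : e k₀ ≤ e i := hmono hi
      have h2 : (k:ℕ) ≤ (k₀:ℕ) := hk'
      omega

lemma vcol_succ_col (m k : ℕ) : vcol m (k+1) = X^2 * vcol (m-1) k := by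
  unfold vcol
  have h1 : 2*(k+1)+1 = (2*k+1) + 2 := by omega
  have h2 : m - (k+1) = m - 1 - k := by omega
  rw [h1, h2, pow_add]
  ring

lemma vcol_level (m k : ℕ) (h : k < m) :
    vcol m k = vcol (m-1) k + X * vcol (m-1) k := by
  unfold vcol
  have h1 : m - k = (m - 1 - k) + 1 := by omega
  rw [h1, pow_succ]
  ring

lemma coeff_X_sq_mul (p : ℚ[X]) (e : ℕ) (h : 2 ≤ e) :
    (X^2 * p).coeff e = p.coeff (e - 2) := by
  have : e = (e - 2) + 2 := by omega
  rw [this, Polynomial.coeff_X_pow_mul, Nat.add_sub_cancel]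

lemma coeff_X_mul' (p : ℚ[X]) (e : ℕ) (h : 1 ≤ e) :
    (X * p).coeff e = p.coeff (e - 1) := by
  have : e = (e - 1) + 1 := by omega
  rw [this, Polynomial.coeff_X_mul, Nat.add_sub_cancel]

lemma det_pos_base (m : ℕ) (e : Fin 1 → ℕ) (hlo : 1 ≤ e 0) (hhi : e 0 ≤ m + 1) :
    0 < (Mfam 0 m e).det := by
  rw [Matrix.det_fin_one]
  show 0 < (vcol m ((0 : Fin 1) : ℕ)).coeff (e 0)
  simp only [Fin.val_zero]
  rw [coeff_vcol_ge m 0 (e 0) (by omega)]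
  have h1 : e 0 - (2*0+1) ≤ m - 0 := by omega
  exact_mod_cast Nat.cast_pos.mpr (Nat.choose_pos h1)

lemma det_pos_aux : ∀ (N r : ℕ), ∀ (m : ℕ) (e : Fin (r+1) → ℕ), m + r ≤ N → r ≤ m →
    StrictMono e →
    (∀ k : Fin (r+1), 2*(k:ℕ)+1 ≤ e k) → (∀ k : Fin (r+1), e k ≤ m + (k:ℕ) + 1) →
    0 < (Mfam r m e).det := by
  intro N
  induction N with
  | zero =>
    intro r
    match r with
    | 0 =>
      intro m e hN hrm hsm hlo hhi
      exact det_pos_base m e (by have := hlo 0; omega) (by have := hhi 0; simpa using this)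
    | (r'+1) =>
      intro m e hN hrm hsm hlo hhi
      omega
  | succ N ih =>
    intro r
    match r with
    | 0 =>
      intro m e hN hrm hsm hlo hhi
      exact det_pos_base m e (by have := hlo 0; omega) (by have := hhi 0; simpa using this)
    | (r'+1) =>
      intro m e hN hrm hsm hlo hhi
      by_cases hA : e 0 = 1
      · -- expand along row 0
        have hrow0 : ∀ j : Fin (r'+1+1), (j:ℕ) ≠ 0 → Mfam (r'+1) m e 0 j = 0 := by
          intro j hj
          show (vcol m (j:ℕ)).coeff (e 0) = 0
          rw [hA]
          exact coeff_vcol_lt m j 1 (by omega)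
        rw [Matrix.det_succ_row_zero]
        rw [Finset.sum_eq_single (0 : Fin (r'+1+1))]
        rotate_left
        · intro b _ hb
          rw [hrow0 b (fun h => hb (Fin.ext (by simpa using h)))]
          ring
        · intro h; exact absurd (Finset.mem_univ _) h
        have h00 : Mfam (r'+1) m e 0 0 = 1 := by
          show (vcol m ((0 : Fin (r'+1+1)):ℕ)).coeff (e 0) = 1
          simp only [Fin.val_zero]
          rw [hA, coeff_vcol_ge m 0 1 (by norm_num)]
          norm_num
        rw [h00]
        simp only [Fin.val_zero, pow_zero, one_mul, Fin.succAbove_zero]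
        have hminor : (Mfam (r'+1) m e).submatrix Fin.succ Fin.succ
            = Mfam r' (m-1) (fun i => e i.succ - 2) := by
          funext i k
          show (vcol m ((k.succ : Fin (r'+1+1)):ℕ)).coeff (e i.succ)
              = (vcol (m-1) (k:ℕ)).coeff (e i.succ - 2)
          have hcast : ((k.succ : Fin (r'+1+1)) : ℕ) = (k:ℕ) + 1 := rfl
          rw [hcast, vcol_succ_col m (k:ℕ)]
          rw [coeff_X_sq_mul]
          have := hsm (show (0 : Fin (r'+1+1)) < i.succ from Fin.succ_pos i)
          omega
        rw [hminor]
        apply ih r' (m-1) _ (by omega) (by omega)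
        · intro a b hab
          have h1 := hsm (show a.succ < b.succ from Fin.succ_lt_succ_iff.mpr hab)
          have h2 := hsm (show (0 : Fin (r'+1+1)) < a.succ from Fin.succ_pos a)
          show e a.succ - 2 < e b.succ - 2
          omega
        · intro k
          have h1 := hlo k.succ
          have hcast : ((k.succ : Fin (r'+1+1)) : ℕ) = (k:ℕ) + 1 := rfl
          rw [hcast] at h1
          show 2*(k:ℕ)+1 ≤ e k.succ - 2
          omega
        · intro k
          have h1 := hhi k.succ
          have hcast : ((k.succ : Fin (r'+1+1)) : ℕ) = (k:ℕ) + 1 := rfl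
          rw [hcast] at h1
          have h2 := hsm (show (0 : Fin (r'+1+1)) < k.succ from Fin.succ_pos k)
          show e k.succ - 2 ≤ (m-1) + (k:ℕ) + 1
          omega
      · by_cases hB : e (Fin.last (r'+1)) = m + (r'+1) + 1
        · -- expand along last row
          have hrowlast : ∀ j : Fin (r'+1+1), (j:ℕ) ≠ r'+1 →
              Mfam (r'+1) m e (Fin.last (r'+1)) j = 0 := by
            intro j hj
            show (vcol m (j:ℕ)).coeff (e (Fin.last (r'+1))) = 0
            rw [hB]
            have hjr : (j:ℕ) < r'+1 := lt_of_le_of_ne (Nat.le_of_lt_succ j.isLt) hj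
            exact coeff_vcol_gt_deg m j (m+(r'+1)+1) (le_trans (le_of_lt hjr) hrm) (by omega)
          rw [Matrix.det_succ_row _ (Fin.last (r'+1))]
          rw [Finset.sum_eq_single (Fin.last (r'+1))]
          rotate_left
          · intro b _ hb
            rw [hrowlast b (fun h => hb (Fin.ext (by simpa using h)))]
            ring
          · intro h; exact absurd (Finset.mem_univ _) h
          have hll : Mfam (r'+1) m e (Fin.last (r'+1)) (Fin.last (r'+1)) = 1 := by
            show (vcol m ((Fin.last (r'+1)):ℕ)).coeff (e (Fin.last (r'+1))) = 1
            simp only [Fin.val_last]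
            rw [hB, coeff_vcol_ge m (r'+1) (m+(r'+1)+1) (by omega)]
            have h1 : m + (r'+1) + 1 - (2*(r'+1)+1) = m - (r'+1) := by omega
            rw [h1]
            simp [Nat.choose_self]
          rw [hll]
          have hsign : (-1 : ℚ) ^ (((Fin.last (r'+1)) : ℕ) + ((Fin.last (r'+1)) : ℕ)) = 1 :=
            Even.neg_one_pow ⟨(Fin.last (r'+1) : ℕ), rfl⟩
          rw [Fin.succAbove_last, hsign]
          have hminor : (Mfam (r'+1) m e).submatrix Fin.castSucc Fin.castSucc
              = Mfam r' m (fun i => e i.castSucc) := by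
            funext i k
            show (vcol m ((k.castSucc : Fin (r'+1+1)):ℕ)).coeff (e i.castSucc)
                = (vcol m (k:ℕ)).coeff (e i.castSucc)
            rfl
          rw [hminor, one_mul, one_mul]
          apply ih r' m _ (by omega) (by omega)
          · intro a b hab
            exact hsm (show a.castSucc < b.castSucc from Fin.castSucc_lt_castSucc_iff.mpr hab)
          · intro k
            have := hlo k.castSucc
            simpa using this
          · intro k
            have := hhi k.castSucc
            simpa using this
        · -- Pascal case
          have he0 : 2 ≤ e 0 := by
            have := hlo 0
            simp only [Fin.val_zero] at this
            omega
          have helast : e (Fin.last (r'+1)) ≤ m + (r'+1) := by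
            have := hhi (Fin.last (r'+1))
            simp only [Fin.val_last] at this
            omega
          have hmr : r' + 1 + 1 ≤ m := by
            have := hlo (Fin.last (r'+1))
            simp only [Fin.val_last] at this
            omega
          classical
          set g : Fin (r'+1+1) → Bool → (Fin (r'+1+1) → ℚ) :=
            fun i b k => (vcol (m-1) (k:ℕ)).coeff (e i - (if b then 1 else 0)) with hg
          have hrowsplit : Mfam (r'+1) m e = fun i => ∑ b : Bool, g i b := by
            funext i k
            show (vcol m (k:ℕ)).coeff (e i) = (∑ b : Bool, g i b) k
            rw [Finset.sum_apply, Fintype.sum_bool]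
            show _ = g i true k + g i false k
            have hgt : g i true k = (vcol (m-1) (k:ℕ)).coeff (e i - 1) := by
              simp [hg]
            have hgf : g i false k = (vcol (m-1) (k:ℕ)).coeff (e i) := by
              simp [hg]
            rw [hgt, hgf]
            have hkm : (k:ℕ) < m := by
              have := k.isLt
              omega
            rw [vcol_level m (k:ℕ) hkm, Polynomial.coeff_add,
              coeff_X_mul' _ (e i) (by have := hsm.monotone (Fin.zero_le i); omega)]
            ring
          have hdet : (Mfam (r'+1) m e).det
              = ∑ ε : Fin (r'+1+1) → Bool, (Matrix.of (fun i => g i (ε i))).det := by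
            have h1 : (Mfam (r'+1) m e).det
                = Matrix.detRowAlternating (fun i => ∑ b : Bool, g i b) := by
              rw [hrowsplit]
              rfl
            rw [h1]
            exact (Matrix.detRowAlternating (R := ℚ)
              (n := Fin (r'+1+1))).toMultilinearMap.map_sum g
          rw [hdet]
          have hterm : ∀ ε : Fin (r'+1+1) → Bool,
              (Matrix.of (fun i => g i (ε i)))
                = Mfam (r'+1) (m-1) (fun i => e i - (if ε i then 1 else 0)) := by
            intro ε
            funext i k
            rfl
          apply Finset.sum_pos'
          · intro ε _
            rw [hterm ε]
            set s : Fin (r'+1+1) → ℕ := fun i => e i - (if ε i then 1 else 0) with hs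
            have hsmono : Monotone s := by
              intro a b hab
              rcases lt_or_eq_of_le hab with h | h
              · have h1 := hsm h
                simp only [hs]
                split <;> split <;> omega
              · subst h; exact le_refl _
            by_cases hstrict : StrictMono s
            · by_cases hlo' : ∀ k : Fin (r'+1+1), 2*(k:ℕ)+1 ≤ s k
              · by_cases hhi' : ∀ k : Fin (r'+1+1), s k ≤ (m-1) + (k:ℕ) + 1
                · exact le_of_lt (ih (r'+1) (m-1) s (by omega) (by omega) hstrict hlo' hhi')
                · push_neg at hhi'
                  obtain ⟨k₀, hk₀⟩ := hhi'
                  rw [det_eq_zero_high s hsmono (by omega) k₀ (by omega)]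
              · push_neg at hlo'
                obtain ⟨k₀, hk₀⟩ := hlo'
                rw [det_eq_zero_low s hsmono k₀ (by omega)]
            · have hex : ∃ a b : Fin (r'+1+1), a < b ∧ s b ≤ s a := by
                by_contra hcon
                push_neg at hcon
                exact hstrict (fun a b hab => hcon a b hab)
              obtain ⟨a, b, hab, hba⟩ := hex
              have heq : s a = s b := le_antisymm (hsmono (le_of_lt hab)) hba
              apply le_of_eq
              symm
              apply Matrix.det_zero_of_row_eq (ne_of_lt hab)
              funext k
              show (vcol (m-1) (k:ℕ)).coeff (s a) = (vcol (m-1) (k:ℕ)).coeff (s b)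
              rw [heq]
          · refine ⟨fun i => decide (e i = m + (i:ℕ) + 1), Finset.mem_univ _, ?_⟩
            rw [hterm]
            set s : Fin (r'+1+1) → ℕ :=
              fun i => e i - (if decide (e i = m + (i:ℕ) + 1) then 1 else 0) with hs
            have hsval : ∀ i : Fin (r'+1+1),
                (e i = m + (i:ℕ) + 1 ∧ s i = m + (i:ℕ)) ∨ (e i ≤ m + (i:ℕ) ∧ s i = e i) := by
              intro i
              by_cases h : e i = m + (i:ℕ) + 1
              · left
                refine ⟨h, ?_⟩
                have : s i = e i - 1 := by simp [hs, h]
                omega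
              · right
                have h2 := hhi i
                refine ⟨by omega, ?_⟩
                simp [hs, h]
            apply ih (r'+1) (m-1) s (by omega) (by omega)
            · intro a b hab
              have hab' : (a:ℕ) < (b:ℕ) := hab
              have h3 := hsm hab
              rcases hsval a with ⟨ha1, ha2⟩ | ⟨ha1, ha2⟩ <;>
                rcases hsval b with ⟨hb1, hb2⟩ | ⟨hb1, hb2⟩ <;> omega
            · intro k
              have h1 := hlo k
              have h2 : (k:ℕ) < r'+1+1 := k.isLt
              rcases hsval k with ⟨hk1, hk2⟩ | ⟨hk1, hk2⟩ <;> omega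
            · intro k
              rcases hsval k with ⟨hk1, hk2⟩ | ⟨hk1, hk2⟩ <;> omega


/-! ### The change-of-basis identities -/

def tc (m k : ℕ) : ℕ := (m+k).choose (2*k) + (m+k-1).choose (2*k)
def sc (m k : ℕ) : ℕ := (m+k+1).choose (2*k+1) + (m+k).choose (2*k+1)

lemma tc_zero (m : ℕ) : tc m 0 = 2 := by simp [tc]

lemma tc_self_succ (m : ℕ) : tc (m+1) (m+1) = 1 := by
  have l1 : tc (m+1) (m+1) = (2*(m+1)).choose (2*(m+1)) + (2*m+1).choose (2*(m+1)) := by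
    unfold tc; congr 1 <;> congr 1 <;> omega
  rw [l1, Nat.choose_self, Nat.choose_eq_zero_of_lt (by omega)]

lemma sc_self (m : ℕ) : sc m m = 1 := by
  have l1 : sc m m = (2*m+1).choose (2*m+1) + (2*m).choose (2*m+1) := by
    unfold sc; congr 1 <;> congr 1 <;> omega
  rw [l1, Nat.choose_self, Nat.choose_eq_zero_of_lt (by omega)]

lemma tc_pascal (m k : ℕ) : tc (m+1) (k+1) = tc m (k+1) + sc m k := by
  have l1 : tc (m+1) (k+1) = (m+k+2).choose (2*k+2) + (m+k+1).choose (2*k+2) := by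
    unfold tc; congr 1 <;> congr 1 <;> omega
  have l2 : tc m (k+1) = (m+k+1).choose (2*k+2) + (m+k).choose (2*k+2) := by
    unfold tc; congr 1 <;> congr 1 <;> omega
  have l3 : sc m k = (m+k+1).choose (2*k+1) + (m+k).choose (2*k+1) := by
    unfold sc; congr 1 <;> congr 1 <;> omega
  have p1 : (m+k+2).choose (2*k+2) = (m+k+1).choose (2*k+1) + (m+k+1).choose (2*k+2) :=
    Nat.choose_succ_succ (m+k+1) (2*k+1)
  have p2 : (m+k+1).choose (2*k+2) = (m+k).choose (2*k+1) + (m+k).choose (2*k+2) :=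
    Nat.choose_succ_succ (m+k) (2*k+1)
  omega

lemma sc_pascal (m k : ℕ) : sc (m+1) k = sc m k + tc (m+1) k := by
  have l1 : sc (m+1) k = (m+k+2).choose (2*k+1) + (m+k+1).choose (2*k+1) := by
    unfold sc; congr 1 <;> congr 1 <;> omega
  have l2 : sc m k = (m+k+1).choose (2*k+1) + (m+k).choose (2*k+1) := by
    unfold sc; congr 1 <;> congr 1 <;> omega
  have l3 : tc (m+1) k = (m+k+1).choose (2*k) + (m+k).choose (2*k) := by
    unfold tc; congr 1 <;> congr 1 <;> omega
  have p1 : (m+k+2).choose (2*k+1) = (m+k+1).choose (2*k) + (m+k+1).choose (2*k+1) :=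
    Nat.choose_succ_succ (m+k+1) (2*k)
  have p2 : (m+k+1).choose (2*k+1) = (m+k).choose (2*k) + (m+k).choose (2*k+1) :=
    Nat.choose_succ_succ (m+k) (2*k)
  omega

noncomputable def Tp (m : ℕ) : ℚ[X] :=
  ∑ k ∈ Finset.range (m+1), (tc m k : ℚ[X]) * (X^(2*k) * (1+X)^(m-k))
noncomputable def Sp (m : ℕ) : ℚ[X] :=
  ∑ k ∈ Finset.range (m+1), (sc m k : ℚ[X]) * (X^(2*k+1) * (1+X)^(m-k))

lemma Tp_step (m : ℕ) : Tp (m+1) = (1+X) * Tp m + X * Sp m := by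
  unfold Tp Sp
  rw [Finset.mul_sum, Finset.mul_sum]
  rw [Finset.sum_range_succ' (fun k => (tc (m+1) k : ℚ[X]) * (X^(2*k) * (1+X)^(m+1-k))) (m+1)]
  rw [Finset.sum_range_succ (fun k => (tc (m+1) (k+1) : ℚ[X]) * (X^(2*(k+1)) * (1+X)^(m+1-(k+1)))) m]
  rw [Finset.sum_range_succ' (fun k => (1+X) * ((tc m k : ℚ[X]) * (X^(2*k) * (1+X)^(m-k)))) m]
  rw [Finset.sum_range_succ (fun k => X * ((sc m k : ℚ[X]) * (X^(2*k+1) * (1+X)^(m-k)))) m]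
  have hmid : ∀ k ∈ Finset.range m,
      (tc (m+1) (k+1) : ℚ[X]) * (X^(2*(k+1)) * (1+X)^(m+1-(k+1)))
        = (1+X) * ((tc m (k+1) : ℚ[X]) * (X^(2*(k+1)) * (1+X)^(m-(k+1))))
          + X * ((sc m k : ℚ[X]) * (X^(2*k+1) * (1+X)^(m-k))) := by
    intro k hk
    rw [Finset.mem_range] at hk
    have h1 : m+1-(k+1) = (m-(k+1))+1 := by omega
    have h2 : m-k = (m-(k+1))+1 := by omega
    rw [tc_pascal, h1, h2, Nat.cast_add]
    push_cast
    ring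
  rw [Finset.sum_congr rfl hmid]
  have hzero : tc (m+1) 0 = tc m 0 := by rw [tc_zero, tc_zero]
  have hlast : (tc (m+1) (m+1) : ℚ[X]) * (X^(2*(m+1)) * (1+X)^(m+1-(m+1)))
      = X * ((sc m m : ℚ[X]) * (X^(2*m+1) * (1+X)^(m-m))) := by
    rw [tc_self_succ, sc_self]
    simp only [Nat.sub_self, pow_zero, Nat.cast_one]
    have h3 : 2*(m+1) = (2*m+1)+1 := by ring
    rw [h3]
    ring
  rw [Finset.sum_add_distrib, hlast, hzero]
  have h0 : (tc m 0 : ℚ[X]) * (X^(2*0) * (1+X)^(m+1-0))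
      = (1+X) * ((tc m 0 : ℚ[X]) * (X^(2*0) * (1+X)^(m-0))) := by
    have h4 : m+1-0 = (m-0)+1 := rfl
    rw [h4]
    ring
  rw [h0]
  ring

lemma Sp_step (m : ℕ) : Sp (m+1) = (1+X) * Sp m + X * Tp (m+1) := by
  unfold Tp Sp
  rw [Finset.mul_sum, Finset.mul_sum]
  rw [Finset.sum_range_succ (fun k => (sc (m+1) k : ℚ[X]) * (X^(2*k+1) * (1+X)^(m+1-k))) (m+1)]
  rw [Finset.sum_range_succ (fun k => X * ((tc (m+1) k : ℚ[X]) * (X^(2*k) * (1+X)^(m+1-k)))) (m+1)]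
  have hmid : ∀ k ∈ Finset.range (m+1),
      (sc (m+1) k : ℚ[X]) * (X^(2*k+1) * (1+X)^(m+1-k))
        = (1+X) * ((sc m k : ℚ[X]) * (X^(2*k+1) * (1+X)^(m-k)))
          + X * ((tc (m+1) k : ℚ[X]) * (X^(2*k) * (1+X)^(m+1-k))) := by
    intro k hk
    rw [Finset.mem_range] at hk
    have h1 : m+1-k = (m-k)+1 := by omega
    rw [sc_pascal, h1, Nat.cast_add]
    push_cast
    ring
  rw [Finset.sum_congr rfl hmid]
  have hlast : (sc (m+1) (m+1) : ℚ[X]) * (X^(2*(m+1)+1) * (1+X)^(m+1-(m+1)))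
      = X * ((tc (m+1) (m+1) : ℚ[X]) * (X^(2*(m+1)) * (1+X)^(m+1-(m+1)))) := by
    rw [sc_self, tc_self_succ]
    ring
  rw [Finset.sum_add_distrib, hlast]
  ring

lemma TS_closed (m : ℕ) : Tp m = (1+X)^(2*m) + 1 ∧ Sp m = (1+X)^(2*m+1) - 1 := by
  induction m with
  | zero =>
    constructor
    · unfold Tp
      rw [Finset.sum_range_one]
      rw [tc_zero]
      norm_num
    · unfold Sp
      rw [Finset.sum_range_one]
      have : sc 0 0 = 1 := sc_self 0
      rw [this]
      norm_num
  | succ m ihm =>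
    obtain ⟨hT, hS⟩ := ihm
    have hT1 : Tp (m+1) = (1+X)^(2*(m+1)) + 1 := by
      rw [Tp_step, hT, hS]
      have h1 : 2*(m+1) = 2*m+2 := by ring
      rw [h1]
      ring
    refine ⟨hT1, ?_⟩
    rw [Sp_step, hS, hT1]
    have h1 : 2*(m+1)+1 = 2*m+3 := by ring
    have h2 : 2*(m+1) = 2*m+2 := by ring
    rw [h1, h2]
    ring

/-- Expansion of the Dehn–Sommerville row polynomials in the `vcol` basis. -/
lemma fpoly_eq (n i : ℕ) (hi : i ≤ n) :
    (1+X)^(2*n+1-i) - (1+X)^i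
      = ∑ k ∈ Finset.range (n-i+1), (sc (n-i) k : ℚ[X]) * vcol n k := by
  have hS := (TS_closed (n-i)).2
  have key : (1+X)^i * Sp (n-i) = (1+X)^(2*n+1-i) - (1+X)^i := by
    rw [hS]
    have h1 : 2*n+1-i = (2*(n-i)+1) + i := by omega
    rw [h1, pow_add]
    ring
  rw [← key]
  unfold Sp
  rw [Finset.mul_sum]
  apply Finset.sum_congr rfl
  intro k hk
  rw [Finset.mem_range] at hk
  unfold vcol
  have h1 : n - k = (n-i-k) + i := by omega
  rw [h1, pow_add]
  ring


/-! ### The change of basis bridge -/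

lemma filter_range_le (n a : ℕ) (h : a ≤ n) :
    (Finset.range (n+1)).filter (· ≤ a) = Finset.range (a+1) := by
  ext x
  simp only [Finset.mem_filter, Finset.mem_range]
  omega

lemma det_bridge (n : ℕ) (E : Fin (n+1) → ℕ) :
    (Matrix.det (Matrix.of fun i j : Fin (n+1) =>
        (((1+X)^(2*n+1-(i:ℕ)) - (1+X)^(i:ℕ) : ℚ[X])).coeff (E j)) ≠ 0)
      ↔ Matrix.det (Matrix.of fun k j : Fin (n+1) => (vcol n (k:ℕ)).coeff (E j)) ≠ 0 := by
  classical
  set A : Matrix (Fin (n+1)) (Fin (n+1)) ℚ := Matrix.of fun i j =>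
    (((1+X)^(2*n+1-(i:ℕ)) - (1+X)^(i:ℕ) : ℚ[X])).coeff (E j) with hA
  set Nm : Matrix (Fin (n+1)) (Fin (n+1)) ℚ := Matrix.of fun k j =>
    (vcol n (k:ℕ)).coeff (E j) with hNm
  set P : Matrix (Fin (n+1)) (Fin (n+1)) ℚ := Matrix.of fun i k =>
    if (k:ℕ) ≤ n - (i:ℕ) then (sc (n-(i:ℕ)) (k:ℕ) : ℚ) else 0 with hP
  have hfact : A = P * Nm := by
    ext i j
    rw [Matrix.mul_apply]
    show (((1+X)^(2*n+1-(i:ℕ)) - (1+X)^(i:ℕ) : ℚ[X])).coeff (E j) = _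
    rw [fpoly_eq n (i:ℕ) (Nat.le_of_lt_succ i.isLt)]
    rw [Polynomial.finset_sum_coeff]
    have hterm : ∀ k ∈ Finset.range (n-(i:ℕ)+1),
        ((sc (n-(i:ℕ)) k : ℚ[X]) * vcol n k).coeff (E j)
          = (sc (n-(i:ℕ)) k : ℚ) * (vcol n k).coeff (E j) := by
      intro k _
      rw [← Polynomial.C_eq_natCast, Polynomial.coeff_C_mul]
    rw [Finset.sum_congr rfl hterm]
    have hrhs : ∑ k : Fin (n+1), P i k * Nm k j
        = ∑ k ∈ Finset.range (n+1),
            (if k ≤ n - (i:ℕ) then (sc (n-(i:ℕ)) k : ℚ) else 0) * (vcol n k).coeff (E j) := by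
      rw [← Fin.sum_univ_eq_sum_range
        (fun k => (if k ≤ n - (i:ℕ) then (sc (n-(i:ℕ)) k : ℚ) else 0) * (vcol n k).coeff (E j))]
      apply Finset.sum_congr rfl
      intro k _
      rfl
    have hpush : ∀ k ∈ Finset.range (n+1),
        (if k ≤ n - (i:ℕ) then (sc (n-(i:ℕ)) k : ℚ) else 0) * (vcol n k).coeff (E j)
          = (if k ≤ n - (i:ℕ) then (sc (n-(i:ℕ)) k : ℚ) * (vcol n k).coeff (E j) else 0) := by
      intro k _
      split <;> simp
    rw [hrhs, Finset.sum_congr rfl hpush]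
    rw [← Finset.sum_subset
      (show Finset.range (n-(i:ℕ)+1) ⊆ Finset.range (n+1) by
        intro x hx
        simp only [Finset.mem_range] at *
        omega)
      (by
        intro x hx hnx
        rw [if_neg]
        simp only [Finset.mem_range] at hx hnx
        omega)]
    apply Finset.sum_congr rfl
    intro k hk
    rw [if_pos]
    simp only [Finset.mem_range] at hk
    omega
  have hdetP : P.det ≠ 0 := by
    set Q : Matrix (Fin (n+1)) (Fin (n+1)) ℚ := Matrix.of fun i k => P i (Fin.rev k) with hQ
    have hQtri : Q.BlockTriangular id := by
      intro i j hij
      show (if ((Fin.rev j):ℕ) ≤ n - (i:ℕ) then (sc (n-(i:ℕ)) ((Fin.rev j):ℕ) : ℚ) else 0) = 0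
      rw [if_neg]
      have h1 : ((Fin.rev j):ℕ) = n - (j:ℕ) := by
        rw [Fin.val_rev]
        omega
      have h2 : (j:ℕ) < (i:ℕ) := hij
      have h3 : (i:ℕ) < n+1 := i.isLt
      rw [h1]
      omega
    have hQdiag : ∀ i : Fin (n+1), Q i i = 1 := by
      intro i
      show (if ((Fin.rev i):ℕ) ≤ n - (i:ℕ) then (sc (n-(i:ℕ)) ((Fin.rev i):ℕ) : ℚ) else 0) = 1
      have h1 : ((Fin.rev i):ℕ) = n - (i:ℕ) := by
        rw [Fin.val_rev]
        omega
      rw [h1, if_pos (le_refl _), sc_self]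
      norm_num
    have hQdet : Q.det = 1 := by
      rw [Matrix.det_of_upperTriangular hQtri]
      simp [hQdiag]
    have hPQ : P = Q.submatrix id ⇑(Fin.revPerm : Equiv.Perm (Fin (n+1))) := by
      ext i k
      show P i k = Q i (Fin.rev k)
      show P i k = P i (Fin.rev (Fin.rev k))
      rw [Fin.rev_rev]
    rw [hPQ, Matrix.det_permute', hQdet]
    simp only [mul_one]
    rcases Int.units_eq_one_or (Equiv.Perm.sign (Fin.revPerm : Equiv.Perm (Fin (n+1)))) with h | h <;>
      rw [h] <;> norm_num
  rw [hfact, Matrix.det_mul]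
  constructor
  · intro h h'
    exact h (by rw [h', mul_zero])
  · intro h
    exact mul_ne_zero hdetP h


/-! ### Counting upsteps -/

section Dyck
open DyckStep List

lemma count_UD (l : List DyckStep) : l.count U + l.count D = l.length := by
  induction l with
  | nil => simp
  | cons a t ih => cases a <;> simp [List.count_cons] <;> omega

lemma count_U_eq_card (l : List DyckStep) :
    l.count U = ((Finset.range l.length).filter (fun j => l.getD j D = U)).card := by
  induction l using List.reverseRecOn with
  | nil => simp
  | append_singleton l a ih =>
    rw [List.count_append, List.length_append]
    simp only [List.length_singleton]
    rw [Finset.range_add_one, Finset.filter_insert]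
    have hgetD_last : (l ++ [a]).getD l.length D = a := by
      rw [List.getD_eq_getElem?_getD, List.getElem?_append_right (le_refl _)]
      simp
    have hfilter : (Finset.range l.length).filter (fun j => (l ++ [a]).getD j D = U)
        = (Finset.range l.length).filter (fun j => l.getD j D = U) := by
      apply Finset.filter_congr
      intro j hj
      rw [Finset.mem_range] at hj
      rw [List.getD_eq_getElem?_getD, List.getD_eq_getElem?_getD,
        List.getElem?_append_left (by omega)]
    rw [hfilter]
    cases a with
    | U =>
      rw [if_pos hgetD_last]
      rw [Finset.card_insert_of_notMem (by simp)]
      rw [ih]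
      have h1 : List.count U [U] = 1 := by decide
      rw [h1]
    | D =>
      have hne : ¬ ((l ++ [D]).getD l.length D = U) := by
        rw [hgetD_last]
        exact fun h => by cases h
      rw [if_neg hne, ih]
      have h1 : List.count U [D] = 0 := by decide
      rw [h1]
      omega

lemma count_take_card (l : List DyckStep) (i : ℕ) :
    (l.take i).count U
      = ((Finset.range (min i l.length)).filter (fun j => l.getD j D = U)).card := by
  rw [count_U_eq_card (l.take i), List.length_take]
  have hfilter : (Finset.range (min i l.length)).filter (fun j => (l.take i).getD j D = U)
      = (Finset.range (min i l.length)).filter (fun j => l.getD j D = U) := by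
    apply Finset.filter_congr
    intro j hj
    rw [Finset.mem_range] at hj
    rw [List.getD_eq_getElem?_getD, List.getD_eq_getElem?_getD, List.getElem?_take,
      if_pos (by omega)]
  rw [hfilter]

end Dyck

end DSAux

open DyckStep

/-- The set of 1-indexed positions at which a Dyck word has an upstep `U`. -/
def DyckWord.upstepSet (w : DyckWord) : Finset ℕ :=
  (Finset.Icc 1 w.toList.length).filter fun p => w.toList.getD (p - 1) D = U

/-- The determinant of the `(n+1)×(n+1)` submatrix of the Dehn–Sommerville matrix `M_{2n}`
on the columns labeled by `B` (entry in row `i` and column labeled `b`: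
`C(2n+1-i, 2n+2-b) - C(i, 2n+2-b)`), where the columns of `B` are taken in
increasing order. -/
def dsDetEven (n : ℕ) (B : Finset ℕ) (h : B.card = n + 1) : ℤ :=
  Matrix.det fun i k : Fin (n + 1) =>
    (Nat.choose (2 * n + 1 - (i : ℕ)) (2 * n + 2 - (B.orderIsoOfFin h k : ℕ)) : ℤ)
      - (Nat.choose (i : ℕ) (2 * n + 2 - (B.orderIsoOfFin h k : ℕ)) : ℤ)

/-- **Theorem.** Let `n ≥ 1` and let `B` be an `(n+1)`-element subset of `{1,…,2n+1}`.
The submatrix of `M_{2n}` on the columns labeled by `B` has nonzero determinant iff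
there is a Dyck word of length `2n+2` whose upstep set is exactly `B`. -/
theorem dsEven_basis_iff_dyck (n : ℕ) (hn : 1 ≤ n) (B : Finset ℕ)
    (hB : B.card = n + 1) (hsub : B ⊆ Finset.Icc 1 (2 * n + 1)) :
    dsDetEven n B hB ≠ 0
      ↔ ∃ w : DyckWord, w.toList.length = 2 * n + 2 ∧ w.upstepSet = B := by
  classical
  set β : Fin (n+1) ↪o ℕ := B.orderEmbOfFin hB with hβ
  have hmem : ∀ k : Fin (n+1), (β k : ℕ) ∈ B := fun k => Finset.orderEmbOfFin_mem B hB k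
  have hsm : StrictMono β := OrderEmbedding.strictMono β
  have hrange : ∀ k : Fin (n+1), 1 ≤ β k ∧ β k ≤ 2*n+1 := fun k =>
    Finset.mem_Icc.mp (hsub (hmem k))
  have hge : ∀ k : Fin (n+1), (k:ℕ) + 1 ≤ β k := by
    have key : ∀ t (ht : t < n+1), t + 1 ≤ β ⟨t, ht⟩ := by
      intro t
      induction t with
      | zero => intro ht; exact (hrange ⟨0, ht⟩).1
      | succ t iht =>
        intro ht
        have h1 := iht (by omega)
        have h2 : β ⟨t, by omega⟩ < β ⟨t+1, ht⟩ := hsm (Fin.mk_lt_mk.mpr (by omega))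
        omega
    intro k
    have := key k.val k.isLt
    simpa using this
  have hsurj : ∀ x ∈ B, ∃ k : Fin (n+1), (β k : ℕ) = x := by
    intro x hx
    obtain ⟨k, hk⟩ := (B.orderIsoOfFin hB).surjective ⟨x, hx⟩
    refine ⟨k, ?_⟩
    rw [hβ, ← Finset.coe_orderIsoOfFin_apply, hk]
  set E : Fin (n+1) → ℕ := fun j => 2*n+2 - (β j : ℕ) with hE
  -- counting function
  set cnt : ℕ → ℕ := fun M => ((Finset.range M).filter (fun j => j+1 ∈ B)).card with hcnt
  have hcnt_full : cnt (2*n+2) = n+1 := by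
    show ((Finset.range (2*n+2)).filter (fun j => j+1 ∈ B)).card = n+1
    rw [← hB]
    refine Finset.card_bij' (fun j _ => j+1) (fun x _ => x-1) ?_ ?_ ?_ ?_
    · intro a ha
      exact (Finset.mem_filter.mp ha).2
    · intro x hx
      have hx' := Finset.mem_Icc.mp (hsub hx)
      rw [Finset.mem_filter, Finset.mem_range]
      refine ⟨by omega, ?_⟩
      rw [Nat.sub_add_cancel (by omega)]
      exact hx
    · intro a ha
      omega
    · intro x hx
      have hx' := Finset.mem_Icc.mp (hsub hx)
      omega
  -- reverse injection: if β k > M then cnt M ≤ k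
  have hcnt_rev : ∀ (M : ℕ) (k : Fin (n+1)), M < (β k : ℕ) → cnt M ≤ (k:ℕ) := by
    intro M k hMk
    have hinj : cnt M ≤ (Finset.range (k:ℕ)).card := by
      apply Finset.card_le_card_of_injOn
        (fun j => if h : j+1 ∈ B then (((B.orderIsoOfFin hB).symm ⟨j+1, h⟩ : Fin (n+1)) : ℕ) else 0)
      · intro j hj
        rw [Finset.mem_coe, Finset.mem_filter, Finset.mem_range] at hj
        obtain ⟨hjM, hjB⟩ := hj
        simp only [dif_pos hjB, Finset.mem_coe, Finset.mem_range]
        set k' : Fin (n+1) := (B.orderIsoOfFin hB).symm ⟨j+1, hjB⟩ with hk'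
        have hval : (β k' : ℕ) = j+1 := by
          rw [hβ, ← Finset.coe_orderIsoOfFin_apply, hk', OrderIso.apply_symm_apply]
        have : β k' < β k := by omega
        exact hsm.lt_iff_lt.mp this
      · intro j hj j' hj' heq
        rw [Finset.mem_coe, Finset.mem_filter] at hj hj'
        simp only [dif_pos hj.2, dif_pos hj'.2] at heq
        have h1 : ((B.orderIsoOfFin hB).symm ⟨j+1, hj.2⟩ : Fin (n+1))
            = ((B.orderIsoOfFin hB).symm ⟨j'+1, hj'.2⟩ : Fin (n+1)) := Fin.ext heq
        have h2 := congrArg (fun z => ((B.orderIsoOfFin hB) z : ℕ)) h1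
        simp only [OrderIso.apply_symm_apply] at h2
        omega
    simpa using hinj
  -- forward injection: Dyck condition gives cnt lower bound
  have hcnt_ge : (∀ k : Fin (n+1), (β k : ℕ) ≤ 2*(k:ℕ)+1) →
      ∀ M ≤ 2*n+2, M ≤ 2 * cnt M := by
    intro hdy M hM
    have hinj : (Finset.range (min ((M+1)/2) (n+1))).card ≤ cnt M := by
      apply Finset.card_le_card_of_injOn
        (fun t => if h : t < n+1 then (β ⟨t, h⟩ : ℕ) - 1 else 0)
      · intro t ht
        rw [Finset.mem_coe, Finset.mem_range] at ht
        have ht1 : t < n+1 := by omega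
        simp only [dif_pos ht1, Finset.mem_coe, Finset.mem_filter, Finset.mem_range]
        have h1 := hdy ⟨t, ht1⟩
        have h2 := hge ⟨t, ht1⟩
        simp only at h1 h2
        constructor
        · omega
        · rw [Nat.sub_add_cancel (by omega)]
          exact hmem ⟨t, ht1⟩
      · intro t ht t' ht' heq
        rw [Finset.mem_coe, Finset.mem_range] at ht ht'
        have ht1 : t < n+1 := by omega
        have ht1' : t' < n+1 := by omega
        simp only [dif_pos ht1, dif_pos ht1'] at heq
        have h2 := hge ⟨t, ht1⟩
        have h2' := hge ⟨t', ht1'⟩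
        simp only at h2 h2'
        have hbeq : β ⟨t, ht1⟩ = β ⟨t', ht1'⟩ := by omega
        have h3 := hsm.injective hbeq
        simpa using congrArg Fin.val h3
    rw [Finset.card_range] at hinj
    omega
  -- determinant side
  have hdet_iff_band : (dsDetEven n B hB ≠ 0) ↔ (∀ k : Fin (n+1), (β k : ℕ) ≤ 2*(k:ℕ)+1) := by
    have hcast : ((dsDetEven n B hB : ℤ) : ℚ)
        = (Matrix.of fun i j : Fin (n+1) =>
            (((1+Polynomial.X)^(2*n+1-(i:ℕ)) - (1+Polynomial.X)^(i:ℕ) : Polynomial ℚ)).coeff (E j)).det := by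
      set M0 : Matrix (Fin (n+1)) (Fin (n+1)) ℤ := fun i k =>
        (Nat.choose (2*n+1-(i:ℕ)) (2*n+2 - (B.orderIsoOfFin hB k : ℕ)) : ℤ)
          - (Nat.choose (i:ℕ) (2*n+2 - (B.orderIsoOfFin hB k : ℕ)) : ℤ) with hM0
      have h0 : dsDetEven n B hB = M0.det := rfl
      rw [h0, show ((M0.det : ℤ) : ℚ) = (Int.castRingHom ℚ) M0.det from rfl, RingHom.map_det]
      congr 1
      ext i j
      have hEj : E j = 2*n+2 - (B.orderIsoOfFin hB j : ℕ) := by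
        show 2*n+2 - (β j : ℕ) = 2*n+2 - (B.orderIsoOfFin hB j : ℕ)
        rw [hβ, ← Finset.coe_orderIsoOfFin_apply]
      show ((M0 i j : ℤ) : ℚ)
          = (((1+Polynomial.X)^(2*n+1-(i:ℕ)) - (1+Polynomial.X)^(i:ℕ) : Polynomial ℚ)).coeff (E j)
      rw [Polynomial.coeff_sub, Polynomial.coeff_one_add_X_pow, Polynomial.coeff_one_add_X_pow, hEj]
      show ((((2*n+1-(i:ℕ)).choose (2*n+2 - (B.orderIsoOfFin hB j : ℕ)) : ℤ)
          - ((i:ℕ).choose (2*n+2 - (B.orderIsoOfFin hB j : ℕ)) : ℤ) : ℤ) : ℚ) = _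
      rw [Int.cast_sub, Int.cast_natCast, Int.cast_natCast]
    have h1 : dsDetEven n B hB ≠ 0 ↔
        (Matrix.of fun i j : Fin (n+1) =>
            (((1+Polynomial.X)^(2*n+1-(i:ℕ)) - (1+Polynomial.X)^(i:ℕ) : Polynomial ℚ)).coeff (E j)).det ≠ 0 := by
      rw [← hcast]
      exact not_congr (Int.cast_eq_zero (α := ℚ)).symm
    rw [h1, DSAux.det_bridge n E]
    set e : Fin (n+1) → ℕ := fun i => E (Fin.rev i) with he
    have he_val : ∀ i : Fin (n+1), e i = 2*n+2 - (β (Fin.rev i) : ℕ) := fun i => rfl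
    have hrev_val : ∀ i : Fin (n+1), ((Fin.rev i : Fin (n+1)) : ℕ) = n - (i:ℕ) := by
      intro i
      rw [Fin.val_rev]
      omega
    have hrev : DSAux.Mfam n n e
        = (Matrix.transpose (Matrix.of fun k j : Fin (n+1) => (DSAux.vcol n (k:ℕ)).coeff (E j))).submatrix
            (⇑(Fin.revPerm : Equiv.Perm (Fin (n+1)))) id := by
      ext i k
      rfl
    have hdetrev : (DSAux.Mfam n n e).det
        = ((Equiv.Perm.sign (Fin.revPerm : Equiv.Perm (Fin (n+1))) : ℤ) : ℚ)
          * (Matrix.of fun k j : Fin (n+1) => (DSAux.vcol n (k:ℕ)).coeff (E j)).det := by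
      rw [hrev, Matrix.det_permute, Matrix.det_transpose]
    have h2 : (Matrix.of fun k j : Fin (n+1) => (DSAux.vcol n (k:ℕ)).coeff (E j)).det ≠ 0
        ↔ (DSAux.Mfam n n e).det ≠ 0 := by
      rw [hdetrev]
      rcases Int.units_eq_one_or (Equiv.Perm.sign (Fin.revPerm : Equiv.Perm (Fin (n+1)))) with h | h <;>
        rw [h] <;> simp
    rw [h2]
    have he_sm : StrictMono e := by
      intro a b hab
      have hab' : (a:ℕ) < (b:ℕ) := hab
      have h3 : Fin.rev b < Fin.rev a := by
        rw [Fin.lt_def, hrev_val, hrev_val]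
        have hb := b.isLt
        omega
      have h4 : β (Fin.rev b) < β (Fin.rev a) := hsm h3
      have h5 := (hrange (Fin.rev a)).2
      show e a < e b
      rw [he_val, he_val]
      omega
    have he_hi : ∀ k : Fin (n+1), e k ≤ n + (k:ℕ) + 1 := by
      intro k
      have h3 := hge (Fin.rev k)
      rw [hrev_val] at h3
      rw [he_val]
      have hk := k.isLt
      omega
    constructor
    · intro hdet k
      by_contra hcon
      push_neg at hcon
      apply hdet
      apply DSAux.det_eq_zero_low e he_sm.monotone (Fin.rev k)
      have h3 : e (Fin.rev k) = 2*n+2 - (β k : ℕ) := by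
        rw [he_val, Fin.rev_rev]
      have h4 := (hrange k).2
      have hk := k.isLt
      rw [h3, hrev_val]
      omega
    · intro hband
      have hlo : ∀ k : Fin (n+1), 2*(k:ℕ)+1 ≤ e k := by
        intro k
        have h3 := hband (Fin.rev k)
        rw [hrev_val] at h3
        have h4 := (hrange (Fin.rev k)).1
        have hk := k.isLt
        rw [he_val]
        omega
      exact ne_of_gt (DSAux.det_pos_aux (n+n) n n e (by omega) (le_refl n) he_sm hlo he_hi)
  -- combinatorial side
  have hband_iff_dyck : (∀ k : Fin (n+1), (β k : ℕ) ≤ 2*(k:ℕ)+1)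
      ↔ (∃ w : DyckWord, w.toList.length = 2*n+2 ∧ w.upstepSet = B) := by
    constructor
    · intro hdy
      set L : List DyckStep := (List.range (2*n+2)).map (fun p => if p+1 ∈ B then U else D) with hL
      have hLlen : L.length = 2*n+2 := by simp [hL]
      have hLget : ∀ j, j < 2*n+2 → L.getD j D = if j+1 ∈ B then U else D := by
        intro j hj
        rw [hL, List.getD_eq_getElem?_getD, List.getElem?_map, List.getElem?_range hj]
        rfl
      have hcountU : ∀ i, (L.take i).count U = cnt (min i (2*n+2)) := by
        intro i
        rw [DSAux.count_take_card L i, hLlen]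
        show _ = ((Finset.range (min i (2*n+2))).filter (fun j => j+1 ∈ B)).card
        congr 1
        apply Finset.filter_congr
        intro j hj
        rw [Finset.mem_range] at hj
        rw [hLget j (by omega)]
        by_cases hjB : j+1 ∈ B
        · rw [if_pos hjB]
          exact iff_of_true rfl hjB
        · rw [if_neg hjB]
          exact iff_of_false (fun h => by cases h) hjB
      have htakefull : L.take (2*n+2) = L := by
        rw [← hLlen]
        exact List.take_length
      have hfullU : L.count U = n+1 := by
        have h1 := hcountU (2*n+2)
        rw [htakefull, min_self] at h1
        rw [h1, hcnt_full]
      have hfullD : L.count D = n+1 := by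
        have h1 := DSAux.count_UD L
        omega
      refine ⟨⟨L, by rw [hfullU, hfullD], ?_⟩, ?_, ?_⟩
      · intro i
        have h1 := DSAux.count_UD (L.take i)
        have h2 : (L.take i).length = min i (2*n+2) := by rw [List.length_take, hLlen]
        have h3 := hcountU i
        have h4 := hcnt_ge hdy (min i (2*n+2)) (by omega)
        omega
      · exact hLlen
      · ext p
        show p ∈ (Finset.Icc 1 L.length).filter (fun p => L.getD (p-1) D = U) ↔ p ∈ B
        rw [Finset.mem_filter, Finset.mem_Icc, hLlen]
        constructor
        · rintro ⟨⟨hp1, hp2⟩, hpU⟩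
          rw [hLget (p-1) (by omega)] at hpU
          have h5 : p - 1 + 1 = p := by omega
          rw [h5] at hpU
          by_cases hpB : p ∈ B
          · exact hpB
          · rw [if_neg hpB] at hpU
            cases hpU
        · intro hpB
          have h6 := Finset.mem_Icc.mp (hsub hpB)
          refine ⟨⟨by omega, by omega⟩, ?_⟩
          rw [hLget (p-1) (by omega)]
          have h5 : p - 1 + 1 = p := by omega
          rw [h5, if_pos hpB]
    · rintro ⟨w, hwlen, hwup⟩ k
      set i := 2*(k:ℕ)+1 with hi
      have hk := k.isLt
      have h1 := w.count_D_le_count_U i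
      have h2 := DSAux.count_UD (w.toList.take i)
      have h3 : (w.toList.take i).length = i := by
        rw [List.length_take, hwlen]
        omega
      have h4 : (w.toList.take i).count U ≤ cnt i := by
        rw [DSAux.count_take_card w.toList i]
        have h5 : min i w.toList.length = i := by
          rw [hwlen]
          omega
        rw [h5]
        apply Finset.card_le_card
        intro j hj
        rw [Finset.mem_filter, Finset.mem_range] at hj
        rw [Finset.mem_filter, Finset.mem_range]
        refine ⟨hj.1, ?_⟩
        have hup : j+1 ∈ w.upstepSet := by
          unfold DyckWord.upstepSet
          rw [Finset.mem_filter, Finset.mem_Icc, hwlen]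
          refine ⟨⟨by omega, by omega⟩, ?_⟩
          have h6 : j + 1 - 1 = j := by omega
          rw [h6]
          exact hj.2
        rw [hwup] at hup
        exact hup
      have h6 : (k:ℕ)+1 ≤ cnt i := by omega
      by_contra hcon
      push_neg at hcon
      have h7 := hcnt_rev i k (by omega)
      omega
  rw [show 2 * n + 2 = 2*n+2 from rfl]
  exact hdet_iff_band.trans hband_iff_dyck
end

section
/- Let n ≥ 1 and let B be an (n+1)-element subset of {1, 2, ..., 2n+1}. Then the (n+1)×(n+1) submatrix of M_{2n} on the columns labeled by B has nonzero determinant if and only if 1 ∈ B and the n×n submatrix of M_{2n-1} on the columns labeled by {b-1 : b ∈ B, b ≠ 1} has nonzero determinant. Consequently, B ↦ {b-1 : b ∈ B, b ≠ 1} is a bijection from the set of (n+1)-subsets of {1,...,2n+1} giving invertible submatrices of M_{2n} onto the set of n-subsets of {1,...,2n} giving invertible submatrices of M_{2n-1}. -/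
/-- The determinant of the `n×n` submatrix of the Dehn–Sommerville matrix `M_{2n-1}`
on the columns labeled by `B` (entry in row `i` and column labeled `b`:
`C(2n-i, 2n+1-b) - C(i, 2n+1-b)`), columns taken in increasing order. -/
def dsDetOdd (n : ℕ) (B : Finset ℕ) (h : B.card = n) : ℤ :=
  Matrix.det fun i k : Fin n =>
    (Nat.choose (2 * n - (i : ℕ)) (2 * n + 1 - (B.orderIsoOfFin h k : ℕ)) : ℤ)
      - (Nat.choose (i : ℕ) (2 * n + 1 - (B.orderIsoOfFin h k : ℕ)) : ℤ)


open Finset Polynomial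


-- (a - m) * C(a, m) = a * C(a-1, m), in the (a+1) form
lemma choose_sub_mul (a m : ℕ) :
    ((a : ℤ) + 1 - m) * ((a + 1).choose m) = (a + 1) * (a.choose m) := by
  rcases le_or_gt m (a + 1) with h | h
  · have := Nat.choose_mul_succ_eq a m
    have h2 : ((a.choose m : ℤ)) * (a + 1) = ((a+1).choose m : ℤ) * ((a:ℤ) + 1 - m) := by
      have := congrArg (Nat.cast : ℕ → ℤ) this
      push_cast [Nat.cast_sub h] at this ⊢
      linarith [this]
    linarith [h2]
  · rw [Nat.choose_eq_zero_of_lt h, Nat.choose_eq_zero_of_lt (by omega)]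
    ring

-- the key identity
lemma keyId (A c m : ℕ) :
    ((A : ℤ) + c + 2 - m) * (((A+1).choose m : ℤ) - ((c+1).choose m))
      = ((c : ℤ)+1) * (((A+1).choose m : ℤ) - (c.choose m))
        + ((A : ℤ)+1) * ((A.choose m : ℤ) - ((c+1).choose m)) := by
  have h1 := choose_sub_mul A m
  have h2 := choose_sub_mul c m
  ring_nf
  ring_nf at h1 h2
  linarith [h1, h2]


lemma altsum (N m : ℕ) :
    ∑ k ∈ range (N+1), (-1 : ℤ)^(N-k) * (N.choose k) * (k.choose m)
      = if m = N then 1 else 0 := by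
  have hx : ((X + 1 : ℤ[X]) + (-1))^N = X^N := by ring
  have h := add_pow (X + 1 : ℤ[X]) (-1) N
  rw [hx] at h
  have hc := congrArg (fun p : ℤ[X] => p.coeff m) h
  simp only [finset_sum_coeff] at hc
  rw [coeff_X_pow] at hc
  have : ∀ k ∈ range (N+1),
      ((X + 1 : ℤ[X])^k * (-1)^(N-k) * (N.choose k : ℤ[X])).coeff m
        = (-1 : ℤ)^(N-k) * (N.choose k) * (k.choose m) := by
    intro k _
    have : ((X + 1 : ℤ[X])^k * (-1)^(N-k) * (N.choose k : ℤ[X]))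
        = Polynomial.C ((-1 : ℤ)^(N-k) * (N.choose k)) * (X+1)^k := by
      rw [map_mul, map_pow, map_neg, map_one, Polynomial.C_eq_natCast]
      ring
    rw [this, coeff_C_mul, coeff_X_add_one_pow]
  exact (Finset.sum_congr rfl this).symm.trans hc.symm

lemma neg_one_pow_sub (M j : ℕ) (hj : j ≤ 2*M+1) :
    (-1 : ℤ)^(2*M+1-j) = -(-1)^j := by
  have h1 : (-1 : ℤ)^(2*M+1-j) * (-1)^j = -1 := by
    rw [← pow_add, Nat.sub_add_cancel hj]
    simp [pow_add, pow_mul]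
  have h2 : (-1 : ℤ)^j * (-1)^j = 1 := by
    rw [← pow_add]
    exact Even.neg_one_pow ⟨j, rfl⟩
  calc (-1:ℤ)^(2*M+1-j) = (-1)^(2*M+1-j) * ((-1)^j * (-1)^j) := by rw [h2, mul_one]
  _ = ((-1)^(2*M+1-j) * (-1)^j) * (-1)^j := by ring
  _ = -(-1)^j := by rw [h1]; ring

lemma depSum (n m : ℕ) (hm : m ≠ 2*n+1) :
    ∑ i ∈ range (n+1),
      (-1:ℤ)^i * ((2*n+1).choose i) * (((2*n+1-i).choose m : ℤ) - (i.choose m)) = 0 := by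
  set N := 2*n+1 with hN
  set f : ℕ → ℤ := fun k => (-1:ℤ)^(N-k) * (N.choose k) * (k.choose m) with hf
  have h0 : ∑ k ∈ range (N+1), f k = 0 := by
    rw [altsum N m, if_neg hm]
  have hsplit : ∑ k ∈ range ((n+1)+(n+1)), f k
      = ∑ k ∈ range (n+1), f k + ∑ k ∈ range (n+1), f ((n+1)+k) :=
    Finset.sum_range_add f (n+1) (n+1)
  have hrefl : ∑ j ∈ range (n+1), f ((n+1)+(n+1-1-j)) = ∑ k ∈ range (n+1), f ((n+1)+k) :=
    Finset.sum_range_reflect (fun k => f ((n+1)+k)) (n+1)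
  have hidx : ∑ j ∈ range (n+1), f ((n+1)+(n+1-1-j)) = ∑ j ∈ range (n+1), f (N-j) := by
    refine Finset.sum_congr rfl fun j hj => ?_
    rw [mem_range] at hj
    congr 1
    omega
  have hcomb : ∑ k ∈ range ((n+1)+(n+1)), f k
      = ∑ j ∈ range (n+1), (f j + f (N-j)) := by
    rw [hsplit, ← hrefl, hidx, Finset.sum_add_distrib]
  have hNN : (n+1)+(n+1) = N+1 := by omega
  rw [hNN, h0] at hcomb
  have hterm : ∀ j ∈ range (n+1),
      f j + f (N-j) = (-1:ℤ)^j * ((2*n+1).choose j) * (((2*n+1-j).choose m : ℤ) - (j.choose m)) := by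
    intro j hj
    rw [mem_range] at hj
    have hjN : j ≤ N := by omega
    have e1 : N - (N - j) = j := by omega
    have e2 : N.choose (N - j) = N.choose j := Nat.choose_symm hjN
    have e3 : (-1:ℤ)^(N-j) = -(-1:ℤ)^j := neg_one_pow_sub n j hjN
    simp only [hf, e1, e2, e3]
    ring
  rw [Finset.sum_congr rfl hterm] at hcomb
  linarith [hcomb]

lemma evenDetZero (n : ℕ) (B : Finset ℕ) (hB : B.card = n+1)
    (hsub : B ⊆ Finset.Icc 1 (2*n+1)) (h1 : 1 ∉ B) : dsDetEven n B hB = 0 := by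
  classical
  rw [dsDetEven]
  apply Matrix.exists_vecMul_eq_zero_iff.mp
  refine ⟨fun i => (-1:ℤ)^(i:ℕ) * ((2*n+1).choose i), ?_, ?_⟩
  · intro h
    have := congrFun h 0
    simp at this
  · funext k
    simp only [Matrix.vecMul, dotProduct, Pi.zero_apply]
    have : ∀ i : Fin (n+1),
        ((-1:ℤ)^(i:ℕ) * ((2*n+1).choose (i:ℕ))) *
          (((2*n+1-(i:ℕ)).choose (2*n+2 - (B.orderIsoOfFin hB k : ℕ)) : ℤ)
            - ((i:ℕ).choose (2*n+2 - (B.orderIsoOfFin hB k : ℕ))))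
        = (fun j : ℕ => (-1:ℤ)^j * ((2*n+1).choose j) *
            (((2*n+1-j).choose (2*n+2 - (B.orderIsoOfFin hB k : ℕ)) : ℤ)
              - (j.choose (2*n+2 - (B.orderIsoOfFin hB k : ℕ))))) (i:ℕ) := by
      intro i; ring
    rw [Finset.sum_congr rfl (fun i _ => this i),
      Fin.sum_univ_eq_sum_range (fun j : ℕ => (-1:ℤ)^j * ((2*n+1).choose j) *
            (((2*n+1-j).choose (2*n+2 - (B.orderIsoOfFin hB k : ℕ)) : ℤ)
              - (j.choose (2*n+2 - (B.orderIsoOfFin hB k : ℕ))))) (n+1)]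
    apply depSum
    have hmem : (B.orderIsoOfFin hB k : ℕ) ∈ B := (B.orderIsoOfFin hB k).2
    have h2 : 2 ≤ (B.orderIsoOfFin hB k : ℕ) := by
      have := hsub hmem
      rw [Finset.mem_Icc] at this
      rcases Nat.lt_or_ge (B.orderIsoOfFin hB k : ℕ) 2 with h | h
      · interval_cases h' : (B.orderIsoOfFin hB k : ℕ)
        · omega
        · exact absurd (h' ▸ hmem) h1
      · exact h
    omega

lemma cardB' (n : ℕ) (B : Finset ℕ) (hB : B.card = n+1) (h1 : 1 ∈ B) :
    ((B.erase 1).image (· - 1)).card = n := by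
  rw [Finset.card_image_of_injOn (fun x hx y hy hxy => by
      have hx1 : x ≠ 1 := (Finset.mem_erase.mp hx).1
      have hy1 : y ≠ 1 := (Finset.mem_erase.mp hy).1
      have hxy' : x - 1 = y - 1 := hxy
      omega),
    Finset.card_erase_of_mem h1, hB]
  omega

lemma evenOddRel (n : ℕ) (hn : 1 ≤ n) (B : Finset ℕ) (hB : B.card = n+1)
    (hsub : B ⊆ Finset.Icc 1 (2*n+1)) (h1 : 1 ∈ B)
    (h' : ((B.erase 1).image (· - 1)).card = n) :
    ∃ c d : ℤ, c ≠ 0 ∧ d ≠ 0 ∧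
      dsDetEven n B hB * c = d * dsDetOdd n ((B.erase 1).image (· - 1)) h' := by
  classical
  set B' : Finset ℕ := (B.erase 1).image (· - 1) with hB'
  set e : Fin (n+1) → ℕ := fun i => B.orderEmbOfFin hB i with he
  have hemem : ∀ i, e i ∈ B := fun i => Finset.orderEmbOfFin_mem B hB i
  have hemono : StrictMono e := (B.orderEmbOfFin hB).strictMono
  have hele : ∀ i, e i ≤ 2*n+1 := fun i => (Finset.mem_Icc.mp (hsub (hemem i))).2
  have hne : B.Nonempty := ⟨1, h1⟩
  have he0 : e 0 = 1 := by
    have h0 := Finset.orderEmbOfFin_zero hB (Nat.succ_pos n)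
    have hmin : B.min' hne = 1 :=
      le_antisymm (Finset.min'_le B 1 h1) ((Finset.mem_Icc.mp (hsub (B.min'_mem hne))).1)
    rw [he]
    show B.orderEmbOfFin hB ⟨0, Nat.succ_pos n⟩ = 1
    rw [h0]
    exact hmin
  have h2le : ∀ k : Fin n, 2 ≤ e k.succ := by
    intro k
    have := hemono (show (0 : Fin (n+1)) < k.succ from Fin.succ_pos k)
    omega
  -- enumeration of B'
  have hb' : ∀ k : Fin n, B'.orderEmbOfFin h' k = e k.succ - 1 := by
    have hmem : ∀ k : Fin n, e k.succ - 1 ∈ B' := by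
      intro k
      rw [hB']
      apply Finset.mem_image_of_mem
      rw [Finset.mem_erase]
      exact ⟨by have := h2le k; omega, hemem k.succ⟩
    have hmono : StrictMono (fun k : Fin n => e k.succ - 1) := by
      intro k l hkl
      show e k.succ - 1 < e l.succ - 1
      have := hemono (show k.succ < l.succ from Fin.succ_lt_succ_iff.mpr hkl)
      have := h2le k
      omega
    intro k
    exact (congrFun (Finset.orderEmbOfFin_unique h' hmem hmono) k).symm
  -- matrices
  set Mn : Matrix (Fin n) (Fin n) ℤ := Matrix.of fun j k : Fin n =>
    ((Nat.choose (2*n+1 - ((j:ℕ)+1)) (2*n+2 - e k.succ) : ℤ)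
      - (Nat.choose ((j:ℕ)+1) (2*n+2 - e k.succ) : ℤ)) with hMn
  set O : Matrix (Fin n) (Fin n) ℤ := Matrix.of fun j k : Fin n =>
    ((Nat.choose (2*n - (j:ℕ)) (2*n+1 - (e k.succ - 1)) : ℤ)
      - (Nat.choose (j:ℕ) (2*n+1 - (e k.succ - 1)) : ℤ)) with hO
  set D : Matrix (Fin n) (Fin n) ℤ :=
    Matrix.diagonal (fun k : Fin n => ((e k.succ - 1 : ℕ) : ℤ)) with hD
  set T : Matrix (Fin n) (Fin n) ℤ := Matrix.diagonal (fun j : Fin n => ((j:ℤ)+1)) +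
    Matrix.of (fun j t : Fin n =>
      if (t:ℕ) = (j:ℕ)+1 then ((2*n - (j:ℕ) : ℕ) : ℤ) else 0) with hT
  -- step 1 : dsDetEven = det Mn
  have step1 : dsDetEven n B hB = Mn.det := by
    have hM : dsDetEven n B hB = (Matrix.of fun i k : Fin (n+1) =>
        ((2*n+1-(i:ℕ)).choose (2*n+2 - e k) : ℤ) - ((i:ℕ).choose (2*n+2 - e k))).det := by
      rw [dsDetEven]
      rfl
    set M : Matrix (Fin (n+1)) (Fin (n+1)) ℤ := Matrix.of fun i k : Fin (n+1) =>
      ((2*n+1-(i:ℕ)).choose (2*n+2 - e k) : ℤ) - ((i:ℕ).choose (2*n+2 - e k)) with hMdef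
    have hcol : ∀ i : Fin (n+1), M i 0 = if i = 0 then 1 else 0 := by
      intro i
      by_cases hi : i = 0
      · subst hi
        rw [if_pos rfl, hMdef]
        simp only [Matrix.of_apply, he0, Fin.val_zero]
        rw [show 2*n+2-1 = 2*n+1 by omega, Nat.sub_zero, Nat.choose_self,
          Nat.choose_eq_zero_of_lt (by omega)]
        norm_num
      · rw [if_neg hi, hMdef]
        simp only [Matrix.of_apply, he0]
        have hi1 : 0 < (i:ℕ) := Fin.pos_of_ne_zero hi
        have hilt := i.isLt
        rw [show 2*n+2-1 = 2*n+1 by omega,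
          Nat.choose_eq_zero_of_lt (show 2*n+1-(i:ℕ) < 2*n+1 by omega),
          Nat.choose_eq_zero_of_lt (show (i:ℕ) < 2*n+1 by omega)]
        norm_num
    rw [hM, Matrix.det_succ_column_zero, Finset.sum_eq_single (0 : Fin (n+1))]
    · rw [hcol 0, if_pos rfl]
      simp only [Fin.val_zero, pow_zero, one_mul, mul_one, Fin.succAbove_zero]
      congr 1
    · intro i _ hne2
      rw [hcol i, if_neg hne2]
      ring
    · intro h
      exact absurd (Finset.mem_univ _) h
  -- step 2 : dsDetOdd = det O
  have step2 : dsDetOdd n B' h' = O.det := by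
    rw [dsDetOdd]
    congr 1
    funext j k
    simp only [Finset.coe_orderIsoOfFin_apply, hb' k, hO, Matrix.of_apply]
  -- step 3 : Mn * D = T * O
  have step3 : Mn * D = T * O := by
    ext j k
    have hj := j.isLt
    have hek2 := h2le k
    have hekle := hele k.succ
    have hL : (Mn * D) j k = Mn j k * ((e k.succ - 1 : ℕ) : ℤ) := by
      rw [hD, Matrix.mul_diagonal]
    have hR : (T * O) j k = ((j:ℤ)+1) * O j k
        + ∑ t : Fin n, (if (t:ℕ) = (j:ℕ)+1 then ((2*n - (j:ℕ) : ℕ) : ℤ) else 0) * O t k := by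
      rw [hT, Matrix.add_mul, Matrix.add_apply, Matrix.diagonal_mul, Matrix.mul_apply]
      simp only [Matrix.of_apply]
    set m : ℕ := 2*n+1 - (e k.succ - 1) with hm
    set A : ℕ := 2*n-1-(j:ℕ) with hA
    have hA1 : 2*n+1 - ((j:ℕ)+1) = A+1 := by omega
    have hA2 : 2*n - (j:ℕ) = A+1 := by omega
    have hm2 : 2*n+2 - e k.succ = m := by omega
    have hcast : ((e k.succ - 1 : ℕ) : ℤ) = (A:ℤ) + (j:ℕ) + 2 - m := by omega
    have hMjk : Mn j k = ((A+1).choose m : ℤ) - (((j:ℕ)+1).choose m : ℤ) := by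
      rw [hMn]
      simp only [Matrix.of_apply]
      rw [hm2, hA1]
    have hOjk : O j k = ((A+1).choose m : ℤ) - (((j:ℕ)).choose m : ℤ) := by
      rw [hO]
      simp only [Matrix.of_apply]
      rw [hA2]
    rcases Nat.lt_or_ge ((j:ℕ)+1) n with hlt | hge
    · have hsum : ∑ t : Fin n, (if (t:ℕ) = (j:ℕ)+1 then ((2*n - (j:ℕ) : ℕ) : ℤ) else 0) * O t k
          = ((2*n - (j:ℕ) : ℕ) : ℤ) * O ⟨(j:ℕ)+1, hlt⟩ k := by
        rw [Finset.sum_eq_single (⟨(j:ℕ)+1, hlt⟩ : Fin n)]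
        · rw [if_pos rfl]
        · intro t _ hne2
          rw [if_neg (fun hc => hne2 (Fin.ext hc)), zero_mul]
        · intro h
          exact absurd (Finset.mem_univ _) h
      have hO2 : O ⟨(j:ℕ)+1, hlt⟩ k = ((A).choose m : ℤ) - (((j:ℕ)+1).choose m : ℤ) := by
        rw [hO]
        simp only [Matrix.of_apply]
        rw [show 2*n - ((⟨(j:ℕ)+1, hlt⟩ : Fin n) : ℕ) = A by simp; omega]
      have hcoef : ((2*n - (j:ℕ) : ℕ) : ℤ) = (A:ℤ)+1 := by omega
      rw [hL, hR, hsum, hMjk, hOjk, hO2, hcoef, hcast]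
      linear_combination keyId A (j:ℕ) m
    · have hjn : (j:ℕ)+1 = n := by omega
      have hsum : ∑ t : Fin n, (if (t:ℕ) = (j:ℕ)+1 then ((2*n - (j:ℕ) : ℕ) : ℤ) else 0) * O t k
          = 0 :=
        Finset.sum_eq_zero (fun t _ => by
          rw [if_neg (by have := t.isLt; omega), zero_mul])
      have hAc : A = (j:ℕ)+1 := by omega
      have hch : ((A).choose m : ℤ) = (((j:ℕ)+1).choose m : ℤ) := by rw [hAc]
      rw [hL, hR, hsum, hMjk, hOjk, hcast]
      linear_combination keyId A (j:ℕ) m + ((A:ℤ)+1) * hch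
  -- step 4 : conclude
  have hdet := congrArg Matrix.det step3
  rw [Matrix.det_mul, Matrix.det_mul] at hdet
  refine ⟨D.det, T.det, ?_, ?_, ?_⟩
  · rw [hD, Matrix.det_diagonal, Finset.prod_ne_zero_iff]
    intro k _
    have := h2le k
    simp only [ne_eq, Nat.cast_eq_zero]
    omega
  · have htri : T.BlockTriangular id := by
      intro i j hij
      have hij' : j < i := hij
      have hval : (j:ℕ) < (i:ℕ) := hij'
      rw [hT, Matrix.add_apply, Matrix.diagonal_apply_ne _ (ne_of_gt hij'),
        Matrix.of_apply, if_neg (by omega)]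
      norm_num
    rw [Matrix.det_of_upperTriangular htri, Finset.prod_ne_zero_iff]
    intro i _
    rw [hT]
    simp only [Matrix.add_apply, Matrix.diagonal_apply_eq, Matrix.of_apply]
    rw [if_neg (by omega)]
    omega
  · rw [step1, step2, hdet]

/-- **Lemma (even/odd Dehn–Sommerville bases correspond).**
For `n ≥ 1` and an `(n+1)`-subset `B ⊆ {1,…,2n+1}`, the submatrix of `M_{2n}` on the
columns labeled by `B` is invertible iff `1 ∈ B` and the submatrix of `M_{2n-1}` on the
columns labeled by `{b-1 : b ∈ B, b ≠ 1}` is invertible.  Consequently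
`B ↦ {b-1 : b ∈ B, b ≠ 1}` is a bijection from the `(n+1)`-subsets of `{1,…,2n+1}` giving
invertible submatrices of `M_{2n}` onto the `n`-subsets of `{1,…,2n}` giving invertible
submatrices of `M_{2n-1}`. -/
theorem dsEven_iff_dsOdd_and_bijOn (n : ℕ) (hn : 1 ≤ n) :
    (∀ (B : Finset ℕ) (hB : B.card = n + 1), B ⊆ Finset.Icc 1 (2 * n + 1) →
      (dsDetEven n B hB ≠ 0 ↔
        1 ∈ B ∧ ∃ h' : ((B.erase 1).image (· - 1)).card = n,
          dsDetOdd n ((B.erase 1).image (· - 1)) h' ≠ 0))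
    ∧ Set.BijOn (fun B : Finset ℕ => (B.erase 1).image (· - 1))
        {B : Finset ℕ | B ⊆ Finset.Icc 1 (2 * n + 1) ∧
          ∃ hB : B.card = n + 1, dsDetEven n B hB ≠ 0}
        {B' : Finset ℕ | B' ⊆ Finset.Icc 1 (2 * n) ∧
          ∃ hB' : B'.card = n, dsDetOdd n B' hB' ≠ 0} := by
  have part1 : ∀ (B : Finset ℕ) (hB : B.card = n + 1), B ⊆ Finset.Icc 1 (2 * n + 1) →
      (dsDetEven n B hB ≠ 0 ↔
        1 ∈ B ∧ ∃ h' : ((B.erase 1).image (· - 1)).card = n,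
          dsDetOdd n ((B.erase 1).image (· - 1)) h' ≠ 0) := by
    intro B hB hsub
    constructor
    · intro hD
      have h1 : 1 ∈ B := by
        by_contra h1
        exact hD (evenDetZero n B hB hsub h1)
      have h' := cardB' n B hB h1
      obtain ⟨c, d, hc, hd, heq⟩ := evenOddRel n hn B hB hsub h1 h'
      refine ⟨h1, h', fun h0 => ?_⟩
      rw [h0, mul_zero] at heq
      rcases mul_eq_zero.mp heq with h | h
      · exact hD h
      · exact hc h
    · rintro ⟨h1, h'0, hodd⟩
      obtain ⟨c, d, hc, hd, heq⟩ := evenOddRel n hn B hB hsub h1 h'0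
      intro h0
      rw [h0, zero_mul] at heq
      rcases mul_eq_zero.mp heq.symm with h | h
      · exact hd h
      · exact hodd h
  -- reconstruction lemma
  have recon : ∀ B : Finset ℕ, B ⊆ Finset.Icc 1 (2 * n + 1) → 1 ∈ B →
      (((B.erase 1).image (· - 1)).image (· + 1)) = B.erase 1 := by
    intro B hsub h1
    rw [Finset.image_image]
    have : ∀ x ∈ B.erase 1, (x - 1) + 1 = x := by
      intro x hx
      have hx1 : x ≠ 1 := (Finset.mem_erase.mp hx).1
      have := (Finset.mem_Icc.mp (hsub (Finset.mem_of_mem_erase hx))).1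
      omega
    calc (B.erase 1).image ((· + 1) ∘ (· - 1))
        = (B.erase 1).image id := Finset.image_congr (fun x hx => this x hx)
      _ = B.erase 1 := Finset.image_id
  refine ⟨part1, ?_, ?_, ?_⟩
  · -- MapsTo
    rintro B ⟨hsub, hB, hD⟩
    obtain ⟨h1, h', hodd⟩ := (part1 B hB hsub).mp hD
    refine ⟨?_, h', hodd⟩
    intro x hx
    obtain ⟨b, hb, rfl⟩ := Finset.mem_image.mp hx
    have hb1 : b ≠ 1 := (Finset.mem_erase.mp hb).1
    have := Finset.mem_Icc.mp (hsub (Finset.mem_of_mem_erase hb))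
    rw [Finset.mem_Icc]
    omega
  · -- InjOn
    rintro B1 ⟨hsub1, hB1, hD1⟩ B2 ⟨hsub2, hB2, hD2⟩ heq
    obtain ⟨h11, -, -⟩ := (part1 B1 hB1 hsub1).mp hD1
    obtain ⟨h12, -, -⟩ := (part1 B2 hB2 hsub2).mp hD2
    simp only at heq
    have e1 := recon B1 hsub1 h11
    have e2 := recon B2 hsub2 h12
    rw [heq] at e1
    rw [e2] at e1
    calc B1 = insert 1 (B1.erase 1) := (Finset.insert_erase h11).symm
      _ = insert 1 (B2.erase 1) := by rw [← e1]
      _ = B2 := Finset.insert_erase h12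
  · -- SurjOn
    rintro B' ⟨hsub', hB'card, hodd⟩
    set B : Finset ℕ := insert 1 (B'.image (· + 1)) with hBdef
    have hnotin : 1 ∉ B'.image (· + 1) := by
      intro h
      obtain ⟨x, hx, hx1⟩ := Finset.mem_image.mp h
      have := (Finset.mem_Icc.mp (hsub' hx)).1
      omega
    have hBcard : B.card = n + 1 := by
      rw [hBdef, Finset.card_insert_of_notMem hnotin,
        Finset.card_image_of_injective _ (add_left_injective 1), hB'card]
    have hBsub : B ⊆ Finset.Icc 1 (2 * n + 1) := by
      intro x hx
      rw [hBdef, Finset.mem_insert] at hx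
      rw [Finset.mem_Icc]
      rcases hx with rfl | hx
      · omega
      · obtain ⟨b, hb, rfl⟩ := Finset.mem_image.mp hx
        have := Finset.mem_Icc.mp (hsub' hb)
        omega
    have hBB' : (B.erase 1).image (· - 1) = B' := by
      rw [hBdef, Finset.erase_insert hnotin, Finset.image_image]
      have : ∀ x ∈ B', ((· - 1) ∘ (· + 1)) x = x := by
        intro x _
        simp
      calc B'.image ((· - 1) ∘ (· + 1)) = B'.image id := Finset.image_congr this
        _ = B' := Finset.image_id
    refine ⟨B, ⟨hBsub, hBcard, ?_⟩, hBB'⟩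
    rw [part1 B hBcard hBsub]
    have h1B : 1 ∈ B := Finset.mem_insert_self 1 _
    refine ⟨h1B, ?_⟩
    have h'' : ((B.erase 1).image (· - 1)).card = n := by rw [hBB']; exact hB'card
    have key : ∀ (S : Finset ℕ), S = B' → ∀ hcard : S.card = n, dsDetOdd n S hcard ≠ 0 := by
      rintro S rfl hcard
      exact hodd
    exact ⟨h'', key _ hBB' h''⟩
end

section
/- For every n ≥ 1, the number of (n+1)-element subsets B of {1, 2, ..., 2n+1} for which the (n+1)×(n+1) submatrix of M_{2n} on the columns labeled by B has nonzero determinant equals the number of n-element subsets B' of {1, 2, ..., 2n} for which the n×n submatrix of M_{2n-1} on the columns labeled by B' has nonzero determinant. -/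
open Finset

-- (m - c) * C(m,c) = m * C(m-1,c)  over ℤ
lemma ds_claim (m c : ℕ) :
    ((m : ℤ) - c) * (m.choose c : ℤ) = (m : ℤ) * ((m - 1).choose c : ℤ) := by
  rcases m with _ | m
  · rcases c with _ | c <;> simp
  · have hm1 : m + 1 - 1 = m := rfl
    rw [hm1]
    rcases le_or_gt c (m + 1) with h | h
    · have h0 := Nat.choose_mul_succ_eq m c
      have h1 : ((m.choose c : ℤ)) * ((m : ℤ) + 1)
          = (((m + 1).choose c : ℤ)) * (((m : ℤ) + 1) - c) := by
        have h2 := congrArg (fun x : ℕ => (x : ℤ)) h0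
        push_cast at h2
        rw [h2]
        have h3 : ((m + 1 - c : ℕ) : ℤ) = (m : ℤ) + 1 - c := by omega
        rw [h3]
      push_cast
      linarith
    · have e1 : (m + 1).choose c = 0 := Nat.choose_eq_zero_of_lt h
      have e2 : m.choose c = 0 := Nat.choose_eq_zero_of_lt (by omega)
      rw [e1, e2]
      push_cast
      ring

-- (2n+1-c) * R_{j+1}(c) = (j+1) * A_j(c) + (2n-j) * A_{j+1}(c)
lemma ds_keyS (n j c : ℕ) (hj : j ≤ 2 * n) :
    (2 * (n : ℤ) + 1 - c) * (((2 * n - j).choose c : ℤ) - ((j + 1).choose c : ℤ))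
      = ((j : ℤ) + 1) * (((2 * n - j).choose c : ℤ) - (j.choose c : ℤ))
        + (2 * (n : ℤ) - j) * (((2 * n - (j + 1)).choose c : ℤ) - ((j + 1).choose c : ℤ)) := by
  have h1 := ds_claim (2 * n - j) c
  have h2 := ds_claim (j + 1) c
  have e1 : ((2 * n - j : ℕ) : ℤ) = 2 * (n : ℤ) - j := by omega
  have e2 : 2 * n - j - 1 = 2 * n - (j + 1) := by omega
  have e3 : j + 1 - 1 = j := rfl
  rw [e1, e2] at h1
  rw [e3] at h2
  push_cast at h2
  linarith

-- (2n+1-c) * R_0(c) = (2n+1) * A_0(c)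
lemma ds_key0 (n c : ℕ) :
    (2 * (n : ℤ) + 1 - c) * (((2 * n + 1).choose c : ℤ) - ((0 : ℕ).choose c : ℤ))
      = (2 * (n : ℤ) + 1) * (((2 * n).choose c : ℤ) - ((0 : ℕ).choose c : ℤ)) := by
  have h1 := ds_claim (2 * n + 1) c
  have e1 : 2 * n + 1 - 1 = 2 * n := rfl
  rw [e1] at h1
  have h2 : (c : ℤ) * ((0 : ℕ).choose c : ℤ) = 0 := by
    rcases c with _ | c <;> simp [Nat.choose]
  push_cast at h1 ⊢
  linarith

lemma dsDetEven_eq_zero (n : ℕ) (B : Finset ℕ) (hB : B.card = n + 1)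
    (hsub : B ⊆ Finset.Icc 1 (2 * n + 1)) (h1 : 1 ∉ B) :
    dsDetEven n B hB = 0 := by
  classical
  set c : Fin (n + 1) → ℕ := fun k => 2 * n + 2 - (B.orderIsoOfFin hB k : ℕ) with hc
  have hcb : ∀ k, 1 ≤ c k ∧ c k ≤ 2 * n := by
    intro k
    have hmem : (B.orderIsoOfFin hB k : ℕ) ∈ B := (B.orderIsoOfFin hB k).2
    have h2 := hsub hmem
    rw [Finset.mem_Icc] at h2
    have hne : (B.orderIsoOfFin hB k : ℕ) ≠ 1 := fun h => h1 (h ▸ hmem)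
    simp only [hc]
    omega
  set E : Matrix (Fin (n + 1)) (Fin (n + 1)) ℤ := fun i k =>
    ((2 * n + 1 - (i : ℕ)).choose (c k) : ℤ) - (((i : ℕ)).choose (c k) : ℤ) with hE
  have hdsE : dsDetEven n B hB = E.det := rfl
  set v : Fin (n + 1) → ℤ := fun k => 2 * (n : ℤ) + 1 - (c k : ℤ) with hv
  set Ae : ℕ → Fin (n + 1) → ℤ := fun j k =>
    ((2 * n - j).choose (c k) : ℤ) - (j.choose (c k) : ℤ) with hAe
  set Lf : ℕ → ℕ → ℤ := fun i j =>
    (if i = j + 1 then (i : ℤ) else 0) + (if i = j then 2 * (n : ℤ) + 1 - i else 0) with hLf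
  set L : Matrix (Fin (n + 1)) (Fin (n + 1)) ℤ := fun i j => Lf (i : ℕ) (j : ℕ) with hL
  set A : Matrix (Fin (n + 1)) (Fin (n + 1)) ℤ := fun j k => Ae (j : ℕ) k with hA
  have hLA : (Matrix.of fun i k => v k * E i k) = L * A := by
    ext i k
    rw [Matrix.mul_apply]
    have : ∀ j : Fin (n + 1), L i j * A j k = (fun m => Lf (i : ℕ) m * Ae m k) (j : ℕ) :=
      fun j => rfl
    rw [Finset.sum_congr rfl fun j _ => this j,
      Fin.sum_univ_eq_sum_range (fun m => Lf (i : ℕ) m * Ae m k) (n + 1)]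
    simp only [hLf, add_mul, ite_mul, zero_mul, Finset.sum_add_distrib]
    obtain ⟨iv, hlt⟩ := i
    rcases iv with _ | m
    · rw [Finset.sum_eq_zero (by intro j hj; simp), Finset.sum_ite_eq]
      simp only [Finset.mem_range, Matrix.of_apply]
      rw [if_pos hlt]
      simp only [hv, hE, hAe, Fin.val_mk, Nat.sub_zero, Nat.cast_zero, CharP.cast_eq_zero]
      have := ds_key0 n (c k)
      push_cast at this ⊢
      linarith
    · simp only [Fin.val_mk, add_left_inj]
      rw [Finset.sum_ite_eq, Finset.sum_ite_eq]
      rw [if_pos (Finset.mem_range.mpr (by omega : m < n + 1)),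
        if_pos (Finset.mem_range.mpr hlt)]
      simp only [Matrix.of_apply, hv, hE, hAe, Fin.val_mk]
      rw [show 2 * n + 1 - (m + 1) = 2 * n - m from by omega]
      have hkey := ds_keyS n m (c k) (by omega)
      push_cast at hkey ⊢
      linear_combination hkey
  have hz : (∏ k, v k) * E.det = 0 := by
    rw [← Matrix.det_mul_row v E, hLA, Matrix.det_mul]
    have hA0 : A.det = 0 := Matrix.det_eq_zero_of_row_eq_zero (Fin.last n) (fun j => by
      simp only [hA, hAe, Fin.val_last]
      rw [show 2 * n - n = n from by omega]
      ring)
    rw [hA0, mul_zero]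
  have hprod : (∏ k, v k) ≠ 0 := by
    refine ne_of_gt (Finset.prod_pos fun k _ => ?_)
    have := hcb k
    simp only [hv]
    omega
  rw [hdsE]
  exact (mul_eq_zero.mp hz).resolve_left hprod

lemma dsDetEven_iff (n : ℕ) (B : Finset ℕ) (hB : B.card = n + 1)
    (hsub : B ⊆ Finset.Icc 1 (2 * n + 1)) (h1 : 1 ∈ B)
    (B' : Finset ℕ) (hBB' : B' = (B.erase 1).image (· - 1)) (hB' : B'.card = n) :
    dsDetEven n B hB ≠ 0 ↔ dsDetOdd n B' hB' ≠ 0 := by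
  classical
  set e : Fin (n + 1) → ℕ := fun k => (B.orderIsoOfFin hB k : ℕ) with he
  have hmem : ∀ k, e k ∈ B := fun k => (B.orderIsoOfFin hB k).2
  have hmono : StrictMono e := (B.orderEmbOfFin hB).strictMono
  have he0 : e 0 = 1 := by
    have h0 := Finset.orderEmbOfFin_zero hB (Nat.succ_pos n)
    have : e 0 = B.min' (Finset.card_pos.mp (hB.symm ▸ Nat.succ_pos n)) := h0
    rw [this]
    refine le_antisymm (Finset.min'_le B 1 h1) (Finset.le_min' _ _ _ fun y hy =>
      (Finset.mem_Icc.mp (hsub hy)).1)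
  have hub : ∀ k, e k ≤ 2 * n + 1 := fun k => (Finset.mem_Icc.mp (hsub (hmem k))).2
  have he2 : ∀ k : Fin n, 2 ≤ e k.succ := by
    intro k
    have : e 0 < e k.succ := hmono (Fin.succ_pos k)
    omega
  have he' : ∀ k : Fin n, (B'.orderIsoOfFin hB' k : ℕ) = e k.succ - 1 := by
    have hu := Finset.orderEmbOfFin_unique hB' (f := fun k : Fin n => e k.succ - 1)
      (fun k => by
        rw [hBB']
        refine Finset.mem_image.mpr ⟨e k.succ, Finset.mem_erase.mpr ⟨?_, hmem _⟩, rfl⟩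
        have := he2 k; omega)
      (fun a b hab => by
        show e a.succ - 1 < e b.succ - 1
        have h1 := hmono (Fin.succ_lt_succ_iff.mpr hab)
        have h2 := he2 a
        omega)
    intro k
    have h2 := congrFun hu k
    rw [Finset.coe_orderIsoOfFin_apply]
    exact h2.symm
  -- matrices
  set c : Fin (n + 1) → ℕ := fun k => 2 * n + 2 - e k with hc
  set E : Matrix (Fin (n + 1)) (Fin (n + 1)) ℤ := fun i k =>
    ((2 * n + 1 - (i : ℕ)).choose (c k) : ℤ) - (((i : ℕ)).choose (c k) : ℤ) with hE
  have hdsE : dsDetEven n B hB = E.det := rfl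
  set Ae : ℕ → Fin n → ℤ := fun j k =>
    ((2 * n - j).choose (c k.succ) : ℤ) - (j.choose (c k.succ) : ℤ) with hAe
  set Aodd : Matrix (Fin n) (Fin n) ℤ := fun j k => Ae (j : ℕ) k with hAodd
  have hdsO : dsDetOdd n B' hB' = Aodd.det := by
    unfold dsDetOdd
    congr 1
    funext i k
    simp only [hAodd, hAe, hc]
    have h2 := he2 k
    have h3 := hub k.succ
    rw [he' k, show 2 * n + 1 - (e k.succ - 1) = 2 * n + 2 - e k.succ from by omega]
  -- step A : cofactor expansion along column 0
  have hcol : ∀ i : Fin (n + 1), E i 0 = if i = 0 then 1 else 0 := by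
    intro i
    have hc0 : c 0 = 2 * n + 1 := by simp only [hc]; rw [he0]; omega
    simp only [hE, hc0]
    rcases Fin.eq_zero_or_eq_succ i with rfl | ⟨j, rfl⟩
    · simp [Nat.choose_self, Nat.choose_eq_zero_of_lt (by omega : 0 < 2 * n + 1)]
    · rw [if_neg (Fin.succ_ne_zero j)]
      have hj1 : 1 ≤ (j.succ : ℕ) := by simp [Fin.val_succ]
      have hj2 : (j.succ : ℕ) ≤ n := by omega
      rw [Nat.choose_eq_zero_of_lt (by omega), Nat.choose_eq_zero_of_lt (by omega)]
      ring
  set E₁ : Matrix (Fin n) (Fin n) ℤ := fun i k => E i.succ k.succ with hE₁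
  have hstepA : E.det = E₁.det := by
    rw [Matrix.det_succ_column_zero]
    rw [Finset.sum_eq_single 0 (fun i _ hi => by rw [hcol i, if_neg hi]; ring)
      (fun h => absurd (Finset.mem_univ _) h)]
    rw [hcol 0, if_pos rfl]
    simp only [Fin.val_zero, pow_zero, one_mul, mul_one]
    congr 1
  -- step B : column scaling and bidiagonal factorization
  set v : Fin n → ℤ := fun k => 2 * (n : ℤ) + 1 - (c k.succ : ℤ) with hv
  set Lf : ℕ → ℕ → ℤ := fun i j =>
    (if j = i then (i : ℤ) + 1 else 0) + (if j = i + 1 then 2 * (n : ℤ) - i else 0) with hLf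
  set L : Matrix (Fin n) (Fin n) ℤ := fun i j => Lf (i : ℕ) (j : ℕ) with hL
  have hLA : (Matrix.of fun i k => v k * E₁ i k) = L * Aodd := by
    ext i k
    rw [Matrix.mul_apply]
    have hterm : ∀ j : Fin n, L i j * Aodd j k = (fun m => Lf (i : ℕ) m * Ae m k) (j : ℕ) :=
      fun j => rfl
    rw [Finset.sum_congr rfl fun j _ => hterm j,
      Fin.sum_univ_eq_sum_range (fun m => Lf (i : ℕ) m * Ae m k) n]
    simp only [hLf, add_mul, ite_mul, zero_mul, Finset.sum_add_distrib]
    rw [Finset.sum_ite_eq', Finset.sum_ite_eq']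
    rw [if_pos (Finset.mem_range.mpr i.isLt)]
    have hsecond : (if (i : ℕ) + 1 ∈ Finset.range n then (2 * (n : ℤ) - (i : ℕ)) * Ae ((i : ℕ) + 1) k else 0)
        = (2 * (n : ℤ) - (i : ℕ)) * Ae ((i : ℕ) + 1) k := by
      by_cases hlt : (i : ℕ) + 1 < n
      · rw [if_pos (Finset.mem_range.mpr hlt)]
      · have hn : (i : ℕ) + 1 = n := by have := i.isLt; omega
        rw [if_neg (by simp [hn])]
        simp only [hAe, hn]
        rw [show 2 * n - n = n from by omega]
        ring
    rw [hsecond]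
    simp only [Matrix.of_apply, hv, hE₁, hE, hAe, Fin.val_succ]
    rw [show 2 * n + 1 - ((i : ℕ) + 1) = 2 * n - (i : ℕ) from by omega]
    have hkey := ds_keyS n (i : ℕ) (c k.succ) (by have := i.isLt; omega)
    push_cast at hkey ⊢
    linear_combination hkey
  have hLdet : L.det = ∏ i : Fin n, ((i : ℕ) + 1 : ℤ) := by
    rw [Matrix.det_of_upperTriangular]
    · refine Finset.prod_congr rfl fun i _ => ?_
      simp only [hL, hLf]
      rw [if_pos trivial, if_neg (by omega)]
      ring
    · intro i j hij
      have hval : (j : ℕ) < (i : ℕ) := hij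
      simp only [hL, hLf]
      rw [if_neg (by omega), if_neg (by omega)]
      ring
  have hLne : L.det ≠ 0 := by
    rw [hLdet]
    exact ne_of_gt (Finset.prod_pos fun i _ => by positivity)
  have hvne : (∏ k, v k) ≠ 0 := by
    refine ne_of_gt (Finset.prod_pos fun k _ => ?_)
    have h2 := he2 k
    have h3 := hub k.succ
    simp only [hv, hc]
    omega
  have hmain : (∏ k, v k) * dsDetEven n B hB = L.det * dsDetOdd n B' hB' := by
    rw [hdsE, hstepA, hdsO, ← Matrix.det_mul_row v E₁, hLA, Matrix.det_mul]
  constructor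
  · intro h h0
    rw [h0, mul_zero] at hmain
    exact h ((mul_eq_zero.mp hmain).resolve_left hvne)
  · intro h h0
    rw [h0, mul_zero] at hmain
    exact h ((mul_eq_zero.mp hmain.symm).resolve_left hLne)

lemma ds_card_phi (n m : ℕ) (B : Finset ℕ) (h1 : 1 ∈ B) (hsub : B ⊆ Finset.Icc 1 m)
    (hB : B.card = n + 1) : ((B.erase 1).image (· - 1)).card = n := by
  have hinjOn : Set.InjOn (· - 1) ↑(B.erase 1) := by
    intro x hx y hy hxy
    have hx1 : 1 ≤ x := (Finset.mem_Icc.mp (hsub (Finset.mem_of_mem_erase hx))).1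
    have hy1 : 1 ≤ y := (Finset.mem_Icc.mp (hsub (Finset.mem_of_mem_erase hy))).1
    simp only at hxy
    omega
  rw [Finset.card_image_of_injOn hinjOn, Finset.card_erase_of_mem h1, hB]
  omega

lemma ds_recover (m : ℕ) (B : Finset ℕ) (hsub : B ⊆ Finset.Icc 1 m) (h1 : 1 ∈ B) :
    insert 1 (((B.erase 1).image (· - 1)).image (· + 1)) = B := by
  rw [Finset.image_image]
  have himg : (B.erase 1).image ((· + 1) ∘ (· - 1)) = B.erase 1 := by
    rw [Finset.image_congr (g := id) (fun x hx => by
      have hx1 : 1 ≤ x := (Finset.mem_Icc.mp (hsub (Finset.mem_of_mem_erase hx))).1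
      simp only [Function.comp_apply, id]
      omega), Finset.image_id]
  rw [himg, Finset.insert_erase h1]

/-- **Lemma.** For every `n ≥ 1`, the number of `(n+1)`-subsets of `{1,…,2n+1}` giving an
invertible submatrix of `M_{2n}` equals the number of `n`-subsets of `{1,…,2n}` giving an
invertible submatrix of `M_{2n-1}`. -/
theorem card_dsEven_bases_eq_card_dsOdd_bases (n : ℕ) (hn : 1 ≤ n) :
    {B : Finset ℕ | B ⊆ Finset.Icc 1 (2 * n + 1) ∧
        ∃ hB : B.card = n + 1, dsDetEven n B hB ≠ 0}.ncard
      = {B' : Finset ℕ | B' ⊆ Finset.Icc 1 (2 * n) ∧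
          ∃ hB' : B'.card = n, dsDetOdd n B' hB' ≠ 0}.ncard := by
  classical
  have himg : (fun B : Finset ℕ => (B.erase 1).image (· - 1)) ''
      {B : Finset ℕ | B ⊆ Finset.Icc 1 (2 * n + 1) ∧
        ∃ hB : B.card = n + 1, dsDetEven n B hB ≠ 0}
      = {B' : Finset ℕ | B' ⊆ Finset.Icc 1 (2 * n) ∧
          ∃ hB' : B'.card = n, dsDetOdd n B' hB' ≠ 0} := by
    ext B'
    simp only [Set.mem_image, Set.mem_setOf_eq]
    constructor
    · rintro ⟨B, ⟨hsub, hB, hdet⟩, rfl⟩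
      have h1 : 1 ∈ B := by
        by_contra h1
        exact hdet (dsDetEven_eq_zero n B hB hsub h1)
      have hcard' := ds_card_phi n (2 * n + 1) B h1 hsub hB
      refine ⟨?_, hcard', ?_⟩
      · intro x hx
        obtain ⟨b, hb, rfl⟩ := Finset.mem_image.mp hx
        have hbB := Finset.mem_of_mem_erase hb
        have hb1 : b ≠ 1 := Finset.ne_of_mem_erase hb
        have := Finset.mem_Icc.mp (hsub hbB)
        simp only [Finset.mem_Icc]
        omega
      · exact (dsDetEven_iff n B hB hsub h1 _ rfl hcard').mp hdet
    · rintro ⟨hsub', hB', hdet'⟩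
      have h1S : 1 ∉ B'.image (· + 1) := by
        intro h
        obtain ⟨b, hb, hb1⟩ := Finset.mem_image.mp h
        have := (Finset.mem_Icc.mp (hsub' hb)).1
        omega
      have hcardB : (insert 1 (B'.image (· + 1))).card = n + 1 := by
        rw [Finset.card_insert_of_notMem h1S,
          Finset.card_image_of_injective _ (add_left_injective 1), hB']
      have hphi : (((insert 1 (B'.image (· + 1))).erase 1).image (· - 1)) = B' := by
        rw [Finset.erase_insert h1S, Finset.image_image]
        rw [Finset.image_congr (g := id) (fun x _ => by simp), Finset.image_id]
      have hsubB : insert 1 (B'.image (· + 1)) ⊆ Finset.Icc 1 (2 * n + 1) := by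
        intro x hx
        rcases Finset.mem_insert.mp hx with rfl | hx
        · simp only [Finset.mem_Icc]; omega
        · obtain ⟨b, hb, rfl⟩ := Finset.mem_image.mp hx
          have := Finset.mem_Icc.mp (hsub' hb)
          simp only [Finset.mem_Icc]
          omega
      refine ⟨insert 1 (B'.image (· + 1)), ⟨hsubB, hcardB, ?_⟩, hphi⟩
      exact (dsDetEven_iff n _ hcardB hsubB (Finset.mem_insert_self 1 _)
        B' hphi.symm hB').mpr hdet'
  have hinj : Set.InjOn (fun B : Finset ℕ => (B.erase 1).image (· - 1))
      {B : Finset ℕ | B ⊆ Finset.Icc 1 (2 * n + 1) ∧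
        ∃ hB : B.card = n + 1, dsDetEven n B hB ≠ 0} := by
    intro B₁ hB₁ B₂ hB₂ heq
    simp only [Set.mem_setOf_eq] at hB₁ hB₂
    obtain ⟨hsub₁, hc₁, hd₁⟩ := hB₁
    obtain ⟨hsub₂, hc₂, hd₂⟩ := hB₂
    have h11 : 1 ∈ B₁ := by
      by_contra h1
      exact hd₁ (dsDetEven_eq_zero n B₁ hc₁ hsub₁ h1)
    have h12 : 1 ∈ B₂ := by
      by_contra h1
      exact hd₂ (dsDetEven_eq_zero n B₂ hc₂ hsub₂ h1)
    have r₁ := ds_recover (2 * n + 1) B₁ hsub₁ h11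
    have r₂ := ds_recover (2 * n + 1) B₂ hsub₂ h12
    simp only at heq
    rw [← r₁, ← r₂, heq]
  rw [← himg, Set.ncard_image_of_injOn hinj]
end

section
/- Let n ≥ 1 and let B = {b_1 < b_2 < ... < b_n} be an n-element subset of {1, 2, ..., 2n}. Then the n×n integer matrix whose entry in row i (for 0 ≤ i ≤ n-1) and column k (for 1 ≤ k ≤ n) is C(2n-i, 2n+1-b_k) - C(i, 2n+1-b_k) has nonzero determinant if and only if b_k ≤ 2k for every k with 1 ≤ k ≤ n. -/
/-!
Proof of the Dehn–Sommerville basis lemma (odd case).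

Strategy: with `c k = 2n+1-b k` (a strictly decreasing tuple) and
`gcol n c i = C(2n-i, c) - C(i, c)`, we prove by induction on `n` that the
determinant of `gmat n c` is nonnegative, and nonzero exactly when the tuple
is strictly decreasing with `2(n-j)-1 ≤ c j ≤ 2n` for all `j`.

Key facts:
* Pascal's rule gives `gcol (n+1) c (i+1) = gcol n c i + gcol n (c-1) i`, so after
  removing the first row and column, the determinant expands multilinearly into a
  sum of smaller determinants of the same shape (all nonnegative by induction).
* If `c 0 = 2n+2` the first column is the basis vector `e₀`.
* The explicit row vector `α i = (-1)^i (C(2n+1,i) - C(2n+1,i-1))` satisfies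
  `∑ i α i • (row i) = (δ_{c0=2n+2}) + 2·(δ_{c0=2n+1})` on each column; it turns the
  first row into `(2,0,…,0)` when `c 0 = 2n+1`, and kills the matrix when `c 0 ≤ 2n`.
* Those identities reduce to the orthogonality `∑ k (-1)^k C(m,k) C(k,c) = (-1)^c δ_{cm}`.
-/


lemma orth (m c : ℕ) :
    ∑ k ∈ Finset.range (m+1), (-1:ℤ)^k * (Nat.choose m k) * (Nat.choose k c)
      = if c = m then (-1:ℤ)^m else 0 := by
  by_cases hcm : c ≤ m
  · have h1 : ∑ k ∈ Finset.range (m+1), (-1:ℤ)^k * (Nat.choose m k) * (Nat.choose k c)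
        = ∑ k ∈ Finset.Ico c (m+1), (-1:ℤ)^k * (Nat.choose m k) * (Nat.choose k c) := by
      refine (Finset.sum_subset ?_ ?_).symm
      · intro k hk; simp only [Finset.mem_Ico] at hk; simp only [Finset.mem_range]; omega
      · intro k hk hnk
        simp only [Finset.mem_range] at hk
        rw [Finset.mem_Ico] at hnk; push_neg at hnk
        have hkc : k < c := by
          by_contra hx; push_neg at hx; have := hnk hx; omega
        rw [Nat.choose_eq_zero_of_lt hkc]; ring
    rw [h1, Finset.sum_Ico_eq_sum_range]
    have h2 : ∀ t ∈ Finset.range (m + 1 - c), (-1:ℤ)^(c+t) * (Nat.choose m (c+t)) * (Nat.choose (c+t) c)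
        = ((Nat.choose m c : ℤ) * (-1:ℤ)^c) * ((-1:ℤ)^t * (Nat.choose (m-c) t)) := by
      intro t ht
      simp only [Finset.mem_range] at ht
      have h0 := Nat.choose_mul (n := m) (show c ≤ c + t by omega)
      have h3 : (Nat.choose m (c+t) : ℤ) * (Nat.choose (c+t) c) = (Nat.choose m c : ℤ) * Nat.choose (m-c) (c + t - c) := by
        exact_mod_cast h0
      simp only [Nat.add_sub_cancel_left] at h3
      calc (-1:ℤ)^(c+t) * (Nat.choose m (c+t)) * (Nat.choose (c+t) c)
          = (-1:ℤ)^(c+t) * ((Nat.choose m (c+t) : ℤ) * (Nat.choose (c+t) c)) := by ring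
        _ = (-1:ℤ)^(c+t) * ((Nat.choose m c : ℤ) * Nat.choose (m-c) t) := by rw [h3]
        _ = ((Nat.choose m c : ℤ) * (-1:ℤ)^c) * ((-1:ℤ)^t * (Nat.choose (m-c) t)) := by
            rw [pow_add]; ring
    rw [Finset.sum_congr rfl h2, ← Finset.mul_sum]
    have h4 : m + 1 - c = (m - c) + 1 := by omega
    rw [h4, Int.alternating_sum_range_choose]
    by_cases hc : c = m
    · subst hc; simp
    · rw [if_neg (by omega), if_neg hc]; ring
  · rw [if_neg (by omega)]
    apply Finset.sum_eq_zero
    intro k hk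
    simp only [Finset.mem_range] at hk
    rw [Nat.choose_eq_zero_of_lt (show k < c by omega)]
    ring


def gcol (n c i : ℕ) : ℤ := (Nat.choose (2*n - i) c : ℤ) - (Nat.choose i c : ℤ)

def alphaDS (n i : ℕ) : ℤ :=
  (-1:ℤ)^i * ((Nat.choose (2*n+1) i : ℤ) - if i = 0 then 0 else (Nat.choose (2*n+1) (i-1) : ℤ))

def betaDS (n j : ℕ) : ℤ :=
  (-1:ℤ)^j * ((if j = 0 then 0 else (Nat.choose (2*n+1) (j-1) : ℤ)) - (Nat.choose (2*n+1) j : ℤ))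

lemma neg_one_pow_parity {a b : ℕ} (h : a % 2 = b % 2) : (-1:ℤ)^a = (-1:ℤ)^b := by
  conv_lhs => rw [← Nat.div_add_mod a 2]
  conv_rhs => rw [← Nat.div_add_mod b 2]
  rw [pow_add, pow_add, pow_mul, pow_mul, h]
  norm_num

lemma alpha_eq_neg_beta (n i : ℕ) : alphaDS n i = - betaDS n i := by
  unfold alphaDS betaDS; ring

lemma alpha_eq_beta_reflect (n : ℕ) (i : ℕ) (hi : i ≤ n) :
    alphaDS n i = betaDS n (2*n+2 - i) := by
  unfold alphaDS betaDS
  rw [if_neg (show 2*n+2-i ≠ 0 by omega)]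
  rw [show 2*n+2-i-1 = (2*n+1) - i by omega, Nat.choose_symm (by omega)]
  have he : (-1:ℤ)^(2*n+2-i) = (-1:ℤ)^i := neg_one_pow_parity (by omega)
  rw [he]
  by_cases h : i = 0
  · subst h
    have hz : Nat.choose (2*n+1) (2*n+2-0) = 0 := Nat.choose_eq_zero_of_lt (by omega)
    rw [if_pos rfl, hz]
    push_cast; ring
  · rw [if_neg h, show 2*n+2-i = (2*n+1) - (i-1) by omega, Nat.choose_symm (by omega)]
    try ring

lemma alpha_row (n c : ℕ) (hc : 1 ≤ c) :
    ∑ i ∈ Finset.range (n+1), alphaDS n i * gcol (n+1) c i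
      = if c = 2*n+2 then 1 else if c = 2*n+1 then 2 else 0 := by
  -- step 1: split into two beta sums
  have step1 : ∑ i ∈ Finset.range (n+1), alphaDS n i * gcol (n+1) c i
      = (∑ i ∈ Finset.range (n+1), betaDS n (2*n+2-i) * (Nat.choose (2*n+2-i) c : ℤ))
        + ∑ i ∈ Finset.range (n+1), betaDS n i * (Nat.choose i c : ℤ) := by
    rw [← Finset.sum_add_distrib]
    apply Finset.sum_congr rfl
    intro i hi
    simp only [Finset.mem_range] at hi
    have h1 : alphaDS n i = betaDS n (2*n+2-i) := alpha_eq_beta_reflect n i (by omega)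
    have h2 : alphaDS n i = - betaDS n i := alpha_eq_neg_beta n i
    unfold gcol
    have h3 : 2*(n+1) - i = 2*n+2-i := by omega
    rw [h3]
    calc alphaDS n i * ((Nat.choose (2*n+2-i) c : ℤ) - (Nat.choose i c : ℤ))
        = alphaDS n i * (Nat.choose (2*n+2-i) c : ℤ) + (- alphaDS n i) * (Nat.choose i c : ℤ) := by ring
      _ = betaDS n (2*n+2-i) * (Nat.choose (2*n+2-i) c : ℤ) + betaDS n i * (Nat.choose i c : ℤ) := by
          rw [← h1, h2]; ring_nf
  -- step 2: first sum is the tail over Ico (n+2) (2n+3)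
  have step2 : ∑ i ∈ Finset.range (n+1), betaDS n (2*n+2-i) * (Nat.choose (2*n+2-i) c : ℤ)
      = ∑ j ∈ Finset.Ico (n+2) (2*n+3), betaDS n j * (Nat.choose j c : ℤ) := by
    rw [Finset.sum_Ico_eq_sum_range]
    have hcount : 2*n+3 - (n+2) = n+1 := by omega
    rw [hcount]
    rw [← Finset.sum_range_reflect (fun t => betaDS n (n+2+t) * (Nat.choose (n+2+t) c : ℤ)) (n+1)]
    apply Finset.sum_congr rfl
    intro i hi
    simp only [Finset.mem_range] at hi
    have : n + 2 + (n + 1 - 1 - i) = 2*n+2-i := by omega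
    rw [this]
  -- step 3: full beta sum
  have hbmid : betaDS n (n+1) = 0 := by
    unfold betaDS
    rw [if_neg (by omega), show n+1-1 = n from rfl, Nat.choose_symm_half]
    ring
  have step3 : ∑ i ∈ Finset.range (n+1), alphaDS n i * gcol (n+1) c i
      = ∑ j ∈ Finset.range (2*n+3), betaDS n j * (Nat.choose j c : ℤ) := by
    rw [step1, step2]
    rw [Finset.range_eq_Ico, Finset.range_eq_Ico]
    rw [← Finset.sum_Ico_consecutive (fun j => betaDS n j * (Nat.choose j c : ℤ))
        (show 0 ≤ n+1 by omega) (show n+1 ≤ 2*n+3 by omega)]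
    rw [Finset.sum_eq_sum_Ico_succ_bot (show n+1 < 2*n+3 by omega)]
    rw [hbmid]
    have : n + 1 + 1 = n + 2 := rfl
    rw [this]
    ring
  rw [step3]
  -- step 4: expand beta and use orthogonality
  have expand : ∀ j, betaDS n j * (Nat.choose j c : ℤ)
      = (-1:ℤ)^j * (if j = 0 then 0 else (Nat.choose (2*n+1) (j-1) : ℤ)) * (Nat.choose j c : ℤ)
        - (-1:ℤ)^j * (Nat.choose (2*n+1) j : ℤ) * (Nat.choose j c : ℤ) := by
    intro j; unfold betaDS; ring
  rw [Finset.sum_congr rfl (fun j _ => expand j), Finset.sum_sub_distrib]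
  -- T2
  have hT2 : ∑ j ∈ Finset.range (2*n+3), (-1:ℤ)^j * (Nat.choose (2*n+1) j : ℤ) * (Nat.choose j c : ℤ)
      = if c = 2*n+1 then (-1:ℤ)^(2*n+1) else 0 := by
    rw [Finset.sum_range_succ]
    rw [Nat.choose_eq_zero_of_lt (show 2*n+1 < 2*n+2 by omega)]
    simpa using orth (2*n+1) c
  -- T1
  have hT1 : ∑ j ∈ Finset.range (2*n+3), (-1:ℤ)^j * (if j = 0 then 0 else (Nat.choose (2*n+1) (j-1) : ℤ)) * (Nat.choose j c : ℤ)
      = - (if c - 1 = 2*n+1 then (-1:ℤ)^(2*n+1) else 0) - (if c = 2*n+1 then (-1:ℤ)^(2*n+1) else 0) := by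
    rw [Finset.sum_range_succ']
    simp only [if_pos rfl]
    have hterm : ∀ k, (-1:ℤ)^(k+1) * (if k+1 = 0 then 0 else (Nat.choose (2*n+1) (k+1-1) : ℤ)) * (Nat.choose (k+1) c : ℤ)
        = - ((-1:ℤ)^k * (Nat.choose (2*n+1) k : ℤ) * (Nat.choose k (c-1) : ℤ))
          - ((-1:ℤ)^k * (Nat.choose (2*n+1) k : ℤ) * (Nat.choose k c : ℤ)) := by
      intro k
      rw [if_neg (by omega)]
      have hsucc : Nat.choose (k+1) c = Nat.choose k (c-1) + Nat.choose k c := by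
        have : c - 1 + 1 = c := by omega
        rw [← this, Nat.choose_succ_succ]
        congr 1
      rw [show k+1-1 = k from rfl, hsucc]
      push_cast
      ring
    rw [Finset.sum_congr rfl (fun k _ => hterm k)]
    rw [Finset.sum_sub_distrib]
    have o1 := orth (2*n+1) (c-1)
    have o2 := orth (2*n+1) c
    rw [show (2*n+1)+1 = 2*n+2 by omega] at o1 o2
    rw [Finset.sum_neg_distrib, o1, o2]
    simp
  have hneg : (-1:ℤ)^(2*n+1) = -1 := Odd.neg_one_pow ⟨n, by omega⟩
  rw [hT1, hT2, hneg]
  split_ifs <;> omega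


def gmat (n : ℕ) (c : Fin n → ℕ) : Matrix (Fin n) (Fin n) ℤ := fun i k => gcol n (c k) i

def condDS (n : ℕ) (c : Fin n → ℕ) : Prop :=
  (∀ j k : Fin n, j < k → c k < c j) ∧ ∀ j : Fin n, 2*n < c j + 2*(j:ℕ) + 2 ∧ c j ≤ 2*n

-- Pascal step
lemma gcol_succ (n c i : ℕ) (hc : 1 ≤ c) (hi : i ≤ 2*n) :
    gcol (n+1) c (i+1) = gcol n c i + gcol n (c-1) i := by
  obtain ⟨c', rfl⟩ : ∃ c', c = c' + 1 := ⟨c - 1, by omega⟩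
  unfold gcol
  rw [show 2*(n+1) - (i+1) = (2*n - i) + 1 by omega]
  rw [Nat.choose_succ_succ, Nat.choose_succ_succ]
  rw [show c' + 1 - 1 = c' from rfl]
  push_cast
  ring

-- strict chain
lemma strict_chain {m : ℕ} (c : Fin m → ℕ) (hs : ∀ j k : Fin m, j < k → c k < c j) :
    ∀ (t : ℕ) (j k : Fin m), (k : ℕ) = (j : ℕ) + t → c k + t ≤ c j := by
  intro t
  induction t with
  | zero => intro j k h; have : j = k := Fin.ext (by omega); subst this; omega
  | succ t iht =>
    intro j k h
    have hk' : (j:ℕ) + t < m := by omega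
    set k' : Fin m := ⟨(j:ℕ) + t, hk'⟩
    have h1 : c k < c k' := hs k' k (by simp [k', Fin.lt_def]; omega)
    have h2 : c k' + t ≤ c j := iht j k' rfl
    omega


/-- the core: submatrix determinant analysis -/
lemma coreDS (n : ℕ) (c : Fin (n+1) → ℕ)
    (ih : ∀ c' : Fin n → ℕ, (∀ j k : Fin n, j ≤ k → c' k ≤ c' j) →
      0 ≤ (gmat n c').det ∧ ((gmat n c').det ≠ 0 ↔ condDS n c'))
    (hstrict : ∀ j k : Fin (n+1), j < k → c k < c j)
    (hpos : ∀ k, 1 ≤ c k)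
    (hc0u : c 0 ≤ 2*n+2) (hc0l : 2*n+1 ≤ c 0) :
    0 ≤ ((gmat (n+1) c).submatrix Fin.succ Fin.succ).det ∧
      (((gmat (n+1) c).submatrix Fin.succ Fin.succ).det ≠ 0 ↔ condDS (n+1) c) := by
  classical
  -- chain bound : c (r.succ) + r + 1 ≤ c 0
  have hchain : ∀ r : Fin n, c r.succ + (r:ℕ) + 1 ≤ c 0 :=
    fun r => by
      have := strict_chain c hstrict ((r:ℕ)+1) 0 r.succ (by simp)
      omega
  have hchain2 : ∀ r r' : Fin n, r ≤ r' → c r'.succ + ((r':ℕ) - (r:ℕ)) ≤ c r.succ :=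
    fun r r' h => strict_chain c hstrict ((r':ℕ) - (r:ℕ)) r.succ r'.succ (by
      simp [Fin.val_succ]; omega)
  -- column tuples
  set cs : Finset (Fin n) → Fin n → ℕ :=
    fun s r => if r ∈ s then c r.succ else c r.succ - 1 with hcs
  -- antitone of each cs
  have hanti' : ∀ s : Finset (Fin n), ∀ j k : Fin n, j ≤ k → cs s k ≤ cs s j := by
    intro s j k hjk
    rcases eq_or_lt_of_le hjk with h | h
    · subst h; exact le_refl _
    · have h1 := hchain2 j k (le_of_lt h)
      have h2 : (j:ℕ) < (k:ℕ) := h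
      simp only [hcs]
      split_ifs <;> omega
  -- the decomposition of the submatrix determinant
  have hdec : ((gmat (n+1) c).submatrix Fin.succ Fin.succ).det
      = ∑ s : Finset (Fin n), (gmat n (cs s)).det := by
    set u : Fin n → (Fin n → ℤ) := fun r i => gcol n (c r.succ) i with hu
    set v : Fin n → (Fin n → ℤ) := fun r i => gcol n (c r.succ - 1) i with hv
    have hexp := MultilinearMap.map_add_univ
      ((Matrix.detRowAlternating : (Fin n → ℤ) [⋀^Fin n]→ₗ[ℤ] ℤ).toMultilinearMap) u v
    simp only [AlternatingMap.coe_multilinearMap] at hexp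
    have h2 : Matrix.transpose ((gmat (n+1) c).submatrix Fin.succ Fin.succ) = u + v := by
      funext r i
      show gmat (n+1) c i.succ r.succ = _
      show gcol (n+1) (c r.succ) ((i:ℕ)+1) = _
      rw [gcol_succ n (c r.succ) i (hpos _) (by have := i.isLt; omega)]
      rfl
    calc ((gmat (n+1) c).submatrix Fin.succ Fin.succ).det
        = Matrix.det (Matrix.transpose ((gmat (n+1) c).submatrix Fin.succ Fin.succ)) :=
          (Matrix.det_transpose _).symm
      _ = Matrix.detRowAlternating (u + v) := by rw [h2]; rfl
      _ = ∑ s : Finset (Fin n), Matrix.detRowAlternating (s.piecewise u v) := hexp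
      _ = ∑ s : Finset (Fin n), (gmat n (cs s)).det := by
          apply Finset.sum_congr rfl
          intro s _
          have h3 : s.piecewise u v = fun r i => Matrix.transpose (gmat n (cs s)) r i := by
            funext r i
            simp only [Finset.piecewise, hu, hv, hcs]
            by_cases h : r ∈ s <;> simp [gmat, Matrix.transpose_apply, h]
          rw [h3]
          exact (Matrix.det_transpose (gmat n (cs s)))
  rw [hdec]
  have hterm_nonneg : ∀ s : Finset (Fin n), 0 ≤ (gmat n (cs s)).det :=
    fun s => (ih (cs s) (hanti' s)).1
  constructor
  · exact Finset.sum_nonneg (fun s _ => hterm_nonneg s)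
  constructor
  · -- det ≠ 0 → cond ; contrapositive
    intro hne
    by_contra hcond
    apply hne
    apply Finset.sum_eq_zero
    intro s _
    -- find the violated index
    unfold condDS at hcond
    push_neg at hcond
    have hviol : ∃ j : Fin (n+1), c j + 2*(j:ℕ) + 2 ≤ 2*(n+1) := by
      rcases hcond hstrict with ⟨j, hj⟩
      rcases Nat.lt_or_ge (2*(n+1)) (c j + 2*(j:ℕ) + 2) with h | h
      · exfalso
        have h2 := hj h
        have h3 : c j ≤ 2*n+2 := by
          rcases eq_or_lt_of_le (Fin.zero_le j) with h0 | h0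
          · rw [← h0]; exact hc0u
          · exact le_trans (le_of_lt (hstrict 0 j h0)) hc0u
        omega
      · exact ⟨j, h⟩
    obtain ⟨j, hj⟩ := hviol
    have hjne : (j:ℕ) ≠ 0 := by
      intro h0
      have hj0 : j = 0 := Fin.ext h0
      subst hj0
      simp at hj
      omega
    have hjlt : (j:ℕ) - 1 < n := by have := j.isLt; omega
    set r : Fin n := ⟨(j:ℕ)-1, hjlt⟩
    have hrsucc : r.succ = j := Fin.ext (by show (j:ℕ) - 1 + 1 = j; omega)
    have hfail : ¬ condDS n (cs s) := by
      rintro ⟨_, h2⟩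
      have := (h2 r).1
      have hcsr : cs s r ≤ c j := by
        simp only [hcs]
        rw [hrsucc]
        split_ifs <;> omega
      simp only [r] at this hcsr
      omega
    have := (ih (cs s) (hanti' s)).2
    by_contra hne'
    exact hfail (this.mp hne')
  · -- cond → det ≠ 0
    intro hcond
    set sstar : Finset (Fin n) := Finset.univ.filter (fun r => c r.succ + (r:ℕ) ≠ 2*n+1) with hss
    have hmem : ∀ r : Fin n, r ∈ sstar ↔ c r.succ + (r:ℕ) ≠ 2*n+1 := by
      intro r; rw [hss, Finset.mem_filter]; simp
    have hposterm : 0 < (gmat n (cs sstar)).det := by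
      have hcnd : condDS n (cs sstar) := by
        constructor
        · intro r r' h
          have h1 := hstrict r.succ r'.succ (Fin.succ_lt_succ_iff.mpr h)
          have h2 := hchain r
          have h3 := hchain r'
          have h4 := hchain2 r r' (le_of_lt h)
          have h5 : (r:ℕ) < (r':ℕ) := h
          simp only [hcs, hmem r, hmem r']
          split_ifs <;> omega
        · intro r
          have h2 := hchain r
          have hc := (hcond.2 r.succ).1
          have hc' : 2*(n+1) < c r.succ + 2*((r:ℕ)+1) + 2 := by
            simpa [Fin.val_succ] using hc
          simp only [hcs, hmem r]
          constructor
          · split_ifs <;> omega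
          · split_ifs <;> omega
      have h := ih (cs sstar) (hanti' sstar)
      rcases lt_or_eq_of_le h.1 with hlt | heq
      · exact hlt
      · exfalso; exact (h.2.mpr hcnd) heq.symm
    have : 0 < ∑ s : Finset (Fin n), (gmat n (cs s)).det := by
      apply Finset.sum_pos' (fun s _ => hterm_nonneg s)
      exact ⟨sstar, Finset.mem_univ _, hposterm⟩
    omega

lemma alpha_zero (n : ℕ) : alphaDS n 0 = 1 := by simp [alphaDS]

lemma row_combo (n : ℕ) (c : Fin (n+1) → ℕ) (k : Fin (n+1)) (hck : 1 ≤ c k) :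
    (∑ i : Fin (n+1), alphaDS n (i:ℕ) • gmat (n+1) c i) k
      = if c k = 2*n+2 then 1 else if c k = 2*n+1 then 2 else 0 := by
  rw [Finset.sum_apply]
  have h1 : ∀ i : Fin (n+1), (alphaDS n (i:ℕ) • gmat (n+1) c i) k
      = alphaDS n (i:ℕ) * gcol (n+1) (c k) (i:ℕ) := by
    intro i; rfl
  rw [Finset.sum_congr rfl (fun i _ => h1 i)]
  rw [Fin.sum_univ_eq_sum_range (fun i => alphaDS n i * gcol (n+1) (c k) i) (n+1)]
  exact alpha_row n (c k) hck

section Main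
theorem mainDS : ∀ (n : ℕ) (c : Fin n → ℕ), (∀ j k : Fin n, j ≤ k → c k ≤ c j) →
    0 ≤ (gmat n c).det ∧ ((gmat n c).det ≠ 0 ↔ condDS n c) := by
  intro n
  induction n with
  | zero =>
    intro c _
    rw [Matrix.det_isEmpty]
    refine ⟨by norm_num, ?_, ?_⟩
    · intro _; exact ⟨fun j => j.elim0, fun j => j.elim0⟩
    · intro _; norm_num
  | succ n ih =>
    intro c hanti
    by_cases hstrict : ∀ j k : Fin (n+1), j < k → c k < c j
    swap
    · push_neg at hstrict
      obtain ⟨j, k, hjk, hge⟩ := hstrict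
      have hdet : (gmat (n+1) c).det = 0 := by
        apply Matrix.det_zero_of_column_eq (ne_of_lt hjk)
        intro i
        have : c j = c k := le_antisymm hge (hanti j k (le_of_lt hjk))
        simp [gmat, this]
      rw [hdet]
      refine ⟨le_refl _, ?_⟩
      constructor
      · intro h; exact absurd rfl h
      · rintro ⟨h1, _⟩; exact absurd (h1 j k hjk) (by omega)
    by_cases hpos : ∀ k, 1 ≤ c k
    swap
    · push_neg at hpos
      obtain ⟨k, hk⟩ := hpos
      have hck : c k = 0 := by omega
      have hdet : (gmat (n+1) c).det = 0 := by
        apply Matrix.det_eq_zero_of_column_eq_zero k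
        intro i
        simp [gmat, gcol, hck]
      rw [hdet]
      refine ⟨le_refl _, ?_⟩
      constructor
      · intro h; exact absurd rfl h
      · rintro ⟨_, h2⟩
        have := (h2 k).1
        have : (k:ℕ) < n+1 := k.isLt
        omega
    by_cases hbig : 2*n+3 ≤ c 0
    · have hdet : (gmat (n+1) c).det = 0 := by
        apply Matrix.det_eq_zero_of_column_eq_zero 0
        intro i
        show gcol (n+1) (c 0) (i:ℕ) = 0
        unfold gcol
        rw [Nat.choose_eq_zero_of_lt (show 2*(n+1)-(i:ℕ) < c 0 by have := i.isLt; omega),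
            Nat.choose_eq_zero_of_lt (show (i:ℕ) < c 0 by have := i.isLt; omega)]
        simp
      rw [hdet]
      refine ⟨le_refl _, ?_⟩
      constructor
      · intro h; exact absurd rfl h
      · rintro ⟨_, h2⟩
        have := (h2 0).2
        omega
    by_cases hsmall : c 0 ≤ 2*n
    · have hdetB := Matrix.det_updateRow_sum (gmat (n+1) c) 0 (fun i => alphaDS n (i:ℕ))
      have hrow0 : ∀ k, (∑ i : Fin (n+1), alphaDS n (i:ℕ) • gmat (n+1) c i) k = 0 := by
        intro k
        rw [row_combo n c k (hpos k)]
        have hk : c k ≤ 2*n := le_trans (hanti 0 k (Fin.zero_le k)) hsmall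
        rw [if_neg (by omega), if_neg (by omega)]
      have hdet : (gmat (n+1) c).det = 0 := by
        have hz : ((gmat (n+1) c).updateRow 0 (∑ i : Fin (n+1), alphaDS n (i:ℕ) • gmat (n+1) c i)).det = 0 := by
          apply Matrix.det_eq_zero_of_row_eq_zero 0
          intro j
          rw [Matrix.updateRow_self]
          exact hrow0 j
        rw [hdetB] at hz
        simpa [alpha_zero] using hz
      rw [hdet]
      refine ⟨le_refl _, ?_⟩
      constructor
      · intro h; exact absurd rfl h
      · rintro ⟨_, h2⟩
        have := (h2 0).1
        simp at this
        omega
    have hc0l : 2*n+1 ≤ c 0 := by omega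
    have hc0u : c 0 ≤ 2*n+2 := by omega
    have hcore := coreDS n c ih hstrict hpos hc0u hc0l
    by_cases hc0 : c 0 = 2*n+2
    · -- column 0 is e_0 ; det A = det submatrix
      have hcol : ∀ i : Fin (n+1), gmat (n+1) c i 0 = if i = 0 then 1 else 0 := by
        intro i
        show gcol (n+1) (c 0) (i:ℕ) = _
        unfold gcol
        rw [hc0]
        by_cases hi : i = 0
        · subst hi
          simp only [Fin.val_zero, if_true, eq_self_iff_true]
          rw [show 2*(n+1) - 0 = 2*n+2 by omega, Nat.choose_self,
              Nat.choose_eq_zero_of_lt (show 0 < 2*n+2 by omega)]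
          norm_num
        · rw [if_neg hi]
          have hi' : 1 ≤ (i:ℕ) := by
            rcases Nat.eq_or_lt_of_le (Nat.zero_le (i:ℕ)) with h | h
            · exfalso; exact hi (Fin.ext h.symm)
            · omega
          rw [Nat.choose_eq_zero_of_lt (show 2*(n+1)-(i:ℕ) < 2*n+2 by have := i.isLt; omega),
              Nat.choose_eq_zero_of_lt (show (i:ℕ) < 2*n+2 by have := i.isLt; omega)]
          simp
      have hdet : (gmat (n+1) c).det = ((gmat (n+1) c).submatrix Fin.succ Fin.succ).det := by
        rw [Matrix.det_succ_column_zero]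
        rw [Finset.sum_eq_single 0]
        · rw [hcol 0, if_pos rfl]
          rw [Fin.succAbove_zero]
          simp
        · intro i _ hine
          rw [hcol i, if_neg hine]
          ring
        · intro h; exact absurd (Finset.mem_univ 0) h
      rw [hdet]
      exact hcore
    · have hc0' : c 0 = 2*n+1 := by omega
      have hdetB := Matrix.det_updateRow_sum (gmat (n+1) c) 0 (fun i => alphaDS n (i:ℕ))
      set B := (gmat (n+1) c).updateRow 0 (∑ i : Fin (n+1), alphaDS n (i:ℕ) • gmat (n+1) c i) with hB
      have hrow0 : ∀ k, B 0 k = if k = 0 then 2 else 0 := by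
        intro k
        rw [hB, Matrix.updateRow_self]
        rw [row_combo n c k (hpos k)]
        by_cases hk : k = 0
        · subst hk
          rw [if_neg (show ¬ (c 0 = 2*n+2) by omega), if_pos hc0', if_pos rfl]
        · have : c k < c 0 := hstrict 0 k (by
            rcases Nat.eq_or_lt_of_le (Nat.zero_le (k:ℕ)) with h | h
            · exact absurd (Fin.ext h.symm) hk
            · exact (Fin.lt_def).mpr (by simpa using h))
          rw [if_neg (by omega), if_neg (by omega), if_neg hk]
      have hsubB : B.submatrix Fin.succ Fin.succ = (gmat (n+1) c).submatrix Fin.succ Fin.succ := by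
        funext i r
        show B i.succ r.succ = _
        rw [hB, Matrix.updateRow_ne (Fin.succ_ne_zero i)]
        rfl
      have hdet : (gmat (n+1) c).det = 2 * ((gmat (n+1) c).submatrix Fin.succ Fin.succ).det := by
        have h1 : B.det = (gmat (n+1) c).det := by
          rw [hB, hdetB]; simp [alpha_zero]
        rw [← h1, Matrix.det_succ_row_zero]
        rw [Finset.sum_eq_single 0]
        · rw [hrow0 0, if_pos rfl]
          rw [Fin.succAbove_zero, hsubB]
          simp
        · intro k _ hkne
          rw [hrow0 k, if_neg hkne]
          ring
        · intro h; exact absurd (Finset.mem_univ 0) h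
      rw [hdet]
      constructor
      · have := hcore.1; omega
      · have := hcore.2
        constructor
        · intro h; exact this.mp (by omega)
        · intro h
          have := this.mpr h
          omega
end Main


/-- **Lemma (Dehn–Sommerville bases, odd case).**
Let `n ≥ 1` and let `B = {b_1 < ⋯ < b_n} ⊆ {1,…,2n}` (here `b` is the strictly increasing
enumeration, 0-indexed, so `b k` is `b_{k+1}`).  The `n×n` matrix with entry
`C(2n-i, 2n+1-b_k) - C(i, 2n+1-b_k)` in row `i` and column `k` has nonzero determinant
iff `b_k ≤ 2k` for all `1 ≤ k ≤ n` (0-indexed: `b k ≤ 2(k+1)`). -/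
theorem dehnSommerville_odd_basis_iff (n : ℕ) (hn : 1 ≤ n)
    (b : Fin n → ℕ) (hmono : StrictMono b)
    (hlb : ∀ k, 1 ≤ b k) (hub : ∀ k, b k ≤ 2 * n) :
    (Matrix.det (fun i k : Fin n =>
        ((Nat.choose (2 * n - (i : ℕ)) (2 * n + 1 - b k) : ℤ)
          - (Nat.choose (i : ℕ) (2 * n + 1 - b k) : ℤ))) ≠ 0)
      ↔ ∀ k : Fin n, b k ≤ 2 * ((k : ℕ) + 1) := by
  have hmain := mainDS n (fun k => 2*n+1 - b k) (by
    intro j k hjk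
    have h1 : b j ≤ b k := hmono.monotone hjk
    show 2*n+1 - b k ≤ 2*n+1 - b j
    omega)
  have hmat : (fun i k : Fin n =>
        ((Nat.choose (2 * n - (i : ℕ)) (2 * n + 1 - b k) : ℤ)
          - (Nat.choose (i : ℕ) (2 * n + 1 - b k) : ℤ)))
      = gmat n (fun k => 2*n+1 - b k) := rfl
  rw [hmat, hmain.2]
  constructor
  · rintro ⟨h1, h2⟩ k
    have h3 := (h2 k).1
    simp only at h3
    have h4 := hub k
    have h5 := hlb k
    omega
  · intro h
    constructor
    · intro j k hjk
      have h1 : b j < b k := hmono hjk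
      have h2 := hub k
      show 2*n+1 - b k < 2*n+1 - b j
      omega
    · intro j
      have h1 := h j
      have h2 := hlb j
      have h3 := hub j
      refine ⟨?_, ?_⟩
      · show 2*n < 2*n+1 - b j + 2*(j:ℕ) + 2
        omega
      · show 2*n+1 - b j ≤ 2*n
        omega
end

section
/- For every n ≥ 1, the number of (n+1)-element subsets B of {1, 2, ..., 2n+1} for which the (n+1)×(n+1) submatrix of M_{2n} on the columns labeled by B has nonzero determinant equals the Catalan number C_{n+1} = (1/(n+2))·C(2n+2, n+1). -/
open Polynomial Finset Matrix


noncomputable def gpoly (n k : ℕ) : ℤ[X] := (1 + X) ^ (n - k) * X ^ (2 * k + 1)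

noncomputable def Gmat (n : ℕ) (m : Fin (n+1) → ℕ) : Matrix (Fin (n+1)) (Fin (n+1)) ℤ :=
  fun k j => (gpoly n (k : ℕ)).coeff (m j)

lemma gpoly_coeff (n k m : ℕ) :
    (gpoly n k).coeff m =
      if 2 * k + 1 ≤ m then ((n - k).choose (m - (2 * k + 1)) : ℤ) else 0 := by
  rw [gpoly, coeff_mul_X_pow', coeff_one_add_X_pow]

lemma gpoly_coeff_of_lt (n k m : ℕ) (h : m < 2 * k + 1) : (gpoly n k).coeff m = 0 := by
  rw [gpoly_coeff, if_neg (by omega)]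

lemma gpoly_coeff_of_big (n k m : ℕ) (hk : k ≤ n) (h : n + k + 1 < m) :
    (gpoly n k).coeff m = 0 := by
  rw [gpoly_coeff]
  split_ifs with h1
  · rw [Nat.choose_eq_zero_of_lt (by omega), Nat.cast_zero]
  · rfl

lemma gpoly_succ (n k : ℕ) (hk : k ≤ n) : gpoly (n+1) k = (1 + X) * gpoly n k := by
  rw [gpoly, gpoly, show n + 1 - k = (n - k) + 1 by omega, pow_succ]
  ring

lemma coeff_one_add_X_mul (p : ℤ[X]) (m : ℕ) (hm : 1 ≤ m) :
    ((1 + X) * p).coeff m = p.coeff m + p.coeff (m - 1) := by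
  obtain ⟨d, rfl⟩ := Nat.exists_eq_add_of_le hm
  rw [add_mul, one_mul, coeff_add, show 1 + d = d + 1 by omega, coeff_X_mul]
  simp

/-- determinant vanishes if some columns are supported on too few rows -/
lemma det_eq_zero_of_low_block {R : Type*} [CommRing R] {N : ℕ}
    (A : Matrix (Fin N) (Fin N) R) (t : Fin N)
    (h : ∀ k j : Fin N, j ≤ t → t ≤ k → A k j = 0) : A.det = 0 := by
  rw [Matrix.det_apply]
  refine Finset.sum_eq_zero fun σ _ => ?_
  have : ∃ j : Fin N, j ≤ t ∧ t ≤ σ j := by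
    by_contra hc
    push_neg at hc
    have hmaps : ∀ j ∈ Finset.Iic t, σ j ∈ Finset.Iio t := by
      intro j hj
      rw [Finset.mem_Iio]
      exact hc j (Finset.mem_Iic.mp hj)
    have hcard := Finset.card_le_card_of_injOn σ hmaps
      (fun a _ b _ hab => σ.injective hab)
    rw [Fin.card_Iic, Fin.card_Iio] at hcard
    omega
  obtain ⟨j, hj1, hj2⟩ := this
  have : (∏ i : Fin N, A (σ i) i) = 0 :=
    Finset.prod_eq_zero (Finset.mem_univ j) (h (σ j) j hj1 hj2)
  rw [this, smul_zero]

lemma Gmat_det_eq_zero (n : ℕ) (m : Fin (n+1) → ℕ) (hm : Monotone m)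
    (j0 : Fin (n+1)) (hj0 : m j0 < 2 * (j0 : ℕ) + 1) : (Gmat n m).det = 0 := by
  refine det_eq_zero_of_low_block _ j0 fun k j hj hk => ?_
  have : m j ≤ m j0 := hm hj
  exact gpoly_coeff_of_lt _ _ _ (by have := hk; omega)

lemma Gmat_det_last (n : ℕ) (m : Fin (n+2) → ℕ)
    (hlast : m (Fin.last (n+1)) = 2 * (n+1) + 1)
    (hothers : ∀ j : Fin (n+2), j ≠ Fin.last (n+1) → m j < 2 * (n+1) + 1) :
    (Gmat (n+1) m).det
      = Matrix.det (Matrix.of fun k j : Fin (n+1) =>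
          (gpoly (n+1) (k : ℕ)).coeff (m j.castSucc)) := by
  rw [Matrix.det_succ_row (Gmat (n+1) m) (Fin.last (n+1))]
  have hrow : ∀ j : Fin (n+2), Gmat (n+1) m (Fin.last (n+1)) j
      = if j = Fin.last (n+1) then 1 else 0 := by
    intro j
    have : gpoly (n+1) ((Fin.last (n+1) : Fin (n+2)) : ℕ) = X ^ (2 * (n+1) + 1) := by
      rw [gpoly]
      simp [Fin.val_last]
    rw [Gmat, this, coeff_X_pow]
    by_cases hj : j = Fin.last (n+1)
    · rw [if_pos hj, if_pos (by rw [hj, hlast])]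
    · rw [if_neg hj, if_neg (by have := hothers j hj; omega)]
  rw [Finset.sum_eq_single (Fin.last (n+1))]
  · rw [hrow, if_pos rfl, Fin.succAbove_last, Fin.val_last]
    have hsign : ((-1 : ℤ)) ^ ((n+1) + (n+1)) = 1 := by
      rw [show (n+1) + (n+1) = 2 * (n+1) by omega, pow_mul]
      norm_num
    rw [hsign, one_mul, one_mul]
    congr 1
  · intro j _ hj
    rw [hrow, if_neg hj, mul_zero, zero_mul]
  · intro h
    exact absurd (Finset.mem_univ _) h

lemma det_split (N : ℕ) (v w : Fin N → Fin N → ℤ) :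
    Matrix.det (Matrix.of fun k j : Fin N => v j k + w j k)
      = ∑ s : Finset (Fin N),
          Matrix.det (Matrix.of fun k j : Fin N => if j ∈ s then v j k else w j k) := by
  rw [← Matrix.det_transpose]
  have h1 : (Matrix.of fun k j : Fin N => v j k + w j k)ᵀ = Matrix.of (v + w) := by
    ext i j
    simp [Matrix.transpose_apply]
  rw [h1]
  have h2 := (Matrix.detRowAlternating :
      (Fin N → ℤ) [⋀^Fin N]→ₗ[ℤ] ℤ).toMultilinearMap.map_add_univ v w
  have h3 : Matrix.det (Matrix.of (v + w))
      = ∑ s : Finset (Fin N), Matrix.det (Matrix.of (s.piecewise v w)) := h2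
  rw [h3]
  refine Finset.sum_congr rfl fun s _ => ?_
  rw [← Matrix.det_transpose (Matrix.of (s.piecewise v w))]
  congr 1
  ext k j
  simp only [Matrix.transpose_apply, Finset.piecewise, Matrix.of_apply]
  split_ifs <;> rfl

lemma strictMono_gap {N : ℕ} (f : Fin N → ℕ) (hf : StrictMono f) (a b : Fin N)
    (hab : (a : ℕ) ≤ (b : ℕ)) : f a + ((b : ℕ) - (a : ℕ)) ≤ f b := by
  obtain ⟨d, hd⟩ := Nat.exists_eq_add_of_le hab
  induction d generalizing b with
  | zero =>
    have : a = b := Fin.ext (by omega)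
    subst this
    simp
  | succ d ih =>
    have hb' : (a : ℕ) + d < N := by have := b.isLt; omega
    have h1 := ih ⟨(a : ℕ) + d, hb'⟩ (by simp) (by simp)
    have h2 : f ⟨(a : ℕ) + d, hb'⟩ < f b := hf (by rw [Fin.lt_def]; simp; omega)
    simp only [Fin.val_mk] at h1
    omega

theorem Gmat_det_pos : ∀ (n : ℕ) (m : Fin (n+1) → ℕ), StrictMono m →
    (∀ j, 1 ≤ m j) → (∀ j, m j ≤ 2 * n + 1) → (∀ j : Fin (n+1), 2 * (j : ℕ) + 1 ≤ m j) →
    0 < (Gmat n m).det := by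
  intro n
  induction n with
  | zero =>
    intro m _ h1 h2 _
    have hm0 : m 0 = 1 := le_antisymm (by simpa using h2 0) (h1 0)
    have : (Gmat 0 m).det = Gmat 0 m 0 0 := Matrix.det_fin_one _
    rw [this]
    show (0 : ℤ) < (gpoly 0 ((0 : Fin 1) : ℕ)).coeff (m 0)
    rw [hm0]
    norm_num [gpoly_coeff]
  | succ n IH =>
    intro m hsm h1 h2 h3
    have hlast : m (Fin.last (n+1)) = 2 * (n+1) + 1 := by
      have := h2 (Fin.last (n+1)); have := h3 (Fin.last (n+1))
      simp only [Fin.val_last] at *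
      omega
    have hothers : ∀ j : Fin (n+2), j ≠ Fin.last (n+1) → m j < 2 * (n+1) + 1 := by
      intro j hj
      have : j < Fin.last (n+1) := Fin.lt_last_iff_ne_last.mpr hj
      have := hsm this
      omega
    rw [Gmat_det_last n m hlast hothers]
    set m' : Fin (n+1) → ℕ := fun j => m j.castSucc with hm'def
    have hsm' : StrictMono m' := fun a b hab => hsm (by simpa using hab)
    have h3' : ∀ j : Fin (n+1), 2 * (j : ℕ) + 1 ≤ m' j := by
      intro j; have := h3 j.castSucc; simpa using this
    have h1' : ∀ j : Fin (n+1), 1 ≤ m' j := fun j => le_trans (by omega) (h3' j)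
    have hub : ∀ j : Fin (n+1), m' j ≤ n + 2 + (j : ℕ) := by
      intro j
      have hgap := strictMono_gap m' hsm' j (Fin.last n) (by simp [Fin.le_def]; omega)
      have hlt : m' (Fin.last n) < m (Fin.last (n+1)) := hsm (by
        rw [Fin.lt_def]; simp)
      have hj := j.isLt
      simp only [Fin.val_last] at hgap
      omega
    -- split the inner determinant
    have hmat : (Matrix.of fun k j : Fin (n+1) =>
          (gpoly (n+1) (k : ℕ)).coeff (m j.castSucc))
        = Matrix.of fun k j : Fin (n+1) =>
            (gpoly n (k : ℕ)).coeff (m' j) + (gpoly n (k : ℕ)).coeff (m' j - 1) := by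
      ext k j
      simp only [Matrix.of_apply]
      rw [gpoly_succ n (k : ℕ) (by omega), coeff_one_add_X_mul _ _ (h1' j)]
    rw [hmat]
    rw [det_split (n+1) (fun j k => (gpoly n (k : ℕ)).coeff (m' j))
        (fun j k => (gpoly n (k : ℕ)).coeff (m' j - 1))]
    -- each term equals a Gmat determinant
    have hterm : ∀ s : Finset (Fin (n+1)),
        (Matrix.of fun k j : Fin (n+1) => if j ∈ s
            then (gpoly n (k : ℕ)).coeff (m' j)
            else (gpoly n (k : ℕ)).coeff (m' j - 1))
          = Gmat n (fun j => if j ∈ s then m' j else m' j - 1) := by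
      intro s
      ext k j
      by_cases hj : j ∈ s <;> simp [Gmat, hj]
    refine Finset.sum_pos' (fun s _ => ?_) ?_
    · -- nonnegativity of each term
      rw [hterm s]
      set ε : Fin (n+1) → ℕ := fun j => if j ∈ s then m' j else m' j - 1 with hεdef
      have hεle : ∀ j, ε j ≤ m' j := by
        intro j; rw [hεdef]; dsimp only; split_ifs <;> omega
      have hεge : ∀ j, m' j - 1 ≤ ε j := by
        intro j; rw [hεdef]; dsimp only; split_ifs <;> omega
      by_cases hinj : Function.Injective ε
      · have hmono : StrictMono ε := by
          intro a b hab
          have hne : ε a ≠ ε b := fun h => absurd (hinj h) (ne_of_lt hab)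
          have : m' a < m' b := hsm' hab
          have := hεle a; have := hεge b; have := h1' a
          omega
        by_cases h0 : ∃ j, ε j = 0
        · obtain ⟨j, hj⟩ := h0
          rw [Matrix.det_eq_zero_of_column_eq_zero j
            (fun k => by rw [Gmat, hj]; exact gpoly_coeff_of_lt _ _ _ (by omega))]
        · push_neg at h0
          by_cases hbig : ∃ j, 2 * n + 1 < ε j
          · obtain ⟨j, hj⟩ := hbig
            have hk : ∀ k : Fin (n+1), Gmat n ε k j = 0 := by
              intro k
              apply gpoly_coeff_of_big n (k : ℕ) (ε j) (by omega)
              have := hεle j; have := hub j; have hj2 := j.isLt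
              have hk2 := k.isLt
              omega
            rw [Matrix.det_eq_zero_of_column_eq_zero j hk]
          · push_neg at hbig
            by_cases hst : ∀ j : Fin (n+1), 2 * (j : ℕ) + 1 ≤ ε j
            · exact le_of_lt (IH ε hmono (fun j => Nat.one_le_iff_ne_zero.mpr (h0 j))
                hbig hst)
            · push_neg at hst
              obtain ⟨j0, hj0⟩ := hst
              rw [Gmat_det_eq_zero n ε hmono.monotone j0 hj0]
      · -- two equal columns
        rw [Function.not_injective_iff] at hinj
        obtain ⟨a, b, hab, hne⟩ := hinj
        rw [Matrix.det_zero_of_column_eq hne (fun k => by rw [Gmat, Gmat, hab])]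
    · -- the positive term
      refine ⟨Finset.univ.filter (fun j => m' j ≤ n + 1 + (j : ℕ)), Finset.mem_univ _, ?_⟩
      rw [hterm]
      set s : Finset (Fin (n+1)) := Finset.univ.filter (fun j => m' j ≤ n + 1 + (j : ℕ))
        with hsdef
      set ε : Fin (n+1) → ℕ := fun j => if j ∈ s then m' j else m' j - 1 with hεdef
      have hmem : ∀ j, j ∈ s ↔ m' j ≤ n + 1 + (j : ℕ) := by
        intro j; rw [hsdef]; simp
      have hεmin : ∀ j, ε j = min (m' j) (n + 1 + (j : ℕ)) := by
        intro j
        rw [hεdef]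
        dsimp only
        by_cases hj : j ∈ s
        · rw [if_pos hj, min_eq_left ((hmem j).mp hj)]
        · have h4 := (hmem j).not.mp hj
          push_neg at h4
          have := hub j
          rw [if_neg hj, min_eq_right (by omega)]
          omega
      have hmono : StrictMono ε := by
        intro a b hab
        rw [hεmin, hεmin]
        have h5 : m' a < m' b := hsm' hab
        have h6 : (a : ℕ) < (b : ℕ) := hab
        rcases min_cases (m' b) (n + 1 + (b : ℕ)) with ⟨he, _⟩ | ⟨he, _⟩ <;>
          rw [he] <;>
          [exact lt_of_le_of_lt (min_le_left _ _) h5;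
           exact lt_of_le_of_lt (min_le_right _ _) (by omega)]
      have hstair : ∀ j : Fin (n+1), 2 * (j : ℕ) + 1 ≤ ε j := by
        intro j
        rw [hεmin]
        have := h3' j
        have := j.isLt
        exact le_min (by omega) (by omega)
      refine IH ε hmono (fun j => le_trans (by omega) (hstair j)) ?_ hstair
      intro j
      rw [hεmin]
      have := j.isLt
      exact le_trans (min_le_right _ _) (by omega)

lemma gpoly_mul_X2 (t j : ℕ) : X ^ 2 * gpoly t j = gpoly (t+1) (j+1) := by
  rw [gpoly, gpoly, Nat.succ_sub_succ, show 2 * (j+1) + 1 = (2*j+1) + 2 by omega, pow_add]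
  ring

lemma gpoly_mul_a (t j : ℕ) (hj : j ≤ t) : (1 + X) * gpoly t j = gpoly (t+1) j := by
  rw [gpoly, gpoly, show t + 1 - j = (t - j) + 1 by omega, pow_succ]
  ring

lemma gpoly_mul_a2 (t j : ℕ) (hj : j ≤ t) : (1 + X) ^ 2 * gpoly t j = gpoly (t+2) j := by
  rw [gpoly, gpoly, show t + 2 - j = (t - j) + 2 by omega, pow_add]
  ring

lemma key_rec (t : ℕ) :
    ((1 + X : ℤ[X])) ^ (2 * (t + 2) + 1) - 1
      = (X ^ 2 + 2 * X + 2) * ((1 + X) ^ (2 * (t + 1) + 1) - 1)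
        - (1 + X) ^ 2 * ((1 + X) ^ (2 * t + 1) - 1) := by
  have e1 : 2 * (t + 2) + 1 = (2 * t + 1) + 4 := by omega
  have e2 : 2 * (t + 1) + 1 = (2 * t + 1) + 2 := by omega
  rw [e1, e2, pow_add, pow_add]
  ring

lemma exists_rep (t : ℕ) : ∃ c : ℕ → ℤ, c t = 1 ∧
    ((1 + X : ℤ[X])) ^ (2 * t + 1) - 1
      = ∑ j ∈ Finset.range (t + 1), c j • gpoly t j := by
  induction t using Nat.strong_induction_on with
  | _ t IH =>
    match t with
    | 0 =>
      refine ⟨fun _ => 1, rfl, ?_⟩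
      rw [Finset.sum_range_one, gpoly]
      simp
    | 1 =>
      refine ⟨fun j => if j = 0 then 3 else 1, rfl, ?_⟩
      rw [Finset.sum_range_succ, Finset.sum_range_one, gpoly, gpoly]
      norm_num
      ring
    | (t + 2) =>
      obtain ⟨c1, hc1top, hc1⟩ := IH (t + 1) (by omega)
      obtain ⟨c0, hc0top, hc0⟩ := IH t (by omega)
      refine ⟨fun j => (if j = 0 then 0 else c1 (j - 1))
        + (if j < t + 2 then 2 * c1 j else 0) - (if j < t + 1 then c0 j else 0),
        by norm_num [hc1top], ?_⟩
      rw [key_rec t, hc1, hc0]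
      have expand : (X ^ 2 + 2 * X + 2 : ℤ[X]) * ∑ j ∈ Finset.range (t + 2), c1 j • gpoly (t+1) j
          = (∑ j ∈ Finset.range (t + 2), c1 j • gpoly (t+2) (j+1))
            + ∑ j ∈ Finset.range (t + 2), (2 * c1 j) • gpoly (t+2) j := by
        rw [Finset.mul_sum, ← Finset.sum_add_distrib]
        refine Finset.sum_congr rfl fun j hj => ?_
        have hj' : j ≤ t + 1 := by have := Finset.mem_range.mp hj; omega
        have : (X ^ 2 + 2 * X + 2 : ℤ[X]) * gpoly (t+1) j
            = gpoly (t+2) (j+1) + 2 * gpoly (t+2) j := by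
          rw [← gpoly_mul_X2 (t+1) j, ← gpoly_mul_a (t+1) j hj']
          ring
        rw [mul_smul_comm, this, smul_add]
        congr 1
        rw [mul_comm 2 (c1 j), mul_smul, zsmul_eq_mul]
        norm_num
      have expand2 : (1 + X : ℤ[X]) ^ 2 * ∑ j ∈ Finset.range (t + 1), c0 j • gpoly t j
          = ∑ j ∈ Finset.range (t + 1), c0 j • gpoly (t+2) j := by
        rw [Finset.mul_sum]
        refine Finset.sum_congr rfl fun j hj => ?_
        have hj' : j ≤ t := by have := Finset.mem_range.mp hj; omega
        rw [mul_smul_comm, gpoly_mul_a2 t j hj']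
      rw [expand, expand2]
      -- now massage the target sum
      simp only [sub_smul, add_smul]
      rw [Finset.sum_sub_distrib, Finset.sum_add_distrib]
      have hA : ∑ j ∈ Finset.range (t + 3), (if j = 0 then (0:ℤ) else c1 (j-1)) • gpoly (t+2) j
          = ∑ j ∈ Finset.range (t + 2), c1 j • gpoly (t+2) (j+1) := by
        rw [Finset.sum_range_succ' (fun j => (if j = 0 then (0:ℤ) else c1 (j-1)) • gpoly (t+2) j) (t+2)]
        simp
      have hB : ∑ j ∈ Finset.range (t + 3), (if j < t + 2 then 2 * c1 j else (0:ℤ)) • gpoly (t+2) j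
          = ∑ j ∈ Finset.range (t + 2), (2 * c1 j) • gpoly (t+2) j := by
        rw [Finset.sum_range_succ]
        rw [if_neg (by omega), zero_smul, add_zero]
        refine Finset.sum_congr rfl fun j hj => ?_
        rw [if_pos (Finset.mem_range.mp hj)]
      have hC : ∑ j ∈ Finset.range (t + 3), (if j < t + 1 then c0 j else (0:ℤ)) • gpoly (t+2) j
          = ∑ j ∈ Finset.range (t + 1), c0 j • gpoly (t+2) j := by
        rw [Finset.sum_range_succ, Finset.sum_range_succ]
        rw [if_neg (by omega), zero_smul, add_zero, if_neg (by omega), zero_smul, add_zero]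
        exact Finset.sum_congr rfl fun j hj => by rw [if_pos (Finset.mem_range.mp hj)]
      rw [hA, hB, hC]

noncomputable def crep (t : ℕ) : ℕ → ℤ := Classical.choose (exists_rep t)

lemma crep_top (t : ℕ) : crep t t = 1 := (Classical.choose_spec (exists_rep t)).1

lemma crep_spec (t : ℕ) : ((1 + X : ℤ[X])) ^ (2 * t + 1) - 1
    = ∑ j ∈ Finset.range (t + 1), crep t j • gpoly t j :=
  (Classical.choose_spec (exists_rep t)).2

noncomputable def Tfun (n i j : ℕ) : ℤ := if j ≤ n - i then crep (n - i) j else 0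

lemma f_rep (n i : ℕ) (hi : i ≤ n) :
    ((1 + X : ℤ[X])) ^ (2 * n + 1 - i) - (1 + X) ^ i
      = ∑ j ∈ Finset.range (n + 1), Tfun n i j • gpoly n j := by
  have h1 := crep_spec (n - i)
  have h2 : ((1 + X : ℤ[X])) ^ i * (((1 + X : ℤ[X])) ^ (2 * (n - i) + 1) - 1)
      = (1 + X) ^ (2 * n + 1 - i) - (1 + X) ^ i := by
    rw [mul_sub, mul_one, ← pow_add, show i + (2 * (n - i) + 1) = 2 * n + 1 - i by omega]
  rw [← h2, h1, Finset.mul_sum]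
  have h3 : ∀ j ∈ Finset.range (n - i + 1),
      (1 + X : ℤ[X]) ^ i * (crep (n - i) j • gpoly (n - i) j)
        = crep (n - i) j • gpoly n j := by
    intro j hj
    have hj' : j ≤ n - i := by have := Finset.mem_range.mp hj; omega
    rw [mul_smul_comm]
    congr 1
    rw [gpoly, gpoly, ← mul_assoc, ← pow_add, show i + (n - i - j) = n - j by omega]
  rw [Finset.sum_congr rfl h3]
  symm
  rw [← Finset.sum_subset (Finset.range_subset_range.mpr (show n - i + 1 ≤ n + 1 by omega))]
  · exact Finset.sum_congr rfl fun j hj => by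
      rw [Tfun, if_pos (show j ≤ n - i by have := Finset.mem_range.mp hj; omega)]
  · intro j hj hnj
    have h4 : n - i < j := by
      have := Finset.mem_range.mp hj
      have h5 : ¬ (j < n - i + 1) := fun h => hnj (Finset.mem_range.mpr h)
      omega
    rw [Tfun, if_neg (by omega), zero_smul]

noncomputable def Tmat (n : ℕ) : Matrix (Fin (n+1)) (Fin (n+1)) ℤ :=
  fun i j => Tfun n (i : ℕ) (j : ℕ)

lemma Tmat_det_unit (n : ℕ) : IsUnit (Tmat n).det := by
  have h1 : ((Tmat n).submatrix (Fin.revPerm : Equiv.Perm (Fin (n+1))) id).det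
      = Equiv.Perm.sign (Fin.revPerm : Equiv.Perm (Fin (n+1))) * (Tmat n).det :=
    Matrix.det_permute _ _
  have h2 : ((Tmat n).submatrix (Fin.revPerm : Equiv.Perm (Fin (n+1))) id).det = 1 := by
    rw [Matrix.det_of_lowerTriangular _ ?ht]
    case ht =>
      intro i j hij
      show Tfun n ((Fin.rev i : Fin (n+1)) : ℕ) (j : ℕ) = 0
      rw [Tfun, if_neg]
      rw [Fin.val_rev]
      have hji : (i : ℕ) < (j : ℕ) := hij
      have := j.isLt
      omega
    · rw [Finset.prod_eq_one]
      intro i _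
      show Tfun n ((Fin.rev i : Fin (n+1)) : ℕ) (i : ℕ) = 0 + 1 - 0
      rw [Tfun, Fin.val_rev]
      have := i.isLt
      rw [if_pos (by omega), show n - (n + 1 - (i + 1)) = (i : ℕ) by omega, crep_top]
      norm_num
  have : IsUnit (((Tmat n).submatrix (Fin.revPerm : Equiv.Perm (Fin (n+1))) id).det) := by
    rw [h2]; exact isUnit_one
  rw [h1] at this
  exact (IsUnit.mul_iff.mp this).2

theorem dsDetEven_ne_zero_iff (n : ℕ) (B : Finset ℕ) (hB : B.card = n + 1)
    (hsub : B ⊆ Finset.Icc 1 (2 * n + 1)) :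
    dsDetEven n B hB ≠ 0 ↔
      ∀ k : Fin (n+1), ((B.orderIsoOfFin hB k : ℕ)) ≤ 2 * (k : ℕ) + 1 := by
  set b : Fin (n+1) → ℕ := fun k => (B.orderIsoOfFin hB k : ℕ) with hbdef
  have hbIcc : ∀ k, 1 ≤ b k ∧ b k ≤ 2 * n + 1 := by
    intro k
    have : (B.orderIsoOfFin hB k : ℕ) ∈ B := (B.orderIsoOfFin hB k).2
    exact Finset.mem_Icc.mp (hsub this)
  have hbsm : StrictMono b := by
    intro x y hxy
    exact Subtype.coe_lt_coe.mpr ((B.orderIsoOfFin hB).strictMono hxy)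
  set F : Matrix (Fin (n+1)) (Fin (n+1)) ℤ := Matrix.of fun i k =>
    (((1 + X : ℤ[X])) ^ (2 * n + 1 - (i : ℕ)) - (1 + X) ^ (i : ℕ)).coeff (2 * n + 2 - b k)
    with hFdef
  have h_ds : dsDetEven n B hB = F.det := by
    rw [dsDetEven]
    congr 1
    ext i k
    rw [hFdef]
    simp only [Matrix.of_apply, coeff_sub, coeff_one_add_X_pow]
    rfl
  set m : Fin (n+1) → ℕ := fun j => 2 * n + 2 - b (Fin.rev j) with hmdef
  have hFT : F = (Tmat n) * ((Gmat n m).submatrix id (Fin.revPerm : Equiv.Perm (Fin (n+1)))) := by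
    ext i k
    rw [Matrix.mul_apply]
    have hGm : ∀ j : Fin (n+1),
        (Gmat n m).submatrix id (Fin.revPerm : Equiv.Perm (Fin (n+1))) j k
          = (gpoly n (j : ℕ)).coeff (2 * n + 2 - b k) := by
      intro j
      show (gpoly n (j : ℕ)).coeff (m (Fin.revPerm k)) = _
      rw [hmdef]
      simp only [Fin.revPerm_apply, Fin.rev_rev]
    simp only [hGm]
    rw [hFdef]
    simp only [Matrix.of_apply]
    rw [f_rep n (i : ℕ) (by omega), finset_sum_coeff]
    rw [← Fin.sum_univ_eq_sum_range
      (fun j => (Tfun n (i : ℕ) j • gpoly n j).coeff (2 * n + 2 - b k)) (n+1)]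
    refine Finset.sum_congr rfl fun j _ => ?_
    rw [coeff_smul, smul_eq_mul]
    rfl
  have hdet : F.det = (Tmat n).det *
      ((Equiv.Perm.sign (Fin.revPerm : Equiv.Perm (Fin (n+1))) : ℤ) * (Gmat n m).det) := by
    rw [hFT, Matrix.det_mul, Matrix.det_permute']
    norm_cast
  have hne : dsDetEven n B hB ≠ 0 ↔ (Gmat n m).det ≠ 0 := by
    rw [h_ds, hdet]
    have hu1 : IsUnit (Tmat n).det := Tmat_det_unit n
    have hu2 : IsUnit ((Equiv.Perm.sign (Fin.revPerm : Equiv.Perm (Fin (n+1))) : ℤ)) := by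
      rcases Int.units_eq_one_or (Equiv.Perm.sign (Fin.revPerm : Equiv.Perm (Fin (n+1)))) with h | h <;>
        rw [h] <;> simp
    constructor
    · intro h hG
      exact h (by rw [hG, mul_zero, mul_zero])
    · intro h hx
      rcases mul_eq_zero.mp hx with h1 | h1
      · exact hu1.ne_zero h1
      · rcases mul_eq_zero.mp h1 with h2 | h2
        · exact hu2.ne_zero h2
        · exact h h2
  rw [hne]
  have hmsm : StrictMono m := by
    intro x y hxy
    have h1 : Fin.rev y < Fin.rev x := Fin.rev_lt_rev.mpr hxy
    have h2 : b (Fin.rev y) < b (Fin.rev x) := hbsm h1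
    have := (hbIcc (Fin.rev x)).2
    rw [hmdef]
    dsimp only
    omega
  constructor
  · intro h k
    by_contra hk
    push_neg at hk
    refine h (Gmat_det_eq_zero n m hmsm.monotone (Fin.rev k) ?_)
    rw [hmdef]
    dsimp only
    rw [Fin.rev_rev]
    have h5 : ((Fin.rev k : Fin (n+1)) : ℕ) = n - (k : ℕ) := by
      rw [Fin.val_rev]; omega
    rw [h5]
    have := (hbIcc k).2
    have := k.isLt
    simp only [hbdef] at *
    omega
  · intro h
    have hpos : 0 < (Gmat n m).det := by
      refine Gmat_det_pos n m hmsm ?_ ?_ ?_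
      · intro j
        have := (hbIcc (Fin.rev j)).2
        rw [hmdef]; dsimp only; omega
      · intro j
        have := (hbIcc (Fin.rev j)).1
        rw [hmdef]; dsimp only; omega
      · intro j
        have h6 := h (Fin.rev j)
        have h5 : ((Fin.rev j : Fin (n+1)) : ℕ) = n - (j : ℕ) := by
          rw [Fin.val_rev]; omega
        rw [h5] at h6
        have := j.isLt
        rw [hmdef]; dsimp only
        simp only [hbdef] at *
        omega
    omega

open DyckStep in
def wdList (n : ℕ) (B : Finset ℕ) : List DyckStep :=
  (List.range (2*n+2)).map (fun t => if t+1 ∈ B then U else D)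

lemma wdList_length (n : ℕ) (B : Finset ℕ) : (wdList n B).length = 2*n+2 := by
  simp [wdList]

lemma wdList_take (n : ℕ) (B : Finset ℕ) (i : ℕ) :
    (wdList n B).take i
      = (List.range (min i (2*n+2))).map (fun t => if t+1 ∈ B then DyckStep.U else DyckStep.D) := by
  rw [wdList, ← List.map_take, List.take_range]

open DyckStep in
lemma count_U_map_range (N : ℕ) (B : Finset ℕ) :
    ((List.range N).map (fun t => if t+1 ∈ B then U else D)).count U
      = ((Finset.range N).filter (fun t => t+1 ∈ B)).card := by
  induction N with
  | zero => simp
  | succ N ih =>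
    rw [List.range_succ, List.map_append, List.count_append, ih, Finset.range_add_one,
      Finset.filter_insert]
    by_cases hN : N + 1 ∈ B
    · rw [if_pos hN, Finset.card_insert_of_notMem (fun h => by
        have := Finset.mem_of_mem_filter _ h
        exact absurd this (Finset.notMem_range_self))]
      simp [hN]
    · rw [if_neg hN]
      simp [hN]

open DyckStep in
lemma count_U_add_count_D (l : List DyckStep) : l.count U + l.count D = l.length := by
  induction l with
  | nil => simp
  | cons x t ih =>
    cases x <;> simp [List.count_cons] <;> omega

lemma cntR_eq_cnt (n : ℕ) (B : Finset ℕ) (hsub : B ⊆ Finset.Icc 1 (2*n+1)) (N : ℕ) :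
    ((Finset.range N).filter (fun t => t+1 ∈ B)).card = (B.filter (· ≤ N)).card := by
  refine Finset.card_bij (fun t _ => t + 1) ?_ ?_ ?_
  · intro t ht
    rw [Finset.mem_filter] at ht ⊢
    have := Finset.mem_range.mp ht.1
    exact ⟨ht.2, show t + 1 ≤ N by omega⟩
  · intro a ha b hb hab
    have : a + 1 = b + 1 := hab
    omega
  · intro x hx
    rw [Finset.mem_filter] at hx
    have h1 : 1 ≤ x := (Finset.mem_Icc.mp (hsub hx.1)).1
    refine ⟨x - 1, ?_, show x - 1 + 1 = x by omega⟩
    rw [Finset.mem_filter, Finset.mem_range]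
    refine ⟨by omega, ?_⟩
    rw [show x - 1 + 1 = x by omega]
    exact hx.1

lemma lt_cnt_iff (n : ℕ) (B : Finset ℕ) (hB : B.card = n + 1) (i : ℕ) (k : Fin (n+1)) :
    ((B.orderIsoOfFin hB k : ℕ)) ≤ i ↔ (k : ℕ) < (B.filter (· ≤ i)).card := by
  constructor
  · intro h
    have hc := Finset.card_le_card_of_injOn (fun k' : Fin (n+1) => ((B.orderIsoOfFin hB k' : ℕ)))
      (s := Finset.Iic k) (t := B.filter (· ≤ i)) ?_ ?_
    · rw [Fin.card_Iic] at hc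
      omega
    · intro k' hk'
      rw [Finset.mem_coe, Finset.mem_filter]
      refine ⟨(B.orderIsoOfFin hB k').2, le_trans ?_ h⟩
      exact_mod_cast (B.orderIsoOfFin hB).monotone (Finset.mem_Iic.mp hk')
    · intro a _ b _ hab
      exact (B.orderIsoOfFin hB).injective (Subtype.coe_injective hab)
  · intro h
    by_contra hc
    push_neg at hc
    have hsubi : B.filter (· ≤ i) ⊆ (Finset.Iio k).image
        (fun k' : Fin (n+1) => ((B.orderIsoOfFin hB k' : ℕ))) := by
      intro x hx
      rw [Finset.mem_filter] at hx
      set k' := (B.orderIsoOfFin hB).symm ⟨x, hx.1⟩ with hk'def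
      have hbk' : ((B.orderIsoOfFin hB k' : ℕ)) = x := by
        rw [hk'def, OrderIso.apply_symm_apply]
      rw [Finset.mem_image]
      refine ⟨k', ?_, hbk'⟩
      rw [Finset.mem_Iio]
      by_contra hkk
      push_neg at hkk
      have : ((B.orderIsoOfFin hB k : ℕ)) ≤ ((B.orderIsoOfFin hB k' : ℕ)) := by
        exact_mod_cast (B.orderIsoOfFin hB).monotone hkk
      rw [hbk'] at this
      omega
    have := le_trans (Finset.card_le_card hsubi)
      (le_trans (Finset.card_image_le) (le_of_eq (Fin.card_Iio k)))
    omega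

lemma cnt_le (n : ℕ) (B : Finset ℕ) (hB : B.card = n + 1) (i : ℕ) :
    (B.filter (· ≤ i)).card ≤ n + 1 := by
  rw [← hB]
  exact Finset.card_filter_le _ _

lemma cnt_all (n : ℕ) (B : Finset ℕ) (hB : B.card = n + 1)
    (hsub : B ⊆ Finset.Icc 1 (2*n+1)) {N : ℕ} (hN : 2*n+1 ≤ N) :
    (B.filter (· ≤ N)).card = n + 1 := by
  rw [← hB]
  congr 1
  apply Finset.filter_true_of_mem
  intro x hx
  have := (Finset.mem_Icc.mp (hsub hx)).2
  omega

lemma stair_iff (n : ℕ) (B : Finset ℕ) (hB : B.card = n + 1)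
    (hsub : B ⊆ Finset.Icc 1 (2*n+1)) :
    (∀ k : Fin (n+1), ((B.orderIsoOfFin hB k : ℕ)) ≤ 2 * (k : ℕ) + 1)
      ↔ ∀ i, i ≤ 2*n+2 → i ≤ 2 * (B.filter (· ≤ i)).card := by
  constructor
  · intro h i hi
    set c := (B.filter (· ≤ i)).card with hcdef
    by_cases hc : n + 1 ≤ c
    · omega
    · push_neg at hc
      have hklt : c < n + 1 := by omega
      have h3 : ¬ ((B.orderIsoOfFin hB ⟨c, hklt⟩ : ℕ)) ≤ i := fun hcon => by
        have h2 := (lt_cnt_iff n B hB i ⟨c, hklt⟩).mp hcon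
        simp only [Fin.val_mk] at h2
        omega
      have h4 := h ⟨c, hklt⟩
      simp only [Fin.val_mk] at h4
      omega
  · intro h k
    have hb1 : 1 ≤ ((B.orderIsoOfFin hB k : ℕ)) :=
      (Finset.mem_Icc.mp (hsub (B.orderIsoOfFin hB k).2)).1
    have hb2 : ((B.orderIsoOfFin hB k : ℕ)) ≤ 2*n+1 :=
      (Finset.mem_Icc.mp (hsub (B.orderIsoOfFin hB k).2)).2
    set i := ((B.orderIsoOfFin hB k : ℕ)) - 1 with hidef
    have h5 : ¬ ((B.orderIsoOfFin hB k : ℕ)) ≤ i := by omega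
    have h6 : ¬ ((k : ℕ) < (B.filter (· ≤ i)).card) := fun hcon =>
      h5 ((lt_cnt_iff n B hB i k).mpr hcon)
    have h7 := h i (by omega)
    omega

open DyckStep in
lemma wdList_count_take (n : ℕ) (B : Finset ℕ) (hsub : B ⊆ Finset.Icc 1 (2*n+1)) (i : ℕ) :
    ((wdList n B).take i).count U = (B.filter (· ≤ min i (2*n+2))).card := by
  rw [wdList_take, count_U_map_range, cntR_eq_cnt n B hsub]

open DyckStep in
noncomputable def wdWord (n : ℕ) (B : Finset ℕ) (hsub : B ⊆ Finset.Icc 1 (2*n+1))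
    (hB : B.card = n + 1)
    (hst : ∀ i, i ≤ 2*n+2 → i ≤ 2 * (B.filter (· ≤ i)).card) : DyckWord where
  toList := wdList n B
  count_U_eq_count_D := by
    have h1 := count_U_add_count_D (wdList n B)
    have h2 : (wdList n B).count U = n + 1 := by
      have h3 := wdList_count_take n B hsub (2*n+2)
      rw [List.take_of_length_le (le_of_eq (wdList_length n B)), min_self] at h3
      rw [h3]
      exact cnt_all n B hB hsub (by omega)
    rw [wdList_length] at h1
    omega
  count_D_le_count_U i := by
    have h1 := count_U_add_count_D ((wdList n B).take i)
    have h2 : ((wdList n B).take i).length = min i (2*n+2) := by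
      rw [List.length_take, wdList_length]
    have h3 := wdList_count_take n B hsub i
    have h4 := hst (min i (2*n+2)) (by omega)
    omega

lemma wdWord_semilength (n : ℕ) (B : Finset ℕ) (hsub : B ⊆ Finset.Icc 1 (2*n+1))
    (hB : B.card = n + 1)
    (hst : ∀ i, i ≤ 2*n+2 → i ≤ 2 * (B.filter (· ≤ i)).card) :
    (wdWord n B hsub hB hst).semilength = n + 1 := by
  show (wdList n B).count DyckStep.U = n + 1
  have h3 := wdList_count_take n B hsub (2*n+2)
  rw [List.take_of_length_le (le_of_eq (wdList_length n B)), min_self] at h3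
  rw [h3]
  exact cnt_all n B hB hsub (by omega)

noncomputable def bset (n : ℕ) (p : DyckWord) : Finset ℕ :=
  ((Finset.range (2*n+2)).filter
    (fun t => p.toList.getD t DyckStep.D = DyckStep.U)).image (· + 1)

lemma mem_bset (n : ℕ) (p : DyckWord) (x : ℕ) :
    x ∈ bset n p ↔ 1 ≤ x ∧ x ≤ 2*n+2 ∧ p.toList.getD (x-1) DyckStep.D = DyckStep.U := by
  rw [bset, Finset.mem_image]
  constructor
  · rintro ⟨t, ht, rfl⟩
    rw [Finset.mem_filter, Finset.mem_range] at ht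
    exact ⟨by omega, by omega, by simpa using ht.2⟩
  · rintro ⟨h1, h2, h3⟩
    refine ⟨x - 1, ?_, by omega⟩
    rw [Finset.mem_filter, Finset.mem_range]
    exact ⟨by omega, h3⟩

lemma dyck_length (n : ℕ) (p : DyckWord) (hp : p.semilength = n + 1) :
    p.toList.length = 2*n+2 := by
  have := p.two_mul_semilength_eq_length
  omega

lemma wdList_bset (n : ℕ) (p : DyckWord) (hp : p.semilength = n + 1) :
    wdList n (bset n p) = p.toList := by
  have hlen := dyck_length n p hp
  apply List.ext_getElem
  · rw [wdList_length, hlen]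
  · intro t h1 h2
    rw [wdList_length] at h1
    have hgd : p.toList.getD t DyckStep.D = p.toList[t] := List.getD_eq_getElem _ _ h2
    show ((List.range (2*n+2)).map
      (fun t => if t+1 ∈ bset n p then DyckStep.U else DyckStep.D))[t]'(by simp; omega)
        = p.toList[t]
    rw [List.getElem_map, List.getElem_range]
    by_cases hmem : t + 1 ∈ bset n p
    · rw [if_pos hmem]
      obtain ⟨-, -, h3⟩ := (mem_bset n p (t+1)).mp hmem
      simp only [Nat.add_sub_cancel] at h3
      rw [hgd] at h3
      exact h3.symm
    · rw [if_neg hmem]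
      rcases (p.toList[t]).dichotomy with hU | hD
      · exfalso
        refine hmem ((mem_bset n p (t+1)).mpr ⟨by omega, by omega, ?_⟩)
        simp only [Nat.add_sub_cancel]
        rw [hgd, hU]
      · exact hD.symm

lemma bset_subset (n : ℕ) (p : DyckWord) (hp : p.semilength = n + 1) :
    bset n p ⊆ Finset.Icc 1 (2*n+1) := by
  intro x hx
  rw [mem_bset] at hx
  obtain ⟨h1, h2, h3⟩ := hx
  rw [Finset.mem_Icc]
  refine ⟨h1, ?_⟩
  by_contra hc
  push_neg at hc
  have hx2 : x = 2*n+2 := by omega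
  have hlen := dyck_length n p hp
  have hne : p.toList ≠ [] := by
    intro hcon
    rw [hcon] at hlen
    simp at hlen
  have hlast := p.getLast_eq_D hne
  rw [List.getLast_eq_getElem] at hlast
  have : p.toList.getD (x-1) DyckStep.D = p.toList[p.toList.length - 1] := by
    rw [List.getD_eq_getElem _ _ (by omega)]
    congr 1
    omega
  rw [this, hlast] at h3
  exact absurd h3 (by simp)

lemma bset_card (n : ℕ) (p : DyckWord) (hp : p.semilength = n + 1) :
    (bset n p).card = n + 1 := by
  have hlist := wdList_bset n p hp
  have h1 : (wdList n (bset n p)).count DyckStep.U = p.toList.count DyckStep.U := by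
    rw [hlist]
  rw [wdList, count_U_map_range] at h1
  have h2 : p.toList.count DyckStep.U = n + 1 := hp
  have hfc : (Finset.range (2*n+2)).filter (fun t => (p.toList).getD t DyckStep.D = DyckStep.U)
      = (Finset.range (2*n+2)).filter (fun t => t + 1 ∈ bset n p) := by
    apply Finset.filter_congr
    intro t ht
    have htr := Finset.mem_range.mp ht
    rw [mem_bset]
    simp only [Nat.add_sub_cancel]
    constructor
    · intro hg
      exact ⟨by omega, by omega, hg⟩
    · intro hg
      exact hg.2.2
  rw [bset, Finset.card_image_of_injective _ (fun a b hab => by omega), hfc, h1, h2]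

lemma bset_stair (n : ℕ) (p : DyckWord) (hp : p.semilength = n + 1) :
    ∀ i, i ≤ 2*n+2 → i ≤ 2 * ((bset n p).filter (· ≤ i)).card := by
  intro i hi
  have hlist := wdList_bset n p hp
  have h3 := wdList_count_take n (bset n p) (bset_subset n p hp) i
  rw [hlist, min_eq_left hi] at h3
  have h1 := count_U_add_count_D (p.toList.take i)
  have h2 : (p.toList.take i).length = i := by
    rw [List.length_take, dyck_length n p hp]
    omega
  have h4 := p.count_D_le_count_U i
  omega

lemma wdList_getD (n : ℕ) (B : Finset ℕ) (t : ℕ) (ht : t < 2*n+2) :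
    (wdList n B).getD t DyckStep.D = if t+1 ∈ B then DyckStep.U else DyckStep.D := by
  rw [List.getD_eq_getElem _ _ (by rw [wdList_length]; omega)]
  show ((List.range (2*n+2)).map
    (fun t => if t+1 ∈ B then DyckStep.U else DyckStep.D))[t]'(by simp; omega) = _
  rw [List.getElem_map, List.getElem_range]

lemma bset_wdWord (n : ℕ) (B : Finset ℕ) (hsub : B ⊆ Finset.Icc 1 (2*n+1))
    (hB : B.card = n + 1)
    (hst : ∀ i, i ≤ 2*n+2 → i ≤ 2 * (B.filter (· ≤ i)).card) :
    bset n (wdWord n B hsub hB hst) = B := by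
  ext x
  rw [mem_bset]
  show (1 ≤ x ∧ x ≤ 2*n+2 ∧ (wdList n B).getD (x-1) DyckStep.D = DyckStep.U) ↔ _
  constructor
  · rintro ⟨h1, h2, h3⟩
    rw [wdList_getD n B (x-1) (by omega), show x - 1 + 1 = x by omega] at h3
    by_contra hc
    rw [if_neg hc] at h3
    exact absurd h3 (by simp)
  · intro hx
    have h1 := (Finset.mem_Icc.mp (hsub hx)).1
    have h2 := (Finset.mem_Icc.mp (hsub hx)).2
    refine ⟨h1, by omega, ?_⟩
    rw [wdList_getD n B (x-1) (by omega), show x - 1 + 1 = x by omega, if_pos hx]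

noncomputable def dyckEquiv (n : ℕ) :
    {B : Finset ℕ // B ⊆ Finset.Icc 1 (2*n+1) ∧ ∃ _ : B.card = n + 1,
        ∀ i, i ≤ 2*n+2 → i ≤ 2 * (B.filter (· ≤ i)).card}
      ≃ {p : DyckWord // p.semilength = n + 1} where
  toFun x := ⟨wdWord n x.1 x.2.1 x.2.2.choose x.2.2.choose_spec,
    wdWord_semilength n x.1 x.2.1 x.2.2.choose x.2.2.choose_spec⟩
  invFun p := ⟨bset n p.1, bset_subset n p.1 p.2,
    bset_card n p.1 p.2, bset_stair n p.1 p.2⟩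
  left_inv x := by
    apply Subtype.ext
    exact bset_wdWord n x.1 x.2.1 x.2.2.choose x.2.2.choose_spec
  right_inv p := by
    apply Subtype.ext
    apply DyckWord.ext
    exact wdList_bset n p.1 p.2

/-- **Theorem.** For every `n ≥ 1`, the number of `(n+1)`-subsets of `{1,…,2n+1}` giving an
invertible submatrix of `M_{2n}` equals the Catalan number `C_{n+1}`. -/
theorem card_dsEven_bases_eq_catalan (n : ℕ) (hn : 1 ≤ n) :
    {B : Finset ℕ | B ⊆ Finset.Icc 1 (2 * n + 1) ∧
        ∃ hB : B.card = n + 1, dsDetEven n B hB ≠ 0}.ncard = catalan (n + 1) := by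
  have hset : {B : Finset ℕ | B ⊆ Finset.Icc 1 (2 * n + 1) ∧
        ∃ hB : B.card = n + 1, dsDetEven n B hB ≠ 0}
      = {B : Finset ℕ | B ⊆ Finset.Icc 1 (2*n+1) ∧ ∃ _ : B.card = n + 1,
          ∀ i, i ≤ 2*n+2 → i ≤ 2 * (B.filter (· ≤ i)).card} := by
    ext B
    simp only [Set.mem_setOf_eq]
    constructor
    · rintro ⟨hsub, hB, hne⟩
      exact ⟨hsub, hB, (stair_iff n B hB hsub).mp ((dsDetEven_ne_zero_iff n B hB hsub).mp hne)⟩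
    · rintro ⟨hsub, hB, hst⟩
      exact ⟨hsub, hB, (dsDetEven_ne_zero_iff n B hB hsub).mpr ((stair_iff n B hB hsub).mpr hst)⟩
  rw [hset]
  rw [← Nat.card_coe_set_eq]
  have : Nat.card {B : Finset ℕ | B ⊆ Finset.Icc 1 (2*n+1) ∧ ∃ _ : B.card = n + 1,
      ∀ i, i ≤ 2*n+2 → i ≤ 2 * (B.filter (· ≤ i)).card}
      = Nat.card {p : DyckWord // p.semilength = n + 1} := Nat.card_congr (dyckEquiv n)
  rw [this, Nat.card_eq_fintype_card, DyckWord.card_dyckWord_semilength_eq_catalan]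
end

section
/- Let n ≥ 1 and let B be an (n+1)-element subset of {1, 2, ..., 2n+1}. If the (n+1)×(n+1) submatrix of M_{2n} on the columns labeled by B has nonzero determinant, then 1 ∈ B. (That is, the element 1 is a coloop of the Dehn–Sommerville matroid DS_{2n}: it lies in every basis.) -/
open Finset

/-- Alternating-sign orthogonality: `∑ (-1)^k C(N,k) C(k,m) = 0` for `m < N`. -/
lemma ds_key (N m : ℕ) (hm : m < N) :
    ∑ k ∈ Finset.range (N + 1), (-1 : ℤ) ^ k * (N.choose k) * (k.choose m) = 0 := by
  have h1 : ∑ k ∈ Finset.range (N + 1), (-1 : ℤ) ^ k * (N.choose k) * (k.choose m)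
      = ∑ k ∈ Finset.Ico m (N + 1), (-1 : ℤ) ^ k * (N.choose k) * (k.choose m) := by
    rw [Finset.range_eq_Ico, ← Finset.sum_Ico_consecutive _ (Nat.zero_le m) (by omega)]
    have : ∑ k ∈ Finset.Ico 0 m, (-1 : ℤ) ^ k * (N.choose k) * (k.choose m) = 0 := by
      apply Finset.sum_eq_zero
      intro k hk
      simp only [Finset.mem_Ico] at hk
      rw [Nat.choose_eq_zero_of_lt hk.2]
      simp
    rw [this, zero_add]
  rw [h1, Finset.sum_Ico_eq_sum_range]
  have h2 : ∀ j ∈ Finset.range (N + 1 - m),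
      (-1 : ℤ) ^ (m + j) * (N.choose (m + j)) * ((m + j).choose m)
        = (-1 : ℤ) ^ m * (N.choose m) * ((-1 : ℤ) ^ j * ((N - m).choose j)) := by
    intro j hj
    simp only [Finset.mem_range] at hj
    have hc : N.choose (m + j) * ((m + j).choose m) = N.choose m * ((N - m).choose j) := by
      have := Nat.choose_mul (n := N) (show m ≤ m + j by omega)
      simpa using this
    have hc' : ((N.choose (m + j) : ℤ) * ((m + j).choose m : ℤ))
        = (N.choose m : ℤ) * ((N - m).choose j : ℤ) := by exact_mod_cast hc
    rw [pow_add]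
    linear_combination ((-1 : ℤ) ^ m * (-1 : ℤ) ^ j) * hc'
  rw [Finset.sum_congr rfl h2, ← Finset.mul_sum]
  have h3 : N + 1 - m = (N - m) + 1 := by omega
  rw [h3, Int.alternating_sum_range_choose_of_ne (by omega), mul_zero]

/-- The key row relation: for `1 ≤ m ≤ 2n`, the alternating combination of the rows of the
Dehn–Sommerville matrix at column exponent `m` vanishes. -/
lemma ds_rowsum (n m : ℕ) (hm1 : 1 ≤ m) (hm2 : m ≤ 2 * n) :
    ∑ i ∈ Finset.range (n + 1), (-1 : ℤ) ^ (i + 1) * ((2 * n + 1).choose i) *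
      (((2 * n + 1 - i).choose m : ℤ) - ((i : ℕ).choose m : ℤ)) = 0 := by
  have key := ds_key (2 * n + 1) m (by omega)
  -- Split the sum over range (2n+2) into range (n+1) and the reflected half.
  have hsplit : ∑ k ∈ Finset.range (2 * n + 1 + 1), (-1 : ℤ) ^ k * ((2 * n + 1).choose k) * (k.choose m)
      = (∑ k ∈ Finset.range (n + 1), (-1 : ℤ) ^ k * ((2 * n + 1).choose k) * (k.choose m))
        + ∑ j ∈ Finset.range (n + 1),
            (-1 : ℤ) ^ (n + 1 + j) * ((2 * n + 1).choose (n + 1 + j)) * ((n + 1 + j).choose m) := by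
    rw [Finset.range_eq_Ico, ← Finset.sum_Ico_consecutive _ (show 0 ≤ n + 1 by omega) (show n + 1 ≤ 2 * n + 1 + 1 by omega)]
    congr 1
    · rw [Finset.range_eq_Ico]
    rw [Finset.sum_Ico_eq_sum_range]
    rw [show 2 * n + 1 + 1 - (n + 1) = n + 1 by omega]
  -- Rewrite the second (reflected) half.
  have hrefl : ∑ j ∈ Finset.range (n + 1),
      (-1 : ℤ) ^ (n + 1 + j) * ((2 * n + 1).choose (n + 1 + j)) * ((n + 1 + j).choose m)
      = ∑ j ∈ Finset.range (n + 1),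
          (-1 : ℤ) ^ (j + 1) * ((2 * n + 1).choose j) * ((2 * n + 1 - j).choose m) := by
    rw [← Finset.sum_range_reflect (fun j => (-1 : ℤ) ^ (n + 1 + j) * ((2 * n + 1).choose (n + 1 + j)) * ((n + 1 + j).choose m)) (n + 1)]
    apply Finset.sum_congr rfl
    intro j hj
    simp only [Finset.mem_range] at hj
    have hj' : j ≤ n := by omega
    have e1 : n + 1 + (n + 1 - 1 - j) = 2 * n + 1 - j := by omega
    rw [e1]
    have hsym : (2 * n + 1).choose (2 * n + 1 - j) = (2 * n + 1).choose j :=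
      Nat.choose_symm (by omega)
    rw [hsym]
    have hsign : (-1 : ℤ) ^ (2 * n + 1 - j) = (-1 : ℤ) ^ (j + 1) := by
      have h : 2 * n + 1 - j + (j + 1) = 2 * (n + 1) := by omega
      have h2 : (-1 : ℤ) ^ (2 * n + 1 - j + (j + 1)) = 1 := by
        rw [h, pow_mul]; norm_num
      rw [pow_add] at h2
      have hj2 : (-1 : ℤ) ^ (j + 1) * (-1 : ℤ) ^ (j + 1) = 1 := by
        rw [← pow_add]
        have : j + 1 + (j + 1) = 2 * (j + 1) := by omega
        rw [this, pow_mul]; norm_num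
      calc (-1 : ℤ) ^ (2 * n + 1 - j)
          = (-1 : ℤ) ^ (2 * n + 1 - j) * ((-1 : ℤ) ^ (j + 1) * (-1 : ℤ) ^ (j + 1)) := by
            rw [hj2, mul_one]
        _ = ((-1 : ℤ) ^ (2 * n + 1 - j) * (-1 : ℤ) ^ (j + 1)) * (-1 : ℤ) ^ (j + 1) := by ring
        _ = (-1 : ℤ) ^ (j + 1) := by rw [h2, one_mul]
    rw [hsign]
  rw [hrefl] at hsplit
  rw [hsplit] at key
  -- Now assemble.
  have expand : ∑ i ∈ Finset.range (n + 1), (-1 : ℤ) ^ (i + 1) * ((2 * n + 1).choose i) *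
      (((2 * n + 1 - i).choose m : ℤ) - ((i : ℕ).choose m : ℤ))
      = (∑ j ∈ Finset.range (n + 1),
          (-1 : ℤ) ^ (j + 1) * ((2 * n + 1).choose j) * ((2 * n + 1 - j).choose m))
        + ∑ k ∈ Finset.range (n + 1), (-1 : ℤ) ^ k * ((2 * n + 1).choose k) * (k.choose m) := by
    rw [← Finset.sum_add_distrib]
    apply Finset.sum_congr rfl
    intro i _
    have : (-1 : ℤ) ^ (i + 1) = -(-1 : ℤ) ^ i := by rw [pow_succ]; ring
    rw [this]; ring
  rw [expand]
  linarith [key]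

/-- **Lemma (1 is a coloop of `DS_{2n}`).**
Let `n ≥ 1` and let `B` be an `(n+1)`-element subset of `{1,…,2n+1}`.  If the submatrix
of `M_{2n}` on the columns labeled by `B` has nonzero determinant, then `1 ∈ B`. -/
theorem one_mem_of_dsEven_basis (n : ℕ) (hn : 1 ≤ n) (B : Finset ℕ)
    (hB : B.card = n + 1) (hsub : B ⊆ Finset.Icc 1 (2 * n + 1))
    (hdet : dsDetEven n B hB ≠ 0) : 1 ∈ B := by
  by_contra h1
  apply hdet
  unfold dsDetEven
  set A : Matrix (Fin (n + 1)) (Fin (n + 1)) ℤ := fun i k =>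
    (Nat.choose (2 * n + 1 - (i : ℕ)) (2 * n + 2 - (B.orderIsoOfFin hB k : ℕ)) : ℤ)
      - (Nat.choose (i : ℕ) (2 * n + 2 - (B.orderIsoOfFin hB k : ℕ)) : ℤ) with hA
  show A.det = 0
  rw [← Matrix.exists_vecMul_eq_zero_iff]
  refine ⟨fun i => (-1 : ℤ) ^ ((i : ℕ) + 1) * ((2 * n + 1).choose (i : ℕ)), ?_, ?_⟩
  · intro hv
    have := congrFun hv (0 : Fin (n + 1))
    simp at this
  · funext k
    show (∑ i : Fin (n + 1), ((-1 : ℤ) ^ ((i : ℕ) + 1) * ((2 * n + 1).choose (i : ℕ))) * A i k) = 0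
    set b : ℕ := (B.orderIsoOfFin hB k : ℕ) with hb
    have hbB : b ∈ B := (B.orderIsoOfFin hB k).2
    have hbI := hsub hbB
    simp only [Finset.mem_Icc] at hbI
    have hb2 : 2 ≤ b := by
      rcases Nat.lt_or_ge b 2 with h | h
      · interval_cases b
        · omega
        · exact absurd hbB h1
      · exact h
    set m : ℕ := 2 * n + 2 - b with hm
    have hm1 : 1 ≤ m := by omega
    have hm2 : m ≤ 2 * n := by omega
    have hrs := ds_rowsum n m hm1 hm2
    have hcal : (∑ i : Fin (n + 1), ((-1 : ℤ) ^ ((i : ℕ) + 1) * ((2 * n + 1).choose (i : ℕ))) * A i k)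
        = ∑ i ∈ Finset.range (n + 1), (-1 : ℤ) ^ (i + 1) * ((2 * n + 1).choose i) *
            (((2 * n + 1 - i).choose m : ℤ) - ((i : ℕ).choose m : ℤ)) := by
      rw [← Fin.sum_univ_eq_sum_range (fun i => (-1 : ℤ) ^ (i + 1) * ((2 * n + 1).choose i) *
            (((2 * n + 1 - i).choose m : ℤ) - ((i : ℕ).choose m : ℤ))) (n + 1)]
    rw [hcal]; exact hrs
end
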